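/- arXiv:1204.6148 — 5 statements merged into one kernel-verified Lean document; each statement's English description precedes it below -/
import Mathlib

section
/- Let (S_n) be a random walk on ℤ started at x ≥ 0 whose increments are i.i.d., and suppose limsup_n S_n = +∞ almost surely. Let V^-(x) = Σ_{k≥0} P(H_k^- ≤ x) be the weak descending ladder height renewal function. Then V^- is harmonic for the walk killed upon entering (−∞, 0): for every x ≥ 0 and N ∈ ℕ, V^-(x) = E_x[ V^-(S_N) 1{S_1 ≥ 0, ..., S_N ≥ 0} ]. -/
open MeasureTheory ProbabilityTheory Filter
open scoped ENNReal

/-- The random walk `S n = X 0 + ⋯ + X (n-1)` started at `0`. -/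
noncomputable def rwS {Ω : Type*} (X : ℕ → Ω → ℝ) (n : ℕ) (ω : Ω) : ℝ :=
  ∑ i ∈ Finset.range n, X i ω

/-- The weak descending renewal function `V⁻(x) = Σ_k P(H_k⁻ ≤ x)`, written as the sum over
`n` of the probability that `n` is a weak descending ladder epoch with `-S n ≤ x`. -/
noncomputable def Vminus {Ω : Type*} [MeasurableSpace Ω] (P : Measure Ω)
    (X : ℕ → Ω → ℝ) (x : ℝ) : ℝ≥0∞ :=
  ∑' n : ℕ, P {ω | (∀ j, j < n → rwS X n ω ≤ rwS X j ω) ∧ -rwS X n ω ≤ x}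

namespace Stmt7Aux

/-- extend a finite tuple by zeros -/
def ex {n : ℕ} (v : Fin n → ℝ) : ℕ → ℝ := fun i => if h : i < n then v ⟨i, h⟩ else 0

/-- partial sums -/
def Wf (v : ℕ → ℝ) (k : ℕ) : ℝ := ∑ i ∈ Finset.range k, v i

lemma Wf_congr {v w : ℕ → ℝ} {k : ℕ} (h : ∀ i < k, v i = w i) : Wf v k = Wf w k :=
  Finset.sum_congr rfl fun i hi => h i (Finset.mem_range.mp hi)

lemma ex_lt {n : ℕ} (v : Fin n → ℝ) {i : ℕ} (h : i < n) : ex v i = v ⟨i, h⟩ := dif_pos h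

lemma measurable_ex_apply {n : ℕ} (i : ℕ) : Measurable fun v : Fin n → ℝ => ex v i := by
  unfold ex
  by_cases h : i < n
  · simp only [dif_pos h]; exact measurable_pi_apply _
  · simp only [dif_neg h]; exact measurable_const

lemma measurable_Wf_ex {n : ℕ} (k : ℕ) : Measurable fun v : Fin n → ℝ => Wf (ex v) k := by
  unfold Wf
  exact Finset.measurable_sum _ fun i _ => measurable_ex_apply i

/-- the ladder event set on `Fin n → ℝ` -/
def lset (n : ℕ) (y : ℝ) : Set (Fin n → ℝ) :=
  {v | (∀ j, j < n → Wf (ex v) n ≤ Wf (ex v) j) ∧ -Wf (ex v) n ≤ y}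

lemma measurableSet_lset (n : ℕ) (y : ℝ) : MeasurableSet (lset n y) := by
  have : lset n y =
      (⋂ j ∈ Finset.range n, {v : Fin n → ℝ | Wf (ex v) n ≤ Wf (ex v) j}) ∩
        {v : Fin n → ℝ | -Wf (ex v) n ≤ y} := by
    ext v
    simp only [lset, Set.mem_inter_iff, Set.mem_iInter, Finset.mem_range, Set.mem_setOf_eq]
  rw [this]
  refine MeasurableSet.inter ?_ ?_
  · exact MeasurableSet.biInter (Finset.range n).countable_toSet fun j _ =>
      measurableSet_le (measurable_Wf_ex n) (measurable_Wf_ex j)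
  · exact measurableSet_le ((measurable_Wf_ex n).neg) measurable_const

lemma lset_mono (n : ℕ) {y y' : ℝ} (h : y ≤ y') : lset n y ⊆ lset n y' :=
  fun v hv => ⟨hv.1, hv.2.trans h⟩

variable (μ : Measure ℝ)

noncomputable def pm (n : ℕ) : Measure (Fin n → ℝ) := Measure.pi fun _ => μ

instance [IsProbabilityMeasure μ] (n : ℕ) : IsProbabilityMeasure (pm μ n) := by
  unfold pm; infer_instance

noncomputable def g (n : ℕ) (y : ℝ) : ℝ≥0∞ := pm μ n (lset n y)

noncomputable def Vmu (y : ℝ) : ℝ≥0∞ := ∑' n, g μ n y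

lemma g_mono (n : ℕ) : Monotone (g μ n) := fun _ _ h => measure_mono (lset_mono n h)

lemma Vmu_mono : Monotone (Vmu μ) := fun _ _ h => ENNReal.tsum_le_tsum fun n => g_mono μ n h

lemma measurable_g (n : ℕ) : Measurable (g μ n) := (g_mono μ n).measurable

lemma measurable_Vmu : Measurable (Vmu μ) := (Vmu_mono μ).measurable


lemma Wf_zero (v : ℕ → ℝ) : Wf v 0 = 0 := Finset.sum_range_zero _

/-- sums of the reversed tuple -/
lemma Wf_rev {m : ℕ} (v : Fin m → ℝ) {k : ℕ} (hk : k ≤ m) :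
    Wf (ex fun i : Fin m => v i.rev) k = Wf (ex v) m - Wf (ex v) (m - k) := by
  have h1 : Wf (ex v) m - Wf (ex v) (m - k) = ∑ i ∈ Finset.Ico (m - k) m, ex v i := by
    rw [Finset.sum_Ico_eq_sub _ (Nat.sub_le m k)]; ring_nf; rfl
  rw [h1]
  unfold Wf
  refine Finset.sum_nbij' (fun i => m - 1 - i) (fun j => m - 1 - j) ?_ ?_ ?_ ?_ ?_
  · intro i hi; simp only [Finset.mem_range] at hi; simp only [Finset.mem_Ico]; omega
  · intro j hj; simp only [Finset.mem_Ico] at hj; simp only [Finset.mem_range]; omega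
  · intro i hi; simp only [Finset.mem_range] at hi
    show m - 1 - (m - 1 - i) = i; omega
  · intro j hj; simp only [Finset.mem_Ico] at hj
    show m - 1 - (m - 1 - j) = j; omega
  · intro i hi
    simp only [Finset.mem_range] at hi
    have him : i < m := lt_of_lt_of_le hi hk
    have h2 : m - 1 - i < m := by omega
    simp only [ex, dif_pos him, dif_pos h2]
    congr 1
    ext
    simp [Fin.rev]
    omega

def fset (m : ℕ) (y : ℝ) : Set (Fin m → ℝ) :=
  {v | (∀ j, 1 ≤ j → j < m → Wf (ex v) m ≤ Wf (ex v) j) ∧ -Wf (ex v) m ≤ y}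

def gset (m : ℕ) : Set (Fin m → ℝ) :=
  {v | (∀ j, 1 ≤ j → j < m → Wf (ex v) m ≤ Wf (ex v) j) ∧ 0 < Wf (ex v) m}

def dset (m : ℕ) : Set (Fin m → ℝ) :=
  {v | (∀ i, 1 ≤ i → i < m → Wf (ex v) i ≤ 0) ∧ 0 < Wf (ex v) m}

lemma measurableSet_forall_part (m : ℕ) :
    MeasurableSet {v : Fin m → ℝ | ∀ j, 1 ≤ j → j < m → Wf (ex v) m ≤ Wf (ex v) j} := by
  have : {v : Fin m → ℝ | ∀ j, 1 ≤ j → j < m → Wf (ex v) m ≤ Wf (ex v) j} =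
      ⋂ j ∈ Finset.Ico 1 m, {v : Fin m → ℝ | Wf (ex v) m ≤ Wf (ex v) j} := by
    ext v
    simp only [Set.mem_setOf_eq, Set.mem_iInter, Finset.mem_Ico]
    exact ⟨fun h j hj => h j hj.1 hj.2, fun h j h1 h2 => h j ⟨h1, h2⟩⟩
  rw [this]
  exact MeasurableSet.biInter (Finset.Ico 1 m).countable_toSet fun j _ =>
    measurableSet_le (measurable_Wf_ex m) (measurable_Wf_ex j)

lemma measurableSet_fset (m : ℕ) (y : ℝ) : MeasurableSet (fset m y) :=
  (measurableSet_forall_part m).inter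
    (measurableSet_le (measurable_Wf_ex m).neg measurable_const)

lemma measurableSet_gset (m : ℕ) : MeasurableSet (gset m) :=
  (measurableSet_forall_part m).inter
    (measurableSet_lt measurable_const (measurable_Wf_ex m))

lemma measurableSet_dset (m : ℕ) : MeasurableSet (dset m) := by
  have : dset m = (⋂ j ∈ Finset.Ico 1 m, {v : Fin m → ℝ | Wf (ex v) j ≤ 0}) ∩
      {v : Fin m → ℝ | 0 < Wf (ex v) m} := by
    ext v
    simp only [dset, Set.mem_inter_iff, Set.mem_iInter, Finset.mem_Ico, Set.mem_setOf_eq]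
    exact ⟨fun h => ⟨fun j hj => h.1 j hj.1 hj.2, h.2⟩, fun h => ⟨fun j h1 h2 => h.1 j ⟨h1, h2⟩, h.2⟩⟩
  rw [this]
  exact (MeasurableSet.biInter (Finset.Ico 1 m).countable_toSet fun j _ =>
    measurableSet_le (measurable_Wf_ex j) measurable_const).inter
    (measurableSet_lt measurable_const (measurable_Wf_ex m))

variable {μ} in
lemma measurePreserving_rev [IsProbabilityMeasure μ] (m : ℕ) :
    MeasurePreserving (fun (u : Fin m → ℝ) (i : Fin m) => u i.rev) (pm μ m) (pm μ m) := by
  have hrm : Measurable (fun (u : Fin m → ℝ) (i : Fin m) => u i.rev) :=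
    measurable_pi_lambda _ fun i => measurable_pi_apply _
  constructor
  · exact hrm
  · show _ = Measure.pi fun _ : Fin m => μ
    refine (Measure.pi_eq (μ := fun _ : Fin m => μ) fun s hs => ?_).symm
    rw [Measure.map_apply hrm (MeasurableSet.univ_pi hs)]
    have hpre : (fun (u : Fin m → ℝ) (i : Fin m) => u i.rev) ⁻¹' (Set.univ.pi s)
        = Set.univ.pi (fun i => s i.rev) := by
      ext u
      simp only [Set.mem_preimage, Set.mem_pi, Set.mem_univ, forall_true_left]
      constructor
      · intro h i
        have := h i.rev
        rwa [Fin.rev_rev] at this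
      · intro h i
        have := h i.rev
        rwa [Fin.rev_rev] at this
    rw [hpre]
    show (Measure.pi fun _ => μ) _ = _
    rw [Measure.pi_pi]
    exact Equiv.prod_comp (Equiv.ofBijective Fin.rev Fin.rev_injective.bijective_of_finite)
      fun i => μ (s i)

variable {μ} in
lemma pm_gset_eq_dset [IsProbabilityMeasure μ] (m : ℕ) :
    pm μ m (gset m) = pm μ m (dset m) := by
  rw [← (measurePreserving_rev (μ := μ) m).measure_preimage (measurableSet_gset m).nullMeasurableSet]
  congr 1
  ext u
  simp only [Set.mem_preimage, gset, dset, Set.mem_setOf_eq]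
  constructor
  · rintro ⟨h1, h2⟩
    rw [Wf_rev u le_rfl, Nat.sub_self, Wf_zero, sub_zero] at h2
    refine ⟨fun i hi1 hi2 => ?_, h2⟩
    have := h1 (m - i) (by omega) (by omega)
    rw [Wf_rev u le_rfl, Wf_rev u (by omega : m - i ≤ m), Nat.sub_self, Wf_zero, sub_zero,
      (by omega : m - (m - i) = i)] at this
    linarith
  · rintro ⟨h1, h2⟩
    rw [Wf_rev u le_rfl, Nat.sub_self, Wf_zero, sub_zero]
    refine ⟨fun j hj1 hj2 => ?_, h2⟩
    rw [Wf_rev u (by omega : j ≤ m)]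
    have := h1 (m - j) (by omega) (by omega)
    linarith

variable {μ} in
lemma pm_fset_split [IsProbabilityMeasure μ] {m : ℕ} (hm : 1 ≤ m) {y : ℝ} (hy : 0 ≤ y) :
    pm μ m (fset m y) = g μ m y + pm μ m (gset m) := by
  have ht : MeasurableSet {v : Fin m → ℝ | Wf (ex v) m ≤ 0} :=
    measurableSet_le (measurable_Wf_ex m) measurable_const
  have hsplit := measure_inter_add_diff (μ := pm μ m) (fset m y) ht
  have h1 : fset m y ∩ {v : Fin m → ℝ | Wf (ex v) m ≤ 0} = lset m y := by
    ext v
    simp only [fset, lset, Set.mem_inter_iff, Set.mem_setOf_eq]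
    constructor
    · rintro ⟨⟨ha, hb⟩, hc⟩
      refine ⟨fun j hj => ?_, hb⟩
      rcases Nat.eq_zero_or_pos j with rfl | hj1
      · rw [Wf_zero]; exact hc
      · exact ha j hj1 hj
    · rintro ⟨ha, hb⟩
      have hc := ha 0 hm
      rw [Wf_zero] at hc
      exact ⟨⟨fun j hj1 hj2 => ha j hj2, hb⟩, hc⟩
  have h2 : fset m y \ {v : Fin m → ℝ | Wf (ex v) m ≤ 0} = gset m := by
    ext v
    simp only [fset, gset, Set.mem_diff, Set.mem_setOf_eq, not_le]
    constructor
    · rintro ⟨⟨ha, _⟩, hc⟩; exact ⟨ha, hc⟩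
    · rintro ⟨ha, hb⟩; exact ⟨⟨ha, by linarith⟩, hb⟩
  rw [h1, h2] at hsplit
  rw [← hsplit]
  rfl


lemma Wf_one {n : ℕ} (v : Fin (n + 1) → ℝ) : Wf (ex v) 1 = v 0 := by
  rw [Wf, Finset.sum_range_one, ex_lt v (Nat.succ_pos n)]
  congr

lemma Wf_tail {n : ℕ} (v : Fin (n + 1) → ℝ) {k : ℕ} (hk : k ≤ n) :
    Wf (ex fun j : Fin n => v j.succ) k = Wf (ex v) (k + 1) - v 0 := by
  have h1 : Wf (ex v) (k + 1) = (∑ i ∈ Finset.range k, ex v (i + 1)) + ex v 0 :=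
    Finset.sum_range_succ' _ _
  have h2 : Wf (ex fun j : Fin n => v j.succ) k = ∑ i ∈ Finset.range k, ex v (i + 1) := by
    refine Finset.sum_congr rfl fun i hi => ?_
    have hin : i < n := lt_of_lt_of_le (Finset.mem_range.mp hi) hk
    rw [ex_lt _ hin, ex_lt v (Nat.succ_lt_succ hin)]
    rfl
  rw [h1, h2, ex_lt v (Nat.succ_pos n)]
  have : (⟨0, Nat.succ_pos n⟩ : Fin (n + 1)) = 0 := rfl
  rw [this]
  ring

lemma fset_succ_iff {n : ℕ} (y : ℝ) (v : Fin (n + 1) → ℝ) :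
    v ∈ fset (n + 1) y ↔
      (0 ≤ v 0 + y ∧ (fun j : Fin n => v j.succ) ∈ lset n (v 0 + y)) := by
  simp only [fset, lset, Set.mem_setOf_eq]
  have htail : ∀ k ≤ n, Wf (ex fun j : Fin n => v j.succ) k = Wf (ex v) (k + 1) - v 0 :=
    fun k hk => Wf_tail v hk
  constructor
  · rintro ⟨ha, hb⟩
    have h0 : 0 ≤ v 0 + y := by
      rcases Nat.eq_zero_or_pos n with rfl | hn
      · have := hb
        rw [Wf_one] at this
        linarith
      · have := ha 1 le_rfl (by omega)
        rw [Wf_one] at this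
        linarith
    refine ⟨h0, fun j hj => ?_, ?_⟩
    · rw [htail n le_rfl, htail j (le_of_lt hj)]
      have := ha (j + 1) (Nat.succ_le_succ (Nat.zero_le j)) (Nat.succ_lt_succ hj)
      linarith
    · rw [htail n le_rfl]
      linarith
  · rintro ⟨h0, ha, hb⟩
    rw [htail n le_rfl] at hb
    constructor
    · intro j hj1 hj2
      obtain ⟨j', rfl⟩ : ∃ j', j = j' + 1 := ⟨j - 1, by omega⟩
      have := ha j' (by omega)
      rw [htail n le_rfl, htail j' (by omega)] at this
      linarith
    · linarith

lemma measurableSet_lsection (n : ℕ) (y : ℝ) :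
    MeasurableSet {p : ℝ × (Fin n → ℝ) | 0 ≤ p.1 + y ∧ p.2 ∈ lset n (p.1 + y)} := by
  have h1 : MeasurableSet {p : ℝ × (Fin n → ℝ) | 0 ≤ p.1 + y} :=
    measurableSet_le measurable_const ((measurable_fst).add_const y)
  have h2 : MeasurableSet {p : ℝ × (Fin n → ℝ) | p.2 ∈ lset n (p.1 + y)} := by
    have : {p : ℝ × (Fin n → ℝ) | p.2 ∈ lset n (p.1 + y)} =
        (⋂ j ∈ Finset.range n,
            {p : ℝ × (Fin n → ℝ) | Wf (ex p.2) n ≤ Wf (ex p.2) j}) ∩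
          {p : ℝ × (Fin n → ℝ) | -Wf (ex p.2) n - p.1 ≤ y} := by
      ext p
      simp only [lset, Set.mem_setOf_eq, Set.mem_inter_iff, Set.mem_iInter, Finset.mem_range]
      constructor
      · rintro ⟨ha, hb⟩; exact ⟨ha, by linarith⟩
      · rintro ⟨ha, hb⟩; exact ⟨ha, by linarith⟩
    rw [this]
    refine MeasurableSet.inter ?_ ?_
    · exact MeasurableSet.biInter (Finset.range n).countable_toSet fun j _ =>
        measurableSet_le ((measurable_Wf_ex n).comp measurable_snd)
          ((measurable_Wf_ex j).comp measurable_snd)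
    · exact measurableSet_le
        ((((measurable_Wf_ex n).comp measurable_snd).neg).sub measurable_fst) measurable_const
  exact h1.inter h2

variable {μ} in
lemma onestep_term [IsProbabilityMeasure μ] (n : ℕ) {y : ℝ} (hy : 0 ≤ y) :
    ∫⁻ z in {z : ℝ | 0 ≤ z + y}, g μ n (z + y) ∂μ = pm μ (n + 1) (fset (n + 1) y) := by
  have hmp := measurePreserving_piFinSuccAbove (fun _ : Fin (n + 1) => μ) 0
  set T : Set (ℝ × (Fin n → ℝ)) :=
    {p | 0 ≤ p.1 + y ∧ p.2 ∈ lset n (p.1 + y)} with hTdef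
  have hT : MeasurableSet T := measurableSet_lsection n y
  have hpre : (MeasurableEquiv.piFinSuccAbove (fun _ : Fin (n + 1) => ℝ) 0) ⁻¹' T
      = fset (n + 1) y := by
    ext v
    rw [Set.mem_preimage]
    have happ : (MeasurableEquiv.piFinSuccAbove (fun _ : Fin (n + 1) => ℝ) 0) v
        = (v 0, fun j : Fin n => v ((0 : Fin (n + 1)).succAbove j)) := rfl
    rw [happ, fset_succ_iff]
    have h2 : (fun j : Fin n => v ((0 : Fin (n + 1)).succAbove j)) = fun j : Fin n => v j.succ := by
      simp only [Fin.succAbove_zero]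
    rw [h2]
    rfl
  have hmain : pm μ (n + 1) (fset (n + 1) y) = (μ.prod (pm μ n)) T := by
    rw [← hpre]
    exact hmp.measure_preimage hT.nullMeasurableSet
  rw [hmain, Measure.prod_apply hT]
  have hsec : ∀ z : ℝ, (pm μ n) (Prod.mk z ⁻¹' T)
      = Set.indicator {z : ℝ | 0 ≤ z + y} (fun z => g μ n (z + y)) z := by
    intro z
    by_cases h : 0 ≤ z + y
    · have heq : Prod.mk z ⁻¹' T = lset n (z + y) := by
        ext w; simp only [hTdef, Set.mem_preimage, Set.mem_setOf_eq, h, true_and]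
      rw [heq, Set.indicator_of_mem (show z ∈ {z : ℝ | 0 ≤ z + y} from h)
        (fun z => g μ n (z + y))]
      rfl
    · have heq : Prod.mk z ⁻¹' T = ∅ := by
        ext w; simp only [hTdef, Set.mem_preimage, Set.mem_setOf_eq, h, false_and,
          Set.mem_empty_iff_false]
      rw [heq, Set.indicator_of_notMem (show z ∉ {z : ℝ | 0 ≤ z + y} from h)
        (fun z => g μ n (z + y)), measure_empty]
  rw [lintegral_congr hsec]
  exact (lintegral_indicator
    (measurableSet_le measurable_const (measurable_id.add_const y)) _).symm

variable {μ} in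
lemma g_zero [IsProbabilityMeasure μ] {y : ℝ} (hy : 0 ≤ y) : g μ 0 y = 1 := by
  have : lset 0 y = Set.univ := by
    ext v
    simp only [lset, Set.mem_setOf_eq, Set.mem_univ, iff_true]
    exact ⟨fun j hj => absurd hj (Nat.not_lt_zero j), by rw [Wf_zero]; linarith⟩
  rw [g, this]
  exact measure_univ

variable {μ} in
lemma onestep [IsProbabilityMeasure μ]
    (hone : ∑' m : ℕ, pm μ (m + 1) (dset (m + 1)) = 1) {y : ℝ} (hy : 0 ≤ y) :
    Vmu μ y = ∫⁻ z in {z : ℝ | 0 ≤ z + y}, Vmu μ (z + y) ∂μ := by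
  have hswap : ∫⁻ z in {z : ℝ | 0 ≤ z + y}, Vmu μ (z + y) ∂μ
      = ∑' n, ∫⁻ z in {z : ℝ | 0 ≤ z + y}, g μ n (z + y) ∂μ := by
    have : (fun z => Vmu μ (z + y)) = fun z => ∑' n, g μ n (z + y) := rfl
    rw [this]
    exact lintegral_tsum fun n =>
      ((measurable_g μ n).comp (measurable_id.add_const y)).aemeasurable
  have hsplit : ∀ n : ℕ, pm μ (n + 1) (fset (n + 1) y)
      = g μ (n + 1) y + pm μ (n + 1) (dset (n + 1)) := fun n => by
    rw [pm_fset_split (Nat.succ_le_succ (Nat.zero_le n)) hy, pm_gset_eq_dset]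
  rw [hswap, tsum_congr fun n => onestep_term n hy, tsum_congr hsplit,
    ENNReal.tsum_add, hone]
  show Vmu μ y = (∑' n, g μ (n + 1) y) + 1
  rw [Vmu, tsum_eq_zero_add' ENNReal.summable, g_zero hy, add_comm]


section OmegaSide

variable {Ω : Type*} [MeasurableSpace Ω] {P : Measure Ω} [IsProbabilityMeasure P]
    {X : ℕ → Ω → ℝ}

/-- tuple of the first `n` steps -/
def tup (X : ℕ → Ω → ℝ) (n : ℕ) : Ω → (Fin n → ℝ) := fun ω i => X i ω

lemma measurable_tup (hmeas : ∀ i, Measurable (X i)) (n : ℕ) : Measurable (tup X n) :=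
  measurable_pi_lambda _ fun i => hmeas i

lemma Wf_tup (n k : ℕ) (hk : k ≤ n) (ω : Ω) : Wf (ex (tup X n ω)) k = rwS X k ω := by
  refine Finset.sum_congr rfl fun i hi => ?_
  have hin : i < n := lt_of_lt_of_le (Finset.mem_range.mp hi) hk
  rw [ex_lt _ hin]
  rfl

lemma map_tup (hmeas : ∀ i, Measurable (X i))
    (hindep : iIndepFun X P)
    (hident : ∀ i, IdentDistrib (X i) (X 0) P P) (n : ℕ) :
    P.map (tup X n) = pm (P.map (X 0)) n := by
  haveI : IsProbabilityMeasure (P.map (X 0)) := Measure.isProbabilityMeasure_map (hmeas 0).aemeasurable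
  show _ = Measure.pi fun _ : Fin n => P.map (X 0)
  refine (Measure.pi_eq (μ := fun _ : Fin n => P.map (X 0)) fun s hs => ?_).symm
  rw [Measure.map_apply (measurable_tup hmeas n) (MeasurableSet.univ_pi hs)]
  set s' : ℕ → Set ℝ := fun i => if h : i < n then s ⟨i, h⟩ else Set.univ with hs'def
  have hs' : ∀ i, MeasurableSet (s' i) := by
    intro i
    by_cases h : i < n
    · simpa [hs'def, dif_pos h] using hs ⟨i, h⟩
    · simp [hs'def, dif_neg h]
  have hpre : tup X n ⁻¹' Set.univ.pi s = ⋂ i ∈ Finset.range n, X i ⁻¹' s' i := by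
    ext ω
    simp only [Set.mem_preimage, Set.mem_pi, Set.mem_univ, forall_true_left, Set.mem_iInter,
      Finset.mem_range]
    constructor
    · intro h i hi
      have := h ⟨i, hi⟩
      simpa [hs'def, dif_pos hi, tup] using this
    · intro h i
      have := h i.1 i.2
      simpa [hs'def, dif_pos i.2, Fin.eta, tup] using this
  rw [hpre, hindep.measure_inter_preimage_eq_mul (Finset.range n) fun i _ => hs' i]
  have hident' : ∀ i, P (X i ⁻¹' s' i) = (P.map (X 0)) (s' i) := by
    intro i
    rw [← (hident i).map_eq, Measure.map_apply (hmeas i) (hs' i)]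
  calc ∏ i ∈ Finset.range n, P (X i ⁻¹' s' i)
      = ∏ i ∈ Finset.range n, (P.map (X 0)) (s' i) :=
        Finset.prod_congr rfl fun i _ => hident' i
    _ = ∏ i : Fin n, (P.map (X 0)) (s' i) :=
        (Fin.prod_univ_eq_prod_range (fun i => (P.map (X 0)) (s' i)) n).symm
    _ = ∏ i : Fin n, (P.map (X 0)) (s i) := by
        refine Finset.prod_congr rfl fun i _ => ?_
        congr 1
        simp [hs'def, dif_pos i.2, Fin.eta]

lemma meas_tup_preimage (hmeas : ∀ i, Measurable (X i))
    (hindep : iIndepFun X P)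
    (hident : ∀ i, IdentDistrib (X i) (X 0) P P) (n : ℕ)
    {s : Set (Fin n → ℝ)} (hs : MeasurableSet s) :
    P (tup X n ⁻¹' s) = pm (P.map (X 0)) n s := by
  rw [← map_tup hmeas hindep hident n, Measure.map_apply (measurable_tup hmeas n) hs]

lemma Vminus_eq_Vmu (hmeas : ∀ i, Measurable (X i))
    (hindep : iIndepFun X P)
    (hident : ∀ i, IdentDistrib (X i) (X 0) P P) (y : ℝ) :
    Vminus P X y = Vmu (P.map (X 0)) y := by
  refine tsum_congr fun n => ?_
  unfold g
  rw [← meas_tup_preimage hmeas hindep hident n (measurableSet_lset n y)]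
  congr 1
  ext ω
  simp only [Set.mem_preimage, lset, Set.mem_setOf_eq]
  constructor
  · rintro ⟨ha, hb⟩
    constructor
    · intro j hj
      rw [Wf_tup n n le_rfl, Wf_tup n j (le_of_lt hj)]
      exact ha j hj
    · rw [Wf_tup n n le_rfl]; exact hb
  · rintro ⟨ha, hb⟩
    constructor
    · intro j hj
      have := ha j hj
      rwa [Wf_tup n n le_rfl, Wf_tup n j (le_of_lt hj)] at this
    · rwa [Wf_tup n n le_rfl] at hb

lemma sum_dset_eq_one (hmeas : ∀ i, Measurable (X i))
    (hindep : iIndepFun X P)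
    (hident : ∀ i, IdentDistrib (X i) (X 0) P P)
    (hlimsup : ∀ᵐ ω ∂P, ∀ M : ℝ, ∃ᶠ n in atTop, M < rwS X n ω) :
    ∑' m : ℕ, pm (P.map (X 0)) (m + 1) (dset (m + 1)) = 1 := by
  classical
  set D : ℕ → Set Ω := fun m =>
    {ω | (∀ i, 1 ≤ i → i < m + 1 → rwS X i ω ≤ 0) ∧ 0 < rwS X (m + 1) ω} with hDdef
  have hrwmeas : ∀ k, Measurable (rwS X k) := fun k =>
    Finset.measurable_sum _ fun i _ => hmeas i
  have hDmeas : ∀ m, MeasurableSet (D m) := by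
    intro m
    have : D m = (⋂ i ∈ Finset.Ico 1 (m + 1), {ω | rwS X i ω ≤ 0}) ∩
        {ω | 0 < rwS X (m + 1) ω} := by
      ext ω
      simp only [hDdef, Set.mem_setOf_eq, Set.mem_inter_iff, Set.mem_iInter, Finset.mem_Ico]
      constructor
      · rintro ⟨h1, h2⟩; exact ⟨fun i hi => h1 i hi.1 hi.2, h2⟩
      · rintro ⟨h1, h2⟩; exact ⟨fun i hi1 hi2 => h1 i ⟨hi1, hi2⟩, h2⟩
    rw [this]
    exact (MeasurableSet.biInter (Finset.Ico 1 (m + 1)).countable_toSet fun i _ =>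
      measurableSet_le (hrwmeas i) measurable_const).inter
      (measurableSet_lt measurable_const (hrwmeas (m + 1)))
  have hterm : ∀ m, pm (P.map (X 0)) (m + 1) (dset (m + 1)) = P (D m) := by
    intro m
    rw [← meas_tup_preimage hmeas hindep hident (m + 1) (measurableSet_dset (m + 1))]
    congr 1
    ext ω
    simp only [Set.mem_preimage, dset, Set.mem_setOf_eq, hDdef]
    constructor
    · rintro ⟨h1, h2⟩
      refine ⟨fun i hi1 hi2 => ?_, ?_⟩
      · have := h1 i hi1 hi2
        rwa [Wf_tup (m + 1) i (by omega)] at this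
      · rwa [Wf_tup (m + 1) (m + 1) le_rfl] at h2
    · rintro ⟨h1, h2⟩
      refine ⟨fun i hi1 hi2 => ?_, ?_⟩
      · rw [Wf_tup (m + 1) i (by omega)]
        exact h1 i hi1 hi2
      · rwa [Wf_tup (m + 1) (m + 1) le_rfl]
  have hkey : ∀ a b : ℕ, a < b → Disjoint (D a) (D b) := by
    intro a b hab
    rw [Set.disjoint_left]
    rintro ω ⟨_, h2⟩ ⟨h1', _⟩
    have := h1' (a + 1) (by omega) (by omega)
    linarith
  have hdisj : Pairwise (Function.onFun Disjoint D) := by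
    intro a b hab
    rcases hab.lt_or_gt with h | h
    · exact hkey a b h
    · exact (hkey b a h).symm
  rw [tsum_congr hterm, ← measure_iUnion hdisj hDmeas]
  have hae : ∀ᵐ ω ∂P, ω ∈ ⋃ m, D m := by
    filter_upwards [hlimsup] with ω hω
    have hex : ∃ n, 0 < rwS X n ω := (hω 0).exists
    have hk0 : 0 < rwS X (Nat.find hex) ω := Nat.find_spec hex
    have hk1 : 1 ≤ Nat.find hex := by
      rcases Nat.eq_zero_or_pos (Nat.find hex) with h' | h'
      · rw [h'] at hk0
        simp only [rwS, Finset.range_zero, Finset.sum_empty, lt_self_iff_false] at hk0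
      · exact h'
    refine Set.mem_iUnion.mpr ⟨Nat.find hex - 1, ?_⟩
    have hk2 : Nat.find hex - 1 + 1 = Nat.find hex := by omega
    rw [hDdef]
    refine ⟨fun i hi1 hi2 => ?_, ?_⟩
    · rw [hk2] at hi2
      have := Nat.find_min hex (show i < Nat.find hex by omega)
      exact not_lt.mp this
    · rw [hk2]; exact hk0
  have h1 : P (⋃ m, D m) = 1 := by
    rw [← measure_univ (μ := P)]
    exact measure_congr (Filter.eventuallyEq_univ.mpr hae)
  exact h1

end OmegaSide

lemma measurableSet_aset (N : ℕ) (x : ℝ) :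
    MeasurableSet {u : Fin N → ℝ | ∀ m, 1 ≤ m → m ≤ N → 0 ≤ Wf (ex u) m + x} := by
  have : {u : Fin N → ℝ | ∀ m, 1 ≤ m → m ≤ N → 0 ≤ Wf (ex u) m + x} =
      ⋂ m ∈ Finset.Icc 1 N, {u : Fin N → ℝ | 0 ≤ Wf (ex u) m + x} := by
    ext u
    simp only [Set.mem_setOf_eq, Set.mem_iInter, Finset.mem_Icc, and_imp]
  rw [this]
  exact MeasurableSet.biInter (Finset.Icc 1 N).countable_toSet fun m _ =>
    measurableSet_le measurable_const ((measurable_Wf_ex m).add_const x)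

variable {μ} in
lemma pm_step [IsProbabilityMeasure μ]
    (hone : ∑' m : ℕ, pm μ (m + 1) (dset (m + 1)) = 1)
    {x : ℝ} {N : ℕ} (hN : 1 ≤ N) :
    ∫⁻ v in {v : Fin (N + 1) → ℝ | ∀ m, 1 ≤ m → m ≤ N + 1 → 0 ≤ Wf (ex v) m + x},
        Vmu μ (Wf (ex v) (N + 1) + x) ∂(pm μ (N + 1))
      = ∫⁻ u in {u : Fin N → ℝ | ∀ m, 1 ≤ m → m ≤ N → 0 ≤ Wf (ex u) m + x},
          Vmu μ (Wf (ex u) N + x) ∂(pm μ N) := by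
  set A0 : Set (Fin N → ℝ) := {u | ∀ m, 1 ≤ m → m ≤ N → 0 ≤ Wf (ex u) m + x} with hA0def
  set A1 : Set (Fin (N + 1) → ℝ) :=
    {v | ∀ m, 1 ≤ m → m ≤ N + 1 → 0 ≤ Wf (ex v) m + x} with hA1def
  have hA0 : MeasurableSet A0 := measurableSet_aset N x
  have hA1 : MeasurableSet A1 := measurableSet_aset (N + 1) x
  set T : Set (ℝ × (Fin N → ℝ)) :=
    {p | p.2 ∈ A0 ∧ 0 ≤ p.1 + (Wf (ex p.2) N + x)} with hTdef
  have hTm : MeasurableSet T := by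
    have : T = (Prod.snd ⁻¹' A0) ∩ {p : ℝ × (Fin N → ℝ) | 0 ≤ p.1 + (Wf (ex p.2) N + x)} := by
      ext p; simp [hTdef, Set.mem_setOf_eq]
    rw [this]
    exact (hA0.preimage measurable_snd).inter
      (measurableSet_le measurable_const
        (measurable_fst.add (((measurable_Wf_ex N).comp measurable_snd).add_const x)))
  set Ψ : ℝ × (Fin N → ℝ) → ℝ≥0∞ :=
    T.indicator (fun p => Vmu μ (p.1 + (Wf (ex p.2) N + x))) with hΨdef
  have hΨmeas : Measurable Ψ :=
    Measurable.indicator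
      ((measurable_Vmu μ).comp
        (measurable_fst.add (((measurable_Wf_ex N).comp measurable_snd).add_const x))) hTm
  have hmp := measurePreserving_piFinSuccAbove (fun _ : Fin (N + 1) => μ) (Fin.last N)
  set e := MeasurableEquiv.piFinSuccAbove (fun _ : Fin (N + 1) => ℝ) (Fin.last N) with hedef
  have hcomp : ∀ v : Fin (N + 1) → ℝ,
      Set.indicator A1 (fun v => Vmu μ (Wf (ex v) (N + 1) + x)) v = Ψ (e v) := by
    intro v
    have happ : e v = (v (Fin.last N), fun j : Fin N => v ((Fin.last N).succAbove j)) := rfl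
    have hcs : (fun j : Fin N => v ((Fin.last N).succAbove j))
        = fun j : Fin N => v j.castSucc := by
      simp only [Fin.succAbove_last]
    rw [happ, hcs]
    set u : Fin N → ℝ := fun j => v j.castSucc with hudef
    have hWu : ∀ k, k ≤ N → Wf (ex u) k = Wf (ex v) k := by
      intro k hk
      refine Finset.sum_congr rfl fun i hi => ?_
      have hiN : i < N := lt_of_lt_of_le (Finset.mem_range.mp hi) hk
      rw [ex_lt _ hiN, ex_lt _ (Nat.lt_succ_of_lt hiN)]
      rfl
    have hWsucc : Wf (ex v) (N + 1) = v (Fin.last N) + Wf (ex v) N := by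
      show ∑ i ∈ Finset.range (N + 1), ex v i = _
      rw [Finset.sum_range_succ, ex_lt v (Nat.lt_succ_self N)]
      have : (⟨N, Nat.lt_succ_self N⟩ : Fin (N + 1)) = Fin.last N := rfl
      rw [this]
      show Wf (ex v) N + v (Fin.last N) = _
      ring
    have hmem : v ∈ A1 ↔ (u ∈ A0 ∧ 0 ≤ v (Fin.last N) + (Wf (ex u) N + x)) := by
      rw [hA1def, hA0def]
      simp only [Set.mem_setOf_eq]
      constructor
      · intro h
        refine ⟨fun m hm1 hm2 => ?_, ?_⟩
        · rw [hWu m hm2]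
          exact h m hm1 (le_trans hm2 (Nat.le_succ N))
        · have := h (N + 1) (by omega) le_rfl
          rw [hWsucc] at this
          rw [hWu N le_rfl]
          linarith
      · rintro ⟨h1, h2⟩ m hm1 hm2
        rcases Nat.lt_or_ge m (N + 1) with hlt | hge
        · have := h1 m hm1 (by omega)
          rwa [hWu m (by omega)] at this
        · have hm : m = N + 1 := by omega
          subst hm
          rw [hWsucc]
          rw [hWu N le_rfl] at h2
          linarith
    by_cases hv : v ∈ A1
    · obtain ⟨hu, hz⟩ := hmem.mp hv
      rw [Set.indicator_of_mem hv, hΨdef,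
        Set.indicator_of_mem (show ((v (Fin.last N), u) : ℝ × (Fin N → ℝ)) ∈ T from ⟨hu, hz⟩)]
      show Vmu μ (Wf (ex v) (N + 1) + x) = Vmu μ (v (Fin.last N) + (Wf (ex u) N + x))
      rw [hWsucc, hWu N le_rfl]
      ring_nf
    · rw [Set.indicator_of_notMem hv, hΨdef,
        Set.indicator_of_notMem (show ((v (Fin.last N), u) : ℝ × (Fin N → ℝ)) ∉ T from
          fun hc => hv (hmem.mpr ⟨hc.1, hc.2⟩))]
  calc ∫⁻ v in A1, Vmu μ (Wf (ex v) (N + 1) + x) ∂(pm μ (N + 1))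
      = ∫⁻ v, Set.indicator A1 (fun v => Vmu μ (Wf (ex v) (N + 1) + x)) v ∂(pm μ (N + 1)) :=
        (lintegral_indicator hA1 _).symm
    _ = ∫⁻ v, Ψ (e v) ∂(pm μ (N + 1)) := lintegral_congr hcomp
    _ = ∫⁻ p, Ψ p ∂(μ.prod (pm μ N)) := hmp.lintegral_comp hΨmeas
    _ = ∫⁻ u, ∫⁻ z, Ψ (z, u) ∂μ ∂(pm μ N) := lintegral_prod_symm Ψ hΨmeas.aemeasurable
    _ = ∫⁻ u, Set.indicator A0 (fun u => Vmu μ (Wf (ex u) N + x)) u ∂(pm μ N) := by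
        refine lintegral_congr fun u => ?_
        by_cases hu : u ∈ A0
        · have hu' : ∀ m, 1 ≤ m → m ≤ N → 0 ≤ Wf (ex u) m + x := hu
          have hc : 0 ≤ Wf (ex u) N + x := hu' N hN le_rfl
          have hinner : ∀ z : ℝ, Ψ (z, u) =
              Set.indicator {z : ℝ | 0 ≤ z + (Wf (ex u) N + x)}
                (fun z => Vmu μ (z + (Wf (ex u) N + x))) z := by
            intro z
            by_cases hz : 0 ≤ z + (Wf (ex u) N + x)
            · rw [hΨdef,
                Set.indicator_of_mem (show ((z, u) : ℝ × (Fin N → ℝ)) ∈ T from ⟨hu, hz⟩),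
                Set.indicator_of_mem (show z ∈ {z : ℝ | 0 ≤ z + (Wf (ex u) N + x)} from hz)]
            · rw [hΨdef,
                Set.indicator_of_notMem (show ((z, u) : ℝ × (Fin N → ℝ)) ∉ T from
                  fun hc' => hz hc'.2),
                Set.indicator_of_notMem
                  (show z ∉ {z : ℝ | 0 ≤ z + (Wf (ex u) N + x)} from hz)]
          rw [lintegral_congr hinner]
          have hms : MeasurableSet {z : ℝ | 0 ≤ z + (Wf (ex u) N + x)} :=
            measurableSet_le measurable_const (measurable_id.add_const _)
          rw [lintegral_indicator hms, ← onestep hone hc, Set.indicator_of_mem hu]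
        · have hinner : ∀ z : ℝ, Ψ (z, u) = 0 := by
            intro z
            rw [hΨdef, Set.indicator_of_notMem (show ((z, u) : ℝ × (Fin N → ℝ)) ∉ T from
              fun hc' => hu hc'.1)]
          rw [lintegral_congr hinner, lintegral_zero, Set.indicator_of_notMem hu]
    _ = ∫⁻ u in A0, Vmu μ (Wf (ex u) N + x) ∂(pm μ N) := lintegral_indicator hA0 _

section OmegaSide2

variable {Ω : Type*} [MeasurableSpace Ω] {P : Measure Ω} [IsProbabilityMeasure P]
    {X : ℕ → Ω → ℝ}

lemma transfer (hmeas : ∀ i, Measurable (X i))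
    (hindep : iIndepFun X P)
    (hident : ∀ i, IdentDistrib (X i) (X 0) P P) (x : ℝ) (K : ℕ) :
    ∫⁻ ω in {ω | ∀ m, 1 ≤ m → m ≤ K → 0 ≤ rwS X m ω + x},
        Vmu (P.map (X 0)) (rwS X K ω + x) ∂P
      = ∫⁻ u in {u : Fin K → ℝ | ∀ m, 1 ≤ m → m ≤ K → 0 ≤ Wf (ex u) m + x},
          Vmu (P.map (X 0)) (Wf (ex u) K + x) ∂(pm (P.map (X 0)) K) := by
  have hset : tup X K ⁻¹' {u : Fin K → ℝ | ∀ m, 1 ≤ m → m ≤ K → 0 ≤ Wf (ex u) m + x}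
      = {ω | ∀ m, 1 ≤ m → m ≤ K → 0 ≤ rwS X m ω + x} := by
    ext ω
    simp only [Set.mem_preimage, Set.mem_setOf_eq]
    constructor
    · intro h m hm1 hm2
      have := h m hm1 hm2
      rwa [Wf_tup K m hm2] at this
    · intro h m hm1 hm2
      rw [Wf_tup K m hm2]
      exact h m hm1 hm2
  rw [← map_tup hmeas hindep hident K]
  calc ∫⁻ ω in {ω | ∀ m, 1 ≤ m → m ≤ K → 0 ≤ rwS X m ω + x},
          Vmu (P.map (X 0)) (rwS X K ω + x) ∂P
      = ∫⁻ ω in tup X K ⁻¹' {u : Fin K → ℝ | ∀ m, 1 ≤ m → m ≤ K → 0 ≤ Wf (ex u) m + x},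
          Vmu (P.map (X 0)) (Wf (ex (tup X K ω)) K + x) ∂P := by
        rw [hset]
        exact lintegral_congr fun ω => by rw [Wf_tup K K le_rfl]
    _ = ∫⁻ u in {u : Fin K → ℝ | ∀ m, 1 ≤ m → m ≤ K → 0 ≤ Wf (ex u) m + x},
          Vmu (P.map (X 0)) (Wf (ex u) K + x) ∂(P.map (tup X K)) :=
        (setLIntegral_map (measurableSet_aset K x)
          ((measurable_Vmu _).comp ((measurable_Wf_ex K).add_const x))
          (measurable_tup hmeas K)).symm

lemma base_case (hmeas : ∀ i, Measurable (X i))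
    (hindep : iIndepFun X P)
    (hident : ∀ i, IdentDistrib (X i) (X 0) P P)
    (hone : ∑' m : ℕ, pm (P.map (X 0)) (m + 1) (dset (m + 1)) = 1)
    {x : ℝ} (hx : 0 ≤ x) :
    Vmu (P.map (X 0)) x
      = ∫⁻ ω in {ω | ∀ m, 1 ≤ m → m ≤ 1 → 0 ≤ rwS X m ω + x},
          Vmu (P.map (X 0)) (rwS X 1 ω + x) ∂P := by
  haveI : IsProbabilityMeasure (P.map (X 0)) := Measure.isProbabilityMeasure_map (hmeas 0).aemeasurable
  have h1 : ∀ ω, rwS X 1 ω = X 0 ω := by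
    intro ω
    show ∑ i ∈ Finset.range 1, X i ω = X 0 ω
    rw [Finset.sum_range_one]
  have hset : {ω | ∀ m, 1 ≤ m → m ≤ 1 → 0 ≤ rwS X m ω + x}
      = (X 0) ⁻¹' {z : ℝ | 0 ≤ z + x} := by
    ext ω
    simp only [Set.mem_setOf_eq, Set.mem_preimage]
    constructor
    · intro h
      have := h 1 le_rfl le_rfl
      rwa [h1 ω] at this
    · intro h m hm1 hm2
      have hm : m = 1 := le_antisymm hm2 hm1
      subst hm
      rwa [h1 ω]
  have hfun : ∀ ω, Vmu (P.map (X 0)) (rwS X 1 ω + x) = Vmu (P.map (X 0)) (X 0 ω + x) := by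
    intro ω
    rw [h1 ω]
  rw [hset, lintegral_congr hfun]
  calc Vmu (P.map (X 0)) x
      = ∫⁻ z in {z : ℝ | 0 ≤ z + x}, Vmu (P.map (X 0)) (z + x) ∂(P.map (X 0)) :=
        onestep hone hx
    _ = ∫⁻ ω in X 0 ⁻¹' {z : ℝ | 0 ≤ z + x}, Vmu (P.map (X 0)) (X 0 ω + x) ∂P :=
        setLIntegral_map (measurableSet_le measurable_const (measurable_id.add_const x))
          ((measurable_Vmu _).comp (measurable_id.add_const x)) (hmeas 0)

lemma step_case (hmeas : ∀ i, Measurable (X i))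
    (hindep : iIndepFun X P)
    (hident : ∀ i, IdentDistrib (X i) (X 0) P P)
    (hone : ∑' m : ℕ, pm (P.map (X 0)) (m + 1) (dset (m + 1)) = 1)
    {x : ℝ} {N : ℕ} (hN : 1 ≤ N) :
    ∫⁻ ω in {ω | ∀ m, 1 ≤ m → m ≤ N → 0 ≤ rwS X m ω + x},
        Vmu (P.map (X 0)) (rwS X N ω + x) ∂P
      = ∫⁻ ω in {ω | ∀ m, 1 ≤ m → m ≤ N + 1 → 0 ≤ rwS X m ω + x},
          Vmu (P.map (X 0)) (rwS X (N + 1) ω + x) ∂P := by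
  haveI : IsProbabilityMeasure (P.map (X 0)) := Measure.isProbabilityMeasure_map (hmeas 0).aemeasurable
  rw [transfer hmeas hindep hident x N, transfer hmeas hindep hident x (N + 1)]
  exact (pm_step hone hN).symm

end OmegaSide2

end Stmt7Aux

/-- if the walk does not drift to `-∞` (`limsup Sₙ = +∞` a.s.), then `V⁻` is
invariant for the walk killed on entering `(-∞,0)`:
`V⁻(x) = E_x[V⁻(S_N) 1{S₁ ≥ 0, …, S_N ≥ 0}]`. -/
theorem stmt7 {Ω : Type*} [MeasurableSpace Ω] (P : Measure Ω) [IsProbabilityMeasure P]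
    (X : ℕ → Ω → ℝ) (hmeas : ∀ i, Measurable (X i))
    (hindep : iIndepFun X P)
    (hident : ∀ i, IdentDistrib (X i) (X 0) P P)
    (hlimsup : ∀ᵐ ω ∂P, ∀ M : ℝ, ∃ᶠ n in atTop, M < rwS X n ω) :
    ∀ x : ℝ, 0 ≤ x → ∀ N : ℕ, 1 ≤ N →
      Vminus P X x
        = ∫⁻ ω in {ω | ∀ m, 1 ≤ m → m ≤ N → 0 ≤ rwS X m ω + x},
            Vminus P X (rwS X N ω + x) ∂P := by
  intro x hx N hN
  haveI : IsProbabilityMeasure (P.map (X 0)) := Measure.isProbabilityMeasure_map (hmeas 0).aemeasurable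
  have hone := Stmt7Aux.sum_dset_eq_one hmeas hindep hident hlimsup
  have hV : ∀ y, Vminus P X y = Stmt7Aux.Vmu (P.map (X 0)) y :=
    Stmt7Aux.Vminus_eq_Vmu hmeas hindep hident
  have hmain : ∀ N : ℕ, 1 ≤ N →
      Stmt7Aux.Vmu (P.map (X 0)) x
        = ∫⁻ ω in {ω | ∀ m, 1 ≤ m → m ≤ N → 0 ≤ rwS X m ω + x},
            Stmt7Aux.Vmu (P.map (X 0)) (rwS X N ω + x) ∂P := by
    intro N hN
    induction N, hN using Nat.le_induction with
    | base => exact Stmt7Aux.base_case hmeas hindep hident hone hx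
    | succ n hn ih =>
        exact ih.trans (Stmt7Aux.step_case hmeas hindep hident hone hn)
  rw [hV x, hmain N hN]
  exact lintegral_congr fun ω => (hV _).symm
end

section
/- In the setting of the previous statement (random walk not drifting to −∞), the modified renewal function V̲^-(x) := E[#{k ≥ 0 : H_k^- < x}] for x > 0, with V̲^-(0) := 1, is harmonic for the walk killed upon entering (−∞, 0]: for every x ≥ 0 and N ∈ ℕ, V̲^-(x) = E_x[ V̲^-(S_N) 1{S_1 > 0, ..., S_N > 0} ]. -/
open MeasureTheory ProbabilityTheory Filter
open scoped ENNReal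

/-- The modified weak descending renewal function `V̲⁻(x) = Σ_k P(H_k⁻ < x)` for `x > 0`,
with `V̲⁻(0) := 1`. -/
noncomputable def VminusBar {Ω : Type*} [MeasurableSpace Ω] (P : Measure Ω)
    (X : ℕ → Ω → ℝ) (x : ℝ) : ℝ≥0∞ :=
  if x = 0 then 1
  else ∑' n : ℕ, P {ω | (∀ j, j < n → rwS X n ω ≤ rwS X j ω) ∧ -rwS X n ω < x}

namespace Stmt8Aux

variable {Ω : Type*} [MeasurableSpace Ω]

/-- partial sums of a finite vector, as a function of `k : ℕ`. -/
def pS {n : ℕ} (v : Fin n → ℝ) (k : ℕ) : ℝ :=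
  ∑ i ∈ Finset.range k, if h : i < n then v ⟨i, h⟩ else 0

lemma pS_meas (n k : ℕ) : Measurable fun v : Fin n → ℝ => pS v k := by
  apply Finset.measurable_sum
  intro i _
  by_cases h : i < n
  · simpa [h] using measurable_pi_apply (⟨i, h⟩ : Fin n)
  · simp only [dif_neg h]; exact measurable_const

lemma pS_apply {n : ℕ} (f : ℕ → ℝ) {k : ℕ} (hk : k ≤ n) :
    pS (fun i : Fin n => f i) k = ∑ i ∈ Finset.range k, f i := by
  refine Finset.sum_congr rfl fun i hi => ?_
  have hin : i < n := lt_of_lt_of_le (Finset.mem_range.mp hi) hk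
  simp [hin]

lemma rwS_succ {Ω : Type*} (X : ℕ → Ω → ℝ) (n : ℕ) (ω : Ω) :
    rwS X (n + 1) ω = rwS X n ω + X n ω := Finset.sum_range_succ _ _

lemma rwS_zero {Ω : Type*} (X : ℕ → Ω → ℝ) (ω : Ω) : rwS X 0 ω = 0 := rfl

lemma rwS_one {Ω : Type*} (X : ℕ → Ω → ℝ) (ω : Ω) : rwS X 1 ω = X 0 ω := by
  simp [rwS]

lemma rwS_meas (X : ℕ → Ω → ℝ) (hmeas : ∀ i, Measurable (X i)) (n : ℕ) :
    Measurable (rwS X n) :=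
  Finset.measurable_sum _ fun i _ => hmeas i

lemma sum_shift {Ω : Type*} (X : ℕ → Ω → ℝ) (k : ℕ) (ω : Ω) :
    ∑ i ∈ Finset.range k, X (i + 1) ω = rwS X (k + 1) ω - rwS X 1 ω := by
  have := Finset.sum_range_succ' (fun i => X i ω) k
  rw [rwS, this, rwS_one]
  ring

lemma sum_rev {Ω : Type*} (X : ℕ → Ω → ℝ) (m : ℕ) {k : ℕ} (hk : k ≤ m) (ω : Ω) :
    ∑ i ∈ Finset.range k, X (m - 1 - i) ω = rwS X m ω - rwS X (m - k) ω := by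
  induction k with
  | zero => simp
  | succ k ih =>
    rw [Finset.sum_range_succ, ih (le_of_lt (Nat.lt_of_lt_of_le (Nat.lt_succ_self k) hk) |>.trans_eq rfl)]
    have h1 : m - k = (m - (k + 1)) + 1 := by omega
    have h2 : m - 1 - k = m - (k + 1) := by omega
    rw [h1, rwS_succ, h2]
    ring

/-- Joint law of any injectively-reindexed finite subfamily of an iid family is the product
measure. -/
lemma lawVec (P : Measure Ω) [IsProbabilityMeasure P] (X : ℕ → Ω → ℝ)
    (hmeas : ∀ i, Measurable (X i))
    (hindep : iIndepFun X P)
    (hident : ∀ i, IdentDistrib (X i) (X 0) P P)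
    (m : ℕ) (g : Fin m → ℕ) (hg : Function.Injective g) :
    P.map (fun ω (i : Fin m) => X (g i) ω)
      = Measure.pi (fun _ : Fin m => P.map (X 0)) := by
  classical
  haveI hμ : IsProbabilityMeasure (P.map (X 0)) :=
    Measure.isProbabilityMeasure_map (hmeas 0).aemeasurable
  refine (Measure.pi_eq (μ := fun _ : Fin m => P.map (X 0)) fun s hs => ?_).symm
  rw [Measure.map_apply (measurable_pi_lambda _ fun i => hmeas _)
    (MeasurableSet.univ_pi hs)]
  have hpre : (fun ω (i : Fin m) => X (g i) ω) ⁻¹' (Set.univ.pi s)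
      = ⋂ i : Fin m, X (g i) ⁻¹' s i := by
    ext ω; simp [Set.mem_univ_pi]
  rw [hpre]
  set sets : ℕ → Set ℝ := fun j => ⋃ i : Fin m, ⋃ _ : g i = j, s i with hsets_def
  have hsets : ∀ i : Fin m, sets (g i) = s i := by
    intro i
    apply subset_antisymm
    · refine Set.iUnion_subset fun i' => Set.iUnion_subset fun hi' => ?_
      cases hg hi'; exact subset_rfl
    · exact Set.subset_iUnion_of_subset i (Set.subset_iUnion_of_subset rfl subset_rfl)
  have hsetsm : ∀ j, MeasurableSet (sets j) := fun j =>
    MeasurableSet.iUnion fun i => MeasurableSet.iUnion fun _ => hs i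
  have key := hindep.measure_inter_preimage_eq_mul (Finset.image g Finset.univ)
    (sets := sets) (fun j _ => hsetsm j)
  have hiInter : (⋂ j ∈ Finset.image g Finset.univ, X j ⁻¹' sets j)
      = ⋂ i : Fin m, X (g i) ⁻¹' s i := by
    rw [Finset.set_biInter_finset_image]
    ext ω; simp [hsets]
  have hprod : (∏ j ∈ Finset.image g Finset.univ, P (X j ⁻¹' sets j))
      = ∏ i : Fin m, (P.map (X 0)) (s i) := by
    rw [Finset.prod_image (fun i _ i' _ h => hg h)]
    refine Finset.prod_congr rfl fun i _ => ?_
    rw [hsets i, ← (hident (g i)).map_eq,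
      Measure.map_apply (hmeas _) (hs i)]
  rw [← hiInter, key, hprod]


section Events

variable (P : Measure Ω) [IsProbabilityMeasure P] (X : ℕ → Ω → ℝ)

/-- The generic term of the renewal series. -/
def Cset (y : ℝ) (n : ℕ) : Set Ω :=
  {ω | (∀ j, j < n → rwS X n ω ≤ rwS X j ω) ∧ -rwS X n ω < y}

noncomputable def Vsum (y : ℝ) : ℝ≥0∞ := ∑' n : ℕ, P (Cset X y n)

def Eneg (z : ℝ) (n : ℕ) : Set Ω :=
  {ω | (∀ j, j < n → rwS X (n+1) ω ≤ rwS X (j+1) ω) ∧ -z < rwS X (n+1) ω ∧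
    rwS X (n+1) ω ≤ 0}

def Fpos (n : ℕ) : Set Ω :=
  {ω | (∀ j, j < n → rwS X (n+1) ω ≤ rwS X (j+1) ω) ∧ 0 < rwS X (n+1) ω}

def Gset (z : ℝ) (n : ℕ) : Set Ω :=
  {ω | -z < rwS X 1 ω ∧ (∀ j, j < n → rwS X (n+1) ω ≤ rwS X (j+1) ω) ∧
    -z < rwS X (n+1) ω}

def Tset (n : ℕ) : Set Ω :=
  {ω | (∀ k, 1 ≤ k → k ≤ n → rwS X k ω ≤ 0) ∧ 0 < rwS X (n+1) ω}

variable {X}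

lemma ladder_mble (hmeas : ∀ i, Measurable (X i)) (a : ℕ → ℕ) (b : ℕ) (n : ℕ) :
    MeasurableSet {ω : Ω | ∀ j, j < n → rwS X b ω ≤ rwS X (a j) ω} := by
  have h : {ω : Ω | ∀ j, j < n → rwS X b ω ≤ rwS X (a j) ω}
      = ⋂ j, ⋂ _h : j < n, {ω | rwS X b ω ≤ rwS X (a j) ω} := by
    ext ω; simp
  rw [h]
  exact MeasurableSet.iInter fun j => MeasurableSet.iInter fun _ =>
    measurableSet_le (rwS_meas X hmeas _) (rwS_meas X hmeas _)

lemma Cset_mble (hmeas : ∀ i, Measurable (X i)) (y : ℝ) (n : ℕ) :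
    MeasurableSet (Cset X y n) := by
  have h : Cset X y n = {ω : Ω | ∀ j, j < n → rwS X n ω ≤ rwS X j ω} ∩
      {ω | -rwS X n ω < y} := rfl
  rw [h]
  exact (ladder_mble hmeas _ _ _).inter
    (measurableSet_lt (rwS_meas X hmeas n).neg measurable_const)

lemma Eneg_mble (hmeas : ∀ i, Measurable (X i)) (z : ℝ) (n : ℕ) :
    MeasurableSet (Eneg X z n) := by
  have h : Eneg X z n = {ω : Ω | ∀ j, j < n → rwS X (n+1) ω ≤ rwS X (j+1) ω} ∩
      ({ω | -z < rwS X (n+1) ω} ∩ {ω | rwS X (n+1) ω ≤ 0}) := rfl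
  rw [h]
  exact (ladder_mble hmeas _ _ _).inter
    ((measurableSet_lt measurable_const (rwS_meas X hmeas _)).inter
      (measurableSet_le (rwS_meas X hmeas _) measurable_const))

lemma Fpos_mble (hmeas : ∀ i, Measurable (X i)) (n : ℕ) :
    MeasurableSet (Fpos X n) := by
  have h : Fpos X n = {ω : Ω | ∀ j, j < n → rwS X (n+1) ω ≤ rwS X (j+1) ω} ∩
      {ω | 0 < rwS X (n+1) ω} := rfl
  rw [h]
  exact (ladder_mble hmeas _ _ _).inter
    (measurableSet_lt measurable_const (rwS_meas X hmeas _))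

lemma Tset_mble (hmeas : ∀ i, Measurable (X i)) (n : ℕ) :
    MeasurableSet (Tset X n) := by
  have h : Tset X n = (⋂ k, ⋂ _h1 : 1 ≤ k, ⋂ _h2 : k ≤ n, {ω : Ω | rwS X k ω ≤ 0}) ∩
      {ω | 0 < rwS X (n+1) ω} := by
    ext ω; simp [Tset]
  rw [h]
  exact (MeasurableSet.iInter fun k => MeasurableSet.iInter fun _ =>
      MeasurableSet.iInter fun _ =>
        measurableSet_le (rwS_meas X hmeas _) measurable_const).inter
    (measurableSet_lt measurable_const (rwS_meas X hmeas _))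

lemma Gset_mble (hmeas : ∀ i, Measurable (X i)) (z : ℝ) (n : ℕ) :
    MeasurableSet (Gset X z n) := by
  have h : Gset X z n = {ω : Ω | -z < rwS X 1 ω} ∩
      ({ω : Ω | ∀ j, j < n → rwS X (n+1) ω ≤ rwS X (j+1) ω} ∩
        {ω | -z < rwS X (n+1) ω}) := rfl
  rw [h]
  exact (measurableSet_lt measurable_const (rwS_meas X hmeas _)).inter
    ((ladder_mble hmeas _ _ _).inter
      (measurableSet_lt measurable_const (rwS_meas X hmeas _)))

lemma Gset_decomp {z : ℝ} (hz : 0 ≤ z) (n : ℕ) :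
    Gset X z n = Eneg X z n ∪ Fpos X n := by
  ext ω
  simp only [Gset, Eneg, Fpos, Set.mem_setOf_eq, Set.mem_union]
  constructor
  · rintro ⟨hS1, h1, h2⟩
    rcases le_or_gt (rwS X (n+1) ω) 0 with h | h
    · exact Or.inl ⟨h1, h2, h⟩
    · exact Or.inr ⟨h1, h⟩
  · rintro (⟨h1, h2, h3⟩ | ⟨h1, h2⟩)
    · have hS1 : -z < rwS X 1 ω := by
        rcases Nat.eq_zero_or_pos n with hn | hn
        · subst hn; simpa using h2
        · exact lt_of_lt_of_le h2 (h1 0 hn)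
      exact ⟨hS1, h1, h2⟩
    · have hS1 : 0 < rwS X 1 ω := by
        rcases Nat.eq_zero_or_pos n with hn | hn
        · subst hn; simpa using h2
        · exact lt_of_lt_of_le h2 (h1 0 hn)
      exact ⟨by linarith, h1, by linarith⟩

lemma Gset_disj (z : ℝ) (n : ℕ) : Disjoint (Eneg X z n) (Fpos X n) := by
  rw [Set.disjoint_iff]
  rintro ω ⟨⟨_, _, h1⟩, ⟨_, h2⟩⟩
  exact absurd h2 (not_lt.mpr h1)

end Events


section Reversal

variable (P : Measure Ω) [IsProbabilityMeasure P] {X : ℕ → Ω → ℝ}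

/-- The reversed-path description of `Tset`, as a set of increment vectors. -/
def PsiSet (n : ℕ) : Set (Fin (n+1) → ℝ) :=
  {v | (∀ k, 1 ≤ k → k ≤ n → pS v k ≤ 0) ∧ 0 < pS v (n+1)}

lemma PsiSet_mble (n : ℕ) : MeasurableSet (PsiSet n) := by
  have h : PsiSet n = (⋂ k, ⋂ _h1 : 1 ≤ k, ⋂ _h2 : k ≤ n,
      {v : Fin (n+1) → ℝ | pS v k ≤ 0}) ∩ {v | 0 < pS v (n+1)} := by
    ext v; simp [PsiSet]
  rw [h]
  exact (MeasurableSet.iInter fun k => MeasurableSet.iInter fun _ =>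
      MeasurableSet.iInter fun _ =>
        measurableSet_le (pS_meas _ _) measurable_const).inter
    (measurableSet_lt measurable_const (pS_meas _ _))

lemma Tset_preimage (X : ℕ → Ω → ℝ) (n : ℕ) :
    Tset X n = (fun ω (i : Fin (n+1)) => X (i : ℕ) ω) ⁻¹' PsiSet n := by
  ext ω
  have hk : ∀ k, k ≤ n + 1 → pS (fun i : Fin (n+1) => X (i : ℕ) ω) k = rwS X k ω :=
    fun k hk => pS_apply (fun j => X j ω) hk
  simp only [Tset, Set.mem_setOf_eq, Set.mem_preimage, PsiSet]
  constructor
  · rintro ⟨a, b⟩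
    exact ⟨fun k h1 h2 => by rw [hk k (by omega)]; exact a k h1 h2,
      by rw [hk (n+1) le_rfl]; exact b⟩
  · rintro ⟨a, b⟩
    refine ⟨fun k h1 h2 => ?_, ?_⟩
    · have := a k h1 h2; rwa [hk k (by omega)] at this
    · have := b; rwa [hk (n+1) le_rfl] at this

lemma Fpos_preimage (X : ℕ → Ω → ℝ) (n : ℕ) :
    Fpos X n = (fun ω (i : Fin (n+1)) => X (n - (i : ℕ)) ω) ⁻¹' PsiSet n := by
  ext ω
  have hk : ∀ k, k ≤ n + 1 →
      pS (fun i : Fin (n+1) => X (n - (i : ℕ)) ω) k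
        = rwS X (n+1) ω - rwS X (n+1-k) ω := by
    intro k hkle
    rw [pS_apply (fun j => X (n - j) ω) hkle]
    have : ∀ i, n - i = n + 1 - 1 - i := by omega
    calc ∑ i ∈ Finset.range k, X (n - i) ω
        = ∑ i ∈ Finset.range k, X (n + 1 - 1 - i) ω := by
          refine Finset.sum_congr rfl fun i _ => by rw [← this i]
      _ = rwS X (n+1) ω - rwS X (n+1-k) ω := sum_rev X (n+1) hkle ω
  simp only [Fpos, Set.mem_setOf_eq, Set.mem_preimage, PsiSet]
  constructor
  · rintro ⟨a, b⟩
    refine ⟨fun k h1 h2 => ?_, ?_⟩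
    · rw [hk k (by omega)]
      have hj : n + 1 - k = (n - k) + 1 := by omega
      have := a (n - k) (by omega)
      rw [hj]
      linarith
    · rw [hk (n+1) le_rfl]
      simp only [Nat.sub_self, rwS_zero]
      linarith
  · rintro ⟨a, b⟩
    have hb : 0 < rwS X (n+1) ω := by
      have := b; rw [hk (n+1) le_rfl] at this
      simpa [rwS_zero] using this
    refine ⟨fun j hj => ?_, hb⟩
    have := a (n - j) (by omega) (by omega)
    rw [hk (n - j) (by omega)] at this
    have hj' : n + 1 - (n - j) = j + 1 := by omega
    rw [hj'] at this
    linarith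

lemma Fpos_eq_Tset (hmeas : ∀ i, Measurable (X i))
    (hindep : iIndepFun X P)
    (hident : ∀ i, IdentDistrib (X i) (X 0) P P) (n : ℕ) :
    P (Fpos X n) = P (Tset X n) := by
  have hrev : Function.Injective (fun i : Fin (n+1) => n - (i : ℕ)) := by
    intro i j h
    simp only at h
    have hi := i.isLt
    have hj := j.isLt
    exact Fin.ext (by omega)
  have hid : Function.Injective (fun i : Fin (n+1) => (i : ℕ)) :=
    fun i j h => Fin.ext h
  have law1 := lawVec P X hmeas hindep hident (n+1) (fun i => n - (i : ℕ)) hrev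
  have law2 := lawVec P X hmeas hindep hident (n+1) (fun i => (i : ℕ)) hid
  have m1 : Measurable (fun ω (i : Fin (n+1)) => X (n - (i : ℕ)) ω) :=
    measurable_pi_lambda _ fun i => hmeas _
  have m2 : Measurable (fun ω (i : Fin (n+1)) => X (i : ℕ) ω) :=
    measurable_pi_lambda _ fun i => hmeas _
  rw [Fpos_preimage X n, Tset_preimage X n,
    ← Measure.map_apply m1 (PsiSet_mble n), ← Measure.map_apply m2 (PsiSet_mble n),
    law1, law2]

lemma tsum_Tset (hmeas : ∀ i, Measurable (X i))
    (hlimsup : ∀ᵐ ω ∂P, ∀ M : ℝ, ∃ᶠ n in atTop, M < rwS X n ω) :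
    ∑' n : ℕ, P (Tset X n) = 1 := by
  have hd : Pairwise (Function.onFun Disjoint (Tset X)) := by
    have key : ∀ a b, a < b → Disjoint (Tset X a) (Tset X b) := by
      intro a b h
      rw [Set.disjoint_iff]
      rintro ω ⟨⟨_, ha⟩, ⟨hb, _⟩⟩
      exact absurd ha (not_lt.mpr (hb (a+1) (by omega) (by omega)))
    intro a b hab
    rcases hab.lt_or_gt with h | h
    · exact key a b h
    · exact (key b a h).symm
  rw [← measure_iUnion hd (fun n => Tset_mble hmeas n)]
  have hae : ∀ᵐ ω ∂P, ω ∈ ⋃ n, Tset X n := by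
    filter_upwards [hlimsup] with ω hω
    have hfreq := hω 0
    obtain ⟨k, hk2, hk1⟩ := (hfreq.and_eventually (eventually_ge_atTop 1)).exists
    have hexQ : ∃ k, 1 ≤ k ∧ 0 < rwS X k ω := ⟨k, hk1, hk2⟩
    set k0 := Nat.find hexQ with hk0def
    have hk0 := Nat.find_spec hexQ
    have hmin : ∀ j, j < k0 → ¬(1 ≤ j ∧ 0 < rwS X j ω) :=
      fun j hj => Nat.find_min hexQ hj
    refine Set.mem_iUnion.2 ⟨k0 - 1, ⟨?_, ?_⟩⟩
    · intro k h1 h2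
      by_contra hpos
      push_neg at hpos
      exact hmin k (by omega) ⟨h1, hpos⟩
    · have h1 : k0 - 1 + 1 = k0 := by omega
      rw [h1]
      exact hk0.2
  have hU : MeasurableSet (⋃ n, Tset X n) := .iUnion (Tset_mble hmeas)
  have hc : P (⋃ n, Tset X n)ᶜ = 0 := by
    have h2 : {a | ¬ a ∈ ⋃ n, Tset X n} = (⋃ n, Tset X n)ᶜ := rfl
    rw [← h2]
    exact ae_iff.mp hae
  exact (prob_compl_eq_zero_iff hU).mp hc

end Reversal


section Vprops

variable (P : Measure Ω) [IsProbabilityMeasure P] (X : ℕ → Ω → ℝ)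

lemma Vsum_mono : Monotone (Vsum P X) := by
  intro y1 y2 h
  refine ENNReal.tsum_le_tsum fun n => measure_mono fun ω hω => ?_
  exact ⟨hω.1, lt_of_lt_of_le hω.2 h⟩

lemma Vsum_meas : Measurable (Vsum P X) := (Vsum_mono P X).measurable

lemma qn_mono (n : ℕ) : Monotone (fun y => P (Cset X y n)) := by
  intro y1 y2 h
  exact measure_mono fun ω hω => ⟨hω.1, lt_of_lt_of_le hω.2 h⟩

lemma qn_meas (n : ℕ) : Measurable (fun y => P (Cset X y n)) :=
  (qn_mono P X n).measurable

end Vprops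

section VG

variable (P : Measure Ω) [IsProbabilityMeasure P] (X : ℕ → Ω → ℝ)

lemma VB_def (x : ℝ) :
    VminusBar P X x = if x = 0 then 1 else Vsum P X x := rfl

lemma VB_meas : Measurable (VminusBar P X) := by
  rw [show VminusBar P X = fun x => if x = 0 then 1 else Vsum P X x from rfl]
  exact Measurable.ite (by simpa using measurableSet_singleton (0:ℝ))
    measurable_const (Vsum_meas P X)

lemma V_expansion {z : ℝ} (hz : 0 ≤ z) :
    VminusBar P X z = 1 + ∑' n : ℕ, P (Eneg X z n) := by
  rcases eq_or_lt_of_le hz with hz0 | hzpos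
  · have h1 : VminusBar P X z = 1 := by rw [VB_def, if_pos hz0.symm]
    have h2 : ∀ n, Eneg X z n = (∅ : Set Ω) := by
      intro n
      ext ω
      simp only [Eneg, Set.mem_setOf_eq, Set.mem_empty_iff_false, iff_false, not_and]
      intro _ h2 h3
      rw [← hz0] at h2
      linarith
    simp [h1, h2]
  · rw [VB_def, if_neg (ne_of_gt hzpos)]
    have hV : Vsum P X z = ∑' m : ℕ, P (Cset X z m) := rfl
    rw [hV, tsum_eq_zero_add' (f := fun m : ℕ => P (Cset X z m)) ENNReal.summable]
    have h0 : Cset X z 0 = Set.univ := by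
      ext ω
      simp [Cset, rwS_zero, hzpos]
    have hC : ∀ n : ℕ, Cset X z (n+1) = Eneg X z n := by
      intro n
      ext ω
      simp only [Cset, Eneg, Set.mem_setOf_eq]
      constructor
      · rintro ⟨h1, h2⟩
        exact ⟨fun j hj => h1 (j+1) (by omega), by linarith,
          by simpa [rwS_zero] using h1 0 (by omega)⟩
      · rintro ⟨h1, h2, h3⟩
        refine ⟨fun j hj => ?_, by linarith⟩
        rcases Nat.eq_zero_or_pos j with hj0 | hj0
        · subst hj0; simpa [rwS_zero] using h3
        · obtain ⟨j', rfl⟩ : ∃ j', j = j' + 1 := ⟨j - 1, by omega⟩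
          exact h1 j' (by omega)
    rw [h0, measure_univ]
    congr 1
    exact tsum_congr fun n => by rw [hC n]

lemma tsum_Gset {X : ℕ → Ω → ℝ} (hmeas : ∀ i, Measurable (X i))
    (hindep : iIndepFun X P)
    (hident : ∀ i, IdentDistrib (X i) (X 0) P P)
    (hlimsup : ∀ᵐ ω ∂P, ∀ M : ℝ, ∃ᶠ n in atTop, M < rwS X n ω)
    {z : ℝ} (hz : 0 ≤ z) :
    ∑' n : ℕ, P (Gset X z n) = VminusBar P X z := by
  have h1 : ∀ n, P (Gset X z n) = P (Eneg X z n) + P (Fpos X n) := by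
    intro n
    rw [Gset_decomp hz n,
      measure_union (Gset_disj z n) (Fpos_mble hmeas n)]
  calc ∑' n : ℕ, P (Gset X z n)
      = ∑' n : ℕ, (P (Eneg X z n) + P (Fpos X n)) := tsum_congr h1
    _ = (∑' n : ℕ, P (Eneg X z n)) + ∑' n : ℕ, P (Fpos X n) := ENNReal.tsum_add
    _ = (∑' n : ℕ, P (Eneg X z n)) + ∑' n : ℕ, P (Tset X n) := by
        congr 1
        exact tsum_congr fun n => Fpos_eq_Tset P hmeas hindep hident n
    _ = (∑' n : ℕ, P (Eneg X z n)) + 1 := by rw [tsum_Tset P hmeas hlimsup]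
    _ = VminusBar P X z := by rw [V_expansion P X hz, add_comm]

end VG


section Fubini

variable (P : Measure Ω) [IsProbabilityMeasure P] {X : ℕ → Ω → ℝ}

/-- `Cset` written on increment vectors. -/
def Bset (n : ℕ) (y : ℝ) : Set (Fin n → ℝ) :=
  {v | (∀ j, j < n → pS v n ≤ pS v j) ∧ -pS v n < y}

lemma Bset_mble (n : ℕ) (y : ℝ) : MeasurableSet (Bset n y) := by
  have h : Bset n y = (⋂ j, ⋂ _h : j < n, {v : Fin n → ℝ | pS v n ≤ pS v j}) ∩
      {v | -pS v n < y} := by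
    ext v; simp [Bset]
  rw [h]
  exact (MeasurableSet.iInter fun j => MeasurableSet.iInter fun _ =>
      measurableSet_le (pS_meas _ _) (pS_meas _ _)).inter
    (measurableSet_lt (pS_meas _ _).neg measurable_const)

lemma Cset_preimage (X : ℕ → Ω → ℝ) (n : ℕ) (y : ℝ) :
    Cset X y n = (fun ω (i : Fin n) => X (i : ℕ) ω) ⁻¹' Bset n y := by
  ext ω
  have hk : ∀ k, k ≤ n → pS (fun i : Fin n => X (i : ℕ) ω) k = rwS X k ω :=
    fun k hk => pS_apply (fun j => X j ω) hk
  simp only [Cset, Set.mem_setOf_eq, Set.mem_preimage, Bset]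
  constructor
  · rintro ⟨a, b⟩
    refine ⟨fun j hj => ?_, ?_⟩
    · rw [hk n le_rfl, hk j (le_of_lt hj)]; exact a j hj
    · rw [hk n le_rfl]; exact b
  · rintro ⟨a, b⟩
    refine ⟨fun j hj => ?_, ?_⟩
    · have := a j hj; rwa [hk n le_rfl, hk j (le_of_lt hj)] at this
    · have := b; rwa [hk n le_rfl] at this

lemma qn_eq (hmeas : ∀ i, Measurable (X i))
    (hindep : iIndepFun X P)
    (hident : ∀ i, IdentDistrib (X i) (X 0) P P) (n : ℕ) (y : ℝ) :
    P (Cset X y n) = Measure.pi (fun _ : Fin n => P.map (X 0)) (Bset n y) := by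
  rw [Cset_preimage X n y,
    ← Measure.map_apply (measurable_pi_lambda _ fun i => hmeas _) (Bset_mble n y),
    lawVec P X hmeas hindep hident n (fun i => (i : ℕ)) (fun i j h => Fin.ext h)]

lemma lawPairAux (hmeas : ∀ i, Measurable (X i))
    (hindep : iIndepFun X P)
    (hident : ∀ i, IdentDistrib (X i) (X 0) P P)
    (m : ℕ) (i0 : Fin (m+1)) (g : Fin (m+1) → ℕ) (hg : Function.Injective g) :
    P.map (fun ω => (X (g i0) ω, fun j : Fin m => X (g (i0.succAbove j)) ω))
      = (P.map (X 0)).prod (Measure.pi fun _ : Fin m => P.map (X 0)) := by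
  haveI : IsProbabilityMeasure (P.map (X 0)) :=
    Measure.isProbabilityMeasure_map (hmeas 0).aemeasurable
  have h1 : MeasurePreserving (fun ω (i : Fin (m+1)) => X (g i) ω) P
      (Measure.pi fun _ : Fin (m+1) => P.map (X 0)) :=
    ⟨measurable_pi_lambda _ fun i => hmeas _, lawVec P X hmeas hindep hident (m+1) g hg⟩
  have h2 := measurePreserving_piFinSuccAbove (fun _ : Fin (m+1) => P.map (X 0)) i0
  have h3 := h2.comp h1
  have heq : (⇑(MeasurableEquiv.piFinSuccAbove (fun _ : Fin (m+1) => ℝ) i0)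
      ∘ fun ω (i : Fin (m+1)) => X (g i) ω)
      = fun ω => (X (g i0) ω, fun j : Fin m => X (g (i0.succAbove j)) ω) := by
    funext ω
    simp only [Function.comp_apply, MeasurableEquiv.piFinSuccAbove,
      MeasurableEquiv.coe_mk, Equiv.coe_fn_mk]
    rfl
  rw [← heq]
  exact h3.map_eq

lemma lawPairZero (hmeas : ∀ i, Measurable (X i))
    (hindep : iIndepFun X P)
    (hident : ∀ i, IdentDistrib (X i) (X 0) P P) (n : ℕ) :
    P.map (fun ω => (X 0 ω, fun i : Fin n => X ((i : ℕ)+1) ω))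
      = (P.map (X 0)).prod (Measure.pi fun _ : Fin n => P.map (X 0)) := by
  have h := lawPairAux P hmeas hindep hident n 0 (fun i => (i : ℕ))
    (fun i j h => Fin.ext h)
  have heq : (fun ω => (X ((0 : Fin (n+1)) : ℕ) ω,
      fun j : Fin n => X (((0 : Fin (n+1)).succAbove j : Fin (n+1)) : ℕ) ω))
      = fun ω => (X 0 ω, fun i : Fin n => X ((i : ℕ)+1) ω) := by
    funext ω
    simp [Fin.succAbove_zero, Fin.val_succ]
  rwa [heq] at h

lemma lawPairLast (hmeas : ∀ i, Measurable (X i))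
    (hindep : iIndepFun X P)
    (hident : ∀ i, IdentDistrib (X i) (X 0) P P) (N : ℕ) :
    P.map (fun ω => (X N ω, fun i : Fin N => X (i : ℕ) ω))
      = (P.map (X 0)).prod (Measure.pi fun _ : Fin N => P.map (X 0)) := by
  have h := lawPairAux P hmeas hindep hident N (Fin.last N) (fun i => (i : ℕ))
    (fun i j h => Fin.ext h)
  have heq : (fun ω => (X ((Fin.last N : Fin (N+1)) : ℕ) ω,
      fun j : Fin N => X (((Fin.last N).succAbove j : Fin (N+1)) : ℕ) ω))
      = fun ω => (X N ω, fun i : Fin N => X (i : ℕ) ω) := by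
    funext ω
    simp [Fin.succAbove_last, Fin.val_last]
  rwa [heq] at h

/-- The joint set describing `Gset` on `(first increment, next n increments)`. -/
def Dset (n : ℕ) (z : ℝ) : Set (ℝ × (Fin n → ℝ)) :=
  {p | 0 < p.1 + z ∧ (∀ j, j < n → pS p.2 n ≤ pS p.2 j) ∧ -pS p.2 n < p.1 + z}

lemma Dset_mble (n : ℕ) (z : ℝ) : MeasurableSet (Dset n z) := by
  have h : Dset n z = {p : ℝ × (Fin n → ℝ) | 0 < p.1 + z} ∩
      ((⋂ j, ⋂ _h : j < n, {p : ℝ × (Fin n → ℝ) | pS p.2 n ≤ pS p.2 j}) ∩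
        {p : ℝ × (Fin n → ℝ) | -pS p.2 n < p.1 + z}) := by
    ext p; simp [Dset]
  rw [h]
  have hp1 : Measurable fun p : ℝ × (Fin n → ℝ) => p.1 + z :=
    measurable_fst.add_const z
  have hps : ∀ k, Measurable fun p : ℝ × (Fin n → ℝ) => pS p.2 k :=
    fun k => (pS_meas n k).comp measurable_snd
  exact (measurableSet_lt measurable_const hp1).inter
    ((MeasurableSet.iInter fun j => MeasurableSet.iInter fun _ =>
        measurableSet_le (hps n) (hps j)).inter
      (measurableSet_lt (hps n).neg hp1))

lemma Gset_preimage (X : ℕ → Ω → ℝ) (n : ℕ) (z : ℝ) :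
    Gset X z n = (fun ω => (X 0 ω, fun i : Fin n => X ((i : ℕ)+1) ω)) ⁻¹' Dset n z := by
  ext ω
  have hk : ∀ k, k ≤ n → pS (fun i : Fin n => X ((i : ℕ)+1) ω) k
      = rwS X (k+1) ω - rwS X 1 ω := by
    intro k hk
    rw [pS_apply (fun j => X (j+1) ω) hk]
    exact sum_shift X k ω
  simp only [Gset, Set.mem_setOf_eq, Set.mem_preimage, Dset]
  have hS1 : rwS X 1 ω = X 0 ω := rwS_one X ω
  constructor
  · rintro ⟨h0, h1, h2⟩
    refine ⟨by linarith, fun j hj => ?_, ?_⟩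
    · rw [hk n le_rfl, hk j (le_of_lt hj)]
      have := h1 j hj
      linarith
    · rw [hk n le_rfl]
      linarith
  · rintro ⟨h0, h1, h2⟩
    refine ⟨by linarith, fun j hj => ?_, ?_⟩
    · have := h1 j hj
      rw [hk n le_rfl, hk j (le_of_lt hj)] at this
      linarith
    · rw [hk n le_rfl] at h2
      linarith

lemma oneStep_G (hmeas : ∀ i, Measurable (X i))
    (hindep : iIndepFun X P)
    (hident : ∀ i, IdentDistrib (X i) (X 0) P P)
    {z : ℝ} (n : ℕ) :
    ∫⁻ ω in {ω | 0 < rwS X 1 ω + z}, P (Cset X (rwS X 1 ω + z) n) ∂P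
      = P (Gset X z n) := by
  haveI : IsProbabilityMeasure (P.map (X 0)) :=
    Measure.isProbabilityMeasure_map (hmeas 0).aemeasurable
  set μ := P.map (X 0) with hμdef
  set ν := Measure.pi (fun _ : Fin n => μ) with hνdef
  have hq : Measurable (fun y => P (Cset X y n)) := qn_meas P X n
  have hU : MeasurableSet {ω : Ω | 0 < rwS X 1 ω + z} :=
    measurableSet_lt measurable_const ((rwS_meas X hmeas 1).add_const z)
  have hg : Measurable (fun t : ℝ =>
      Set.indicator {t : ℝ | 0 < t + z} (fun t => P (Cset X (t + z) n)) t) :=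
    (hq.comp (measurable_add_const z)).indicator
      (measurableSet_lt measurable_const (measurable_add_const z))
  have step2 : ∀ ω, Set.indicator {ω : Ω | 0 < rwS X 1 ω + z}
      (fun ω => P (Cset X (rwS X 1 ω + z) n)) ω
      = Set.indicator {t : ℝ | 0 < t + z} (fun t => P (Cset X (t + z) n)) (X 0 ω) := by
    intro ω
    by_cases h : 0 < X 0 ω + z
    · rw [Set.indicator_of_mem (show ω ∈ {ω : Ω | 0 < rwS X 1 ω + z} by
          simpa [rwS_one] using h),
        Set.indicator_of_mem (show X 0 ω ∈ {t : ℝ | 0 < t + z} from h), rwS_one]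
    · rw [Set.indicator_of_notMem (show ω ∉ {ω : Ω | 0 < rwS X 1 ω + z} by
          simpa [rwS_one] using h),
        Set.indicator_of_notMem (show X 0 ω ∉ {t : ℝ | 0 < t + z} from h)]
  have step4 : ∀ t : ℝ, ν {w | (t, w) ∈ Dset n z}
      = Set.indicator {t : ℝ | 0 < t + z} (fun t => P (Cset X (t + z) n)) t := by
    intro t
    by_cases h : 0 < t + z
    · have hset : {w | (t, w) ∈ Dset n z} = Bset n (t + z) := by
        ext w; simp [Dset, Bset, h]
      rw [hset, Set.indicator_of_mem (show t ∈ {t : ℝ | 0 < t + z} from h)]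
      exact (qn_eq P hmeas hindep hident n (t + z)).symm
    · have hset : {w | (t, w) ∈ Dset n z} = (∅ : Set (Fin n → ℝ)) := by
        ext w; simp [Dset, h]
      rw [hset, Set.indicator_of_notMem (show t ∉ {t : ℝ | 0 < t + z} from h)]
      simp
  have hPairM : Measurable (fun ω => (X 0 ω, fun i : Fin n => X ((i : ℕ)+1) ω)) :=
    (hmeas 0).prodMk (measurable_pi_lambda _ fun i => hmeas _)
  calc ∫⁻ ω in {ω | 0 < rwS X 1 ω + z}, P (Cset X (rwS X 1 ω + z) n) ∂P
      = ∫⁻ ω, Set.indicator {ω : Ω | 0 < rwS X 1 ω + z}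
          (fun ω => P (Cset X (rwS X 1 ω + z) n)) ω ∂P :=
        (lintegral_indicator hU _).symm
    _ = ∫⁻ ω, Set.indicator {t : ℝ | 0 < t + z}
          (fun t => P (Cset X (t + z) n)) (X 0 ω) ∂P := lintegral_congr step2
    _ = ∫⁻ t, Set.indicator {t : ℝ | 0 < t + z}
          (fun t => P (Cset X (t + z) n)) t ∂μ := (lintegral_map hg (hmeas 0)).symm
    _ = ∫⁻ t, ν {w | (t, w) ∈ Dset n z} ∂μ := (lintegral_congr step4).symm
    _ = (μ.prod ν) (Dset n z) := (Measure.prod_apply (Dset_mble n z)).symm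
    _ = P (Gset X z n) := by
        rw [← lawPairZero P hmeas hindep hident n,
          Measure.map_apply hPairM (Dset_mble n z), ← Gset_preimage X n z]

lemma oneStep (hmeas : ∀ i, Measurable (X i))
    (hindep : iIndepFun X P)
    (hident : ∀ i, IdentDistrib (X i) (X 0) P P)
    (hlimsup : ∀ᵐ ω ∂P, ∀ M : ℝ, ∃ᶠ n in atTop, M < rwS X n ω)
    {z : ℝ} (hz : 0 ≤ z) :
    VminusBar P X z
      = ∫⁻ ω in {ω | 0 < rwS X 1 ω + z}, VminusBar P X (rwS X 1 ω + z) ∂P := by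
  have hU : MeasurableSet {ω : Ω | 0 < rwS X 1 ω + z} :=
    measurableSet_lt measurable_const ((rwS_meas X hmeas 1).add_const z)
  calc VminusBar P X z
      = ∑' n : ℕ, P (Gset X z n) := (tsum_Gset P hmeas hindep hident hlimsup hz).symm
    _ = ∑' n : ℕ, ∫⁻ ω in {ω | 0 < rwS X 1 ω + z}, P (Cset X (rwS X 1 ω + z) n) ∂P :=
        tsum_congr fun n => (oneStep_G P hmeas hindep hident n).symm
    _ = ∫⁻ ω in {ω | 0 < rwS X 1 ω + z}, ∑' n : ℕ, P (Cset X (rwS X 1 ω + z) n) ∂P :=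
        (lintegral_tsum fun n =>
          ((qn_meas P X n).comp ((rwS_meas X hmeas 1).add_const z)).aemeasurable).symm
    _ = ∫⁻ ω in {ω | 0 < rwS X 1 ω + z}, VminusBar P X (rwS X 1 ω + z) ∂P := by
        refine setLIntegral_congr_fun_ae hU (ae_of_all _ fun ω hω => ?_)
        rw [VB_def, if_neg]
        · rfl
        · exact ne_of_gt hω

end Fubini


section Induction

variable (P : Measure Ω) [IsProbabilityMeasure P] {X : ℕ → Ω → ℝ}

lemma oneStep_mu (hmeas : ∀ i, Measurable (X i))
    (hindep : iIndepFun X P)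
    (hident : ∀ i, IdentDistrib (X i) (X 0) P P)
    (hlimsup : ∀ᵐ ω ∂P, ∀ M : ℝ, ∃ᶠ n in atTop, M < rwS X n ω)
    {z : ℝ} (hz : 0 ≤ z) :
    VminusBar P X z
      = ∫⁻ t, Set.indicator {t : ℝ | 0 < t + z}
          (fun t => VminusBar P X (t + z)) t ∂(P.map (X 0)) := by
  have hU : MeasurableSet {ω : Ω | 0 < rwS X 1 ω + z} :=
    measurableSet_lt measurable_const ((rwS_meas X hmeas 1).add_const z)
  have hg : Measurable (fun t : ℝ =>
      Set.indicator {t : ℝ | 0 < t + z} (fun t => VminusBar P X (t + z)) t) :=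
    ((VB_meas P X).comp (measurable_add_const z)).indicator
      (measurableSet_lt measurable_const (measurable_add_const z))
  have step2 : ∀ ω, Set.indicator {ω : Ω | 0 < rwS X 1 ω + z}
      (fun ω => VminusBar P X (rwS X 1 ω + z)) ω
      = Set.indicator {t : ℝ | 0 < t + z} (fun t => VminusBar P X (t + z)) (X 0 ω) := by
    intro ω
    by_cases h : 0 < X 0 ω + z
    · rw [Set.indicator_of_mem (show ω ∈ {ω : Ω | 0 < rwS X 1 ω + z} by
          simpa [rwS_one] using h),
        Set.indicator_of_mem (show X 0 ω ∈ {t : ℝ | 0 < t + z} from h), rwS_one]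
    · rw [Set.indicator_of_notMem (show ω ∉ {ω : Ω | 0 < rwS X 1 ω + z} by
          simpa [rwS_one] using h),
        Set.indicator_of_notMem (show X 0 ω ∉ {t : ℝ | 0 < t + z} from h)]
  calc VminusBar P X z
      = ∫⁻ ω in {ω | 0 < rwS X 1 ω + z}, VminusBar P X (rwS X 1 ω + z) ∂P :=
        oneStep P hmeas hindep hident hlimsup hz
    _ = ∫⁻ ω, Set.indicator {ω : Ω | 0 < rwS X 1 ω + z}
          (fun ω => VminusBar P X (rwS X 1 ω + z)) ω ∂P :=
        (lintegral_indicator hU _).symm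
    _ = ∫⁻ ω, Set.indicator {t : ℝ | 0 < t + z}
          (fun t => VminusBar P X (t + z)) (X 0 ω) ∂P := lintegral_congr step2
    _ = ∫⁻ t, Set.indicator {t : ℝ | 0 < t + z}
          (fun t => VminusBar P X (t + z)) t ∂(P.map (X 0)) :=
        (lintegral_map hg (hmeas 0)).symm

lemma pS_zero {n : ℕ} (w : Fin n → ℝ) : pS w 0 = 0 := by simp [pS]

lemma Aset_mble (hmeas : ∀ i, Measurable (X i)) (x : ℝ) (N : ℕ) :
    MeasurableSet {ω : Ω | ∀ m, 1 ≤ m → m ≤ N → 0 < rwS X m ω + x} := by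
  have h : {ω : Ω | ∀ m, 1 ≤ m → m ≤ N → 0 < rwS X m ω + x}
      = ⋂ m, ⋂ _h1 : 1 ≤ m, ⋂ _h2 : m ≤ N, {ω : Ω | 0 < rwS X m ω + x} := by
    ext ω; simp
  rw [h]
  exact MeasurableSet.iInter fun m => MeasurableSet.iInter fun _ =>
    MeasurableSet.iInter fun _ =>
      measurableSet_lt measurable_const ((rwS_meas X hmeas m).add_const x)

lemma Apr_mble (x : ℝ) (N : ℕ) :
    MeasurableSet {w : Fin N → ℝ | ∀ m, 1 ≤ m → m ≤ N → 0 < pS w m + x} := by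
  have h : {w : Fin N → ℝ | ∀ m, 1 ≤ m → m ≤ N → 0 < pS w m + x}
      = ⋂ m, ⋂ _h1 : 1 ≤ m, ⋂ _h2 : m ≤ N, {w : Fin N → ℝ | 0 < pS w m + x} := by
    ext w; simp
  rw [h]
  exact MeasurableSet.iInter fun m => MeasurableSet.iInter fun _ =>
    MeasurableSet.iInter fun _ =>
      measurableSet_lt measurable_const ((pS_meas N m).add_const x)

lemma stepN (hmeas : ∀ i, Measurable (X i))
    (hindep : iIndepFun X P)
    (hident : ∀ i, IdentDistrib (X i) (X 0) P P)
    (hlimsup : ∀ᵐ ω ∂P, ∀ M : ℝ, ∃ᶠ n in atTop, M < rwS X n ω)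
    {x : ℝ} (hx : 0 ≤ x) (N : ℕ)
    (IH : VminusBar P X x
      = ∫⁻ ω in {ω | ∀ m, 1 ≤ m → m ≤ N → 0 < rwS X m ω + x},
          VminusBar P X (rwS X N ω + x) ∂P) :
    VminusBar P X x
      = ∫⁻ ω in {ω | ∀ m, 1 ≤ m → m ≤ N + 1 → 0 < rwS X m ω + x},
          VminusBar P X (rwS X (N + 1) ω + x) ∂P := by
  haveI : IsProbabilityMeasure (P.map (X 0)) :=
    Measure.isProbabilityMeasure_map (hmeas 0).aemeasurable
  set μ := P.map (X 0) with hμdef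
  set ν := Measure.pi (fun _ : Fin N => μ) with hνdef
  set Apr : Set (Fin N → ℝ) := {w | ∀ m, 1 ≤ m → m ≤ N → 0 < pS w m + x} with hAprdef
  have hApr : MeasurableSet Apr := Apr_mble x N
  set E : Set (ℝ × (Fin N → ℝ)) := {p | p.2 ∈ Apr ∧ 0 < pS p.2 N + x + p.1} with hEdef
  have hpsum : Measurable fun p : ℝ × (Fin N → ℝ) => pS p.2 N + x + p.1 :=
    (((pS_meas N N).comp measurable_snd).add_const x).add measurable_fst
  have hE : MeasurableSet E := by
    refine MeasurableSet.inter ?_ ?_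
    · exact measurable_snd hApr
    · exact measurableSet_lt measurable_const hpsum
  have hH : Measurable (fun p : ℝ × (Fin N → ℝ) =>
      Set.indicator E (fun p => VminusBar P X (pS p.2 N + x + p.1)) p) :=
    ((VB_meas P X).comp hpsum).indicator hE
  have hPairM : Measurable (fun ω => (X N ω, fun i : Fin N => X (i : ℕ) ω)) :=
    (hmeas N).prodMk (measurable_pi_lambda _ fun i => hmeas _)
  have hvecM : Measurable (fun ω (i : Fin N) => X (i : ℕ) ω) :=
    measurable_pi_lambda _ fun i => hmeas _
  have hAset : MeasurableSet {ω : Ω | ∀ m, 1 ≤ m → m ≤ N + 1 → 0 < rwS X m ω + x} :=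
    Aset_mble hmeas x (N + 1)
  have hAsetN : MeasurableSet {ω : Ω | ∀ m, 1 ≤ m → m ≤ N → 0 < rwS X m ω + x} :=
    Aset_mble hmeas x N
  -- pointwise identification of the integrand with `Hfun ∘ Pair`
  have hpSvec : ∀ ω, ∀ k, k ≤ N → pS (fun i : Fin N => X (i : ℕ) ω) k = rwS X k ω :=
    fun ω k hk => pS_apply (fun j => X j ω) hk
  have key1 : ∀ ω, Set.indicator {ω : Ω | ∀ m, 1 ≤ m → m ≤ N + 1 → 0 < rwS X m ω + x}
      (fun ω => VminusBar P X (rwS X (N + 1) ω + x)) ω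
      = Set.indicator E (fun p => VminusBar P X (pS p.2 N + x + p.1))
          (X N ω, fun i : Fin N => X (i : ℕ) ω) := by
    intro ω
    have hsum : pS (fun i : Fin N => X (i : ℕ) ω) N + x + X N ω
        = rwS X (N + 1) ω + x := by
      rw [hpSvec ω N le_rfl, rwS_succ]
      ring
    have hmem : ω ∈ {ω : Ω | ∀ m, 1 ≤ m → m ≤ N + 1 → 0 < rwS X m ω + x}
        ↔ (X N ω, fun i : Fin N => X (i : ℕ) ω) ∈ E := by
      constructor
      · intro h
        refine ⟨fun m h1 h2 => ?_, ?_⟩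
        · rw [hpSvec ω m h2]
          exact h m h1 (by omega)
        · rw [hsum]
          exact h (N + 1) (by omega) le_rfl
      · rintro ⟨h1, h2⟩
        intro m hm1 hm2
        rcases Nat.lt_or_ge m (N + 1) with hlt | hge
        · have := h1 m hm1 (by omega)
          rwa [hpSvec ω m (by omega)] at this
        · have hmN : m = N + 1 := by omega
          subst hmN
          rwa [hsum] at h2
    by_cases h : ω ∈ {ω : Ω | ∀ m, 1 ≤ m → m ≤ N + 1 → 0 < rwS X m ω + x}
    · rw [Set.indicator_of_mem h, Set.indicator_of_mem (hmem.mp h)]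
      rw [hsum]
    · rw [Set.indicator_of_notMem h,
        Set.indicator_of_notMem (fun hc => h (hmem.mpr hc))]
  -- the inner integral
  have keyw : ∀ w : Fin N → ℝ,
      ∫⁻ t, Set.indicator E (fun p => VminusBar P X (pS p.2 N + x + p.1)) (t, w) ∂μ
      = Set.indicator Apr (fun w => VminusBar P X (pS w N + x)) w := by
    intro w
    by_cases hw : w ∈ Apr
    · have hz0 : 0 ≤ pS w N + x := by
        rcases Nat.eq_zero_or_pos N with hN | hN
        · subst hN
          rw [pS_zero]
          simpa using hx
        · exact le_of_lt (hw N hN le_rfl)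
      have hpt : ∀ t : ℝ, Set.indicator E
          (fun p => VminusBar P X (pS p.2 N + x + p.1)) (t, w)
          = Set.indicator {t : ℝ | 0 < t + (pS w N + x)}
              (fun t => VminusBar P X (t + (pS w N + x))) t := by
        intro t
        by_cases ht : 0 < pS w N + x + t
        · rw [Set.indicator_of_mem (show (t, w) ∈ E from ⟨hw, ht⟩),
            Set.indicator_of_mem (show t ∈ {t : ℝ | 0 < t + (pS w N + x)} by
              simp only [Set.mem_setOf_eq]; linarith)]
          congr 1
          ring
        · rw [Set.indicator_of_notMem (show (t, w) ∉ E from fun hc => ht hc.2),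
            Set.indicator_of_notMem (show t ∉ {t : ℝ | 0 < t + (pS w N + x)} by
              simp only [Set.mem_setOf_eq]; intro hc; exact ht (by linarith))]
      rw [lintegral_congr hpt, Set.indicator_of_mem hw]
      exact (oneStep_mu P hmeas hindep hident hlimsup hz0).symm
    · have hpt : ∀ t : ℝ, Set.indicator E
          (fun p => VminusBar P X (pS p.2 N + x + p.1)) (t, w) = 0 := by
        intro t
        exact Set.indicator_of_notMem (fun hc => hw hc.1) _
      rw [lintegral_congr hpt, Set.indicator_of_notMem hw]
      simp
  -- the outer integrand is measurable
  have hG : Measurable (fun w : Fin N → ℝ =>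
      Set.indicator Apr (fun w => VminusBar P X (pS w N + x)) w) :=
    ((VB_meas P X).comp ((pS_meas N N).add_const x)).indicator hApr
  have key2 : ∀ ω, Set.indicator Apr (fun w => VminusBar P X (pS w N + x))
      (fun i : Fin N => X (i : ℕ) ω)
      = Set.indicator {ω : Ω | ∀ m, 1 ≤ m → m ≤ N → 0 < rwS X m ω + x}
          (fun ω => VminusBar P X (rwS X N ω + x)) ω := by
    intro ω
    have hmem : (fun i : Fin N => X (i : ℕ) ω) ∈ Apr
        ↔ ω ∈ {ω : Ω | ∀ m, 1 ≤ m → m ≤ N → 0 < rwS X m ω + x} := by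
      constructor
      · intro h m h1 h2
        have := h m h1 h2
        rwa [hpSvec ω m h2] at this
      · intro h m h1 h2
        rw [hpSvec ω m h2]
        exact h m h1 h2
    by_cases h : (fun i : Fin N => X (i : ℕ) ω) ∈ Apr
    · rw [Set.indicator_of_mem h, Set.indicator_of_mem (hmem.mp h),
        hpSvec ω N le_rfl]
    · rw [Set.indicator_of_notMem h,
        Set.indicator_of_notMem (fun hc => h (hmem.mpr hc))]
  calc VminusBar P X x
      = ∫⁻ ω in {ω | ∀ m, 1 ≤ m → m ≤ N → 0 < rwS X m ω + x},
          VminusBar P X (rwS X N ω + x) ∂P := IH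
    _ = ∫⁻ ω, Set.indicator {ω : Ω | ∀ m, 1 ≤ m → m ≤ N → 0 < rwS X m ω + x}
          (fun ω => VminusBar P X (rwS X N ω + x)) ω ∂P :=
        (lintegral_indicator hAsetN _).symm
    _ = ∫⁻ ω, Set.indicator Apr (fun w => VminusBar P X (pS w N + x))
          (fun i : Fin N => X (i : ℕ) ω) ∂P := (lintegral_congr key2).symm
    _ = ∫⁻ w, Set.indicator Apr (fun w => VminusBar P X (pS w N + x)) w ∂ν := by
        rw [hνdef, ← lawVec P X hmeas hindep hident N (fun i => (i : ℕ))
          (fun i j h => Fin.ext h), lintegral_map hG hvecM]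
    _ = ∫⁻ w, ∫⁻ t, Set.indicator E
          (fun p => VminusBar P X (pS p.2 N + x + p.1)) (t, w) ∂μ ∂ν :=
        (lintegral_congr keyw).symm
    _ = ∫⁻ p, Set.indicator E (fun p => VminusBar P X (pS p.2 N + x + p.1)) p
          ∂(μ.prod ν) := (lintegral_prod_symm _ hH.aemeasurable).symm
    _ = ∫⁻ ω, Set.indicator E (fun p => VminusBar P X (pS p.2 N + x + p.1))
          (X N ω, fun i : Fin N => X (i : ℕ) ω) ∂P := by
        rw [← lawPairLast P hmeas hindep hident N, lintegral_map hH hPairM]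
    _ = ∫⁻ ω, Set.indicator {ω : Ω | ∀ m, 1 ≤ m → m ≤ N + 1 → 0 < rwS X m ω + x}
          (fun ω => VminusBar P X (rwS X (N + 1) ω + x)) ω ∂P :=
        (lintegral_congr key1).symm
    _ = ∫⁻ ω in {ω | ∀ m, 1 ≤ m → m ≤ N + 1 → 0 < rwS X m ω + x},
          VminusBar P X (rwS X (N + 1) ω + x) ∂P :=
        lintegral_indicator hAset _

end Induction

end Stmt8Aux

/-- if the walk does not drift to `-∞`, then `V̲⁻` is invariant for the walk
killed on entering `(-∞,0]`: `V̲⁻(x) = E_x[V̲⁻(S_N) 1{S₁ > 0, …, S_N > 0}]`. -/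
theorem stmt8 {Ω : Type*} [MeasurableSpace Ω] (P : Measure Ω) [IsProbabilityMeasure P]
    (X : ℕ → Ω → ℝ) (hmeas : ∀ i, Measurable (X i))
    (hindep : iIndepFun X P)
    (hident : ∀ i, IdentDistrib (X i) (X 0) P P)
    (hlimsup : ∀ᵐ ω ∂P, ∀ M : ℝ, ∃ᶠ n in atTop, M < rwS X n ω) :
    ∀ x : ℝ, 0 ≤ x → ∀ N : ℕ, 1 ≤ N →
      VminusBar P X x
        = ∫⁻ ω in {ω | ∀ m, 1 ≤ m → m ≤ N → 0 < rwS X m ω + x},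
            VminusBar P X (rwS X N ω + x) ∂P := by
  intro x hx N hN
  have key : ∀ K : ℕ, VminusBar P X x
      = ∫⁻ ω in {ω | ∀ m, 1 ≤ m → m ≤ K + 1 → 0 < rwS X m ω + x},
          VminusBar P X (rwS X (K + 1) ω + x) ∂P := by
    intro K
    induction K with
    | zero =>
      have hset : {ω : Ω | ∀ m, 1 ≤ m → m ≤ 0 + 1 → 0 < rwS X m ω + x}
          = {ω : Ω | 0 < rwS X 1 ω + x} := by
        ext ω
        constructor
        · intro h; exact h 1 le_rfl le_rfl
        · intro h m h1 h2
          have hm : m = 1 := by omega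
          subst hm; exact h
      rw [hset]
      exact Stmt8Aux.oneStep P hmeas hindep hident hlimsup hx
    | succ K ih =>
      exact Stmt8Aux.stepN P hmeas hindep hident hlimsup hx (K + 1) ih
  obtain ⟨K, rfl⟩ : ∃ K, N = K + 1 := ⟨N - 1, by omega⟩
  exact key K
end

section
/- Let (S_n) be a random walk not drifting to −∞, with weak descending ladder heights H_k^- and associated renewal function V̲^-(x) = Σ_{k≥0} P(H_k^- < x) (for x > 0, with V̲^-(0)=1). Then E[ V̲^-(S_1) 1{S_1 > 0} ] = 1. -/
open MeasureTheory ProbabilityTheory Filter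
open scoped ENNReal

/-- extension of a finite vector by zero -/
noncomputable def vext {m : ℕ} (v : Fin m → ℝ) (i : ℕ) : ℝ :=
  if h : i < m then v ⟨i, h⟩ else 0

/-- partial sums of a finite vector -/
noncomputable def psum {m : ℕ} (v : Fin m → ℝ) (k : ℕ) : ℝ :=
  ∑ i ∈ Finset.range k, vext v i

lemma psum_zero {m : ℕ} (v : Fin m → ℝ) : psum v 0 = 0 := by simp [psum]

lemma measurable_psum (m k : ℕ) : Measurable (fun v : Fin m → ℝ => psum v k) := by
  apply Finset.measurable_sum
  intro i _
  unfold vext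
  split_ifs
  · exact measurable_pi_apply _
  · exact measurable_const

lemma vext_cons {n : ℕ} (a : ℝ) (w : Fin n → ℝ) (i : ℕ) :
    vext (Fin.cons a w : Fin (n+1) → ℝ) (i+1) = vext w i := by
  by_cases h : i < n
  · rw [vext, dif_pos (Nat.succ_lt_succ h), vext, dif_pos h]
    exact Fin.cons_succ (α := fun _ => ℝ) a w ⟨i, h⟩
  · rw [vext, dif_neg (by omega), vext, dif_neg h]

lemma psum_cons {n : ℕ} (a : ℝ) (w : Fin n → ℝ) (j : ℕ) :
    psum (Fin.cons a w : Fin (n+1) → ℝ) (j+1) = a + psum w j := by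
  rw [psum, Finset.sum_range_succ']
  simp only [vext_cons]
  rw [add_comm, psum]
  congr 1

lemma psum_one {n : ℕ} (a : ℝ) (w : Fin n → ℝ) :
    psum (Fin.cons a w : Fin (n+1) → ℝ) 1 = a := by
  have := psum_cons a w 0
  simpa [psum_zero] using this

lemma psum_X {Ω : Type*} (X : ℕ → Ω → ℝ) (ω : Ω) (m k : ℕ) (hk : k ≤ m) :
    psum (fun i : Fin m => X i ω) k = rwS X k ω := by
  refine Finset.sum_congr rfl fun i hi => ?_
  have hi' : i < m := lt_of_lt_of_le (Finset.mem_range.mp hi) hk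
  rw [vext, dif_pos hi']

lemma psum_rev {m : ℕ} (v : Fin m → ℝ) :
    ∀ j, j ≤ m → psum (fun i => v (Fin.rev i)) j = psum v m - psum v (m - j) := by
  intro j
  induction j with
  | zero => intro _; simp [psum_zero]
  | succ j ih =>
    intro hj
    have hj' : j ≤ m := Nat.le_of_succ_le hj
    have hjm : j < m := hj
    rw [psum, Finset.sum_range_succ, ← psum, ih hj']
    have h1 : vext (fun i => v (Fin.rev i)) j = vext v (m - 1 - j) := by
      rw [vext, dif_pos hjm, vext, dif_pos (by omega : m - 1 - j < m)]
      congr 1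
      ext
      simp [Fin.rev]
      omega
    have h2 : psum v (m - j) = psum v (m - (j+1)) + vext v (m - 1 - j) := by
      have : m - j = (m - (j+1)) + 1 := by omega
      rw [this, psum, Finset.sum_range_succ, ← psum]
      congr 2
      omega
    rw [h1, h2]
    ring

section laws
set_option linter.unusedSectionVars false
variable {Ω : Type*} [MeasurableSpace Ω] (P : Measure Ω) [IsProbabilityMeasure P]
  (X : ℕ → Ω → ℝ)

lemma hInterX (hmeas : ∀ i, Measurable (X i))
    (hindep : iIndepFun X P)
    (hident : ∀ i, IdentDistrib (X i) (X 0) P P)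
    (m : ℕ) (s : Fin m → Set ℝ) (hs : ∀ i, MeasurableSet (s i)) :
    P (⋂ i : Fin m, X i.val ⁻¹' s i) = ∏ i, P.map (X 0) (s i) := by
  classical
  set t : ℕ → Set ℝ := fun i => if h : i < m then s ⟨i, h⟩ else Set.univ with ht
  have h1 : (⋂ i : Fin m, X i.val ⁻¹' s i) = ⋂ i ∈ Finset.range m, X i ⁻¹' t i := by
    ext ω
    simp only [Set.mem_iInter, Set.mem_preimage, Finset.mem_range]
    constructor
    · intro h i hi
      rw [ht]; simp only [dif_pos hi]
      exact h ⟨i, hi⟩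
    · intro h i
      have := h i.val i.isLt
      rw [ht] at this; simp only [dif_pos i.isLt, Fin.eta] at this
      exact this
  have h2 : P (⋂ i ∈ Finset.range m, X i ⁻¹' t i) = ∏ i ∈ Finset.range m, P (X i ⁻¹' t i) := by
    refine hindep.measure_inter_preimage_eq_mul (Finset.range m) (fun i hi => ?_)
    rw [ht]
    by_cases h : i < m
    · simp only [dif_pos h]; exact hs _
    · simp only [dif_neg h]; exact MeasurableSet.univ
  have h3 : ∏ i : Fin m, P (X i.val ⁻¹' t i.val) = ∏ i ∈ Finset.range m, P (X i ⁻¹' t i) :=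
    Fin.prod_univ_eq_prod_range (fun k => P (X k ⁻¹' t k)) m
  rw [h1, h2, ← h3]
  refine Finset.prod_congr rfl fun i _ => ?_
  have htv : t i.val = s i := by rw [ht]; simp only [dif_pos i.isLt, Fin.eta]
  rw [htv, Measure.map_apply (hmeas 0) (hs i), ← (hident i.val).measure_mem_eq (hs i)]

lemma law_piX (hmeas : ∀ i, Measurable (X i))
    (hindep : iIndepFun X P)
    (hident : ∀ i, IdentDistrib (X i) (X 0) P P) (m : ℕ) :
    P.map (fun ω (i : Fin m) => X i ω) = Measure.pi (fun _ : Fin m => P.map (X 0)) := by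
  haveI : IsProbabilityMeasure (P.map (X 0)) :=
    Measure.isProbabilityMeasure_map (hmeas 0).aemeasurable
  refine (Measure.pi_eq fun s hs => ?_).symm
  rw [Measure.map_apply (measurable_pi_lambda (fun ω (i : Fin m) => X i.val ω) fun i => hmeas i)
    (MeasurableSet.univ_pi hs)]
  have hpre : (fun ω (i : Fin m) => X i ω) ⁻¹' Set.pi Set.univ s = ⋂ i : Fin m, X i.val ⁻¹' s i := by
    ext ω; simp [Set.mem_pi]
  rw [hpre, hInterX P X hmeas hindep hident m s hs]

lemma law_prodX (hmeas : ∀ i, Measurable (X i))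
    (hindep : iIndepFun X P)
    (hident : ∀ i, IdentDistrib (X i) (X 0) P P) (n : ℕ) :
    (P.prod P).map (fun p : Ω × Ω =>
        (Fin.cons (X 0 p.1) (fun i : Fin n => X i p.2) : Fin (n+1) → ℝ)) =
      Measure.pi (fun _ : Fin (n+1) => P.map (X 0)) := by
  haveI : IsProbabilityMeasure (P.map (X 0)) :=
    Measure.isProbabilityMeasure_map (hmeas 0).aemeasurable
  have hΦ : Measurable (fun p : Ω × Ω =>
      (Fin.cons (X 0 p.1) (fun i : Fin n => X i p.2) : Fin (n+1) → ℝ)) := by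
    refine measurable_pi_lambda _ fun i => ?_
    induction i using Fin.cases with
    | zero => simpa [Function.comp_def] using (hmeas 0).comp measurable_fst
    | succ j => simpa [Function.comp_def] using (hmeas j).comp measurable_snd
  refine (Measure.pi_eq fun s hs => ?_).symm
  rw [Measure.map_apply hΦ (MeasurableSet.univ_pi hs)]
  have hpre : (fun p : Ω × Ω =>
      (Fin.cons (X 0 p.1) (fun i : Fin n => X i p.2) : Fin (n+1) → ℝ)) ⁻¹' Set.pi Set.univ s
      = (X 0 ⁻¹' s 0) ×ˢ (⋂ i : Fin n, X i.val ⁻¹' s i.succ) := by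
    ext p
    simp only [Set.mem_preimage, Set.mem_pi, Set.mem_univ, forall_true_left,
      Set.mem_prod, Set.mem_iInter]
    constructor
    · intro h
      refine ⟨by simpa using h 0, fun i => by simpa using h i.succ⟩
    · intro h i
      induction i using Fin.cases with
      | zero => simpa using h.1
      | succ j => simpa using h.2 j
  rw [hpre, Measure.prod_prod,
    hInterX P X hmeas hindep hident n (fun i => s i.succ) (fun i => hs _),
    Fin.prod_univ_succ]
  congr 1
  rw [Measure.map_apply (hmeas 0) (hs 0)]

end laws

lemma map_revX {μ : Measure ℝ} [IsProbabilityMeasure μ] (m : ℕ) :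
    (Measure.pi fun _ : Fin m => μ).map (fun (v : Fin m → ℝ) (i : Fin m) => v i.rev) =
      Measure.pi fun _ : Fin m => μ := by
  refine (Measure.pi_eq fun s hs => ?_).symm
  have hR : Measurable (fun (v : Fin m → ℝ) (i : Fin m) => v i.rev) :=
    measurable_pi_lambda _ fun i => measurable_pi_apply _
  rw [Measure.map_apply hR (MeasurableSet.univ_pi hs)]
  have hpre : (fun (v : Fin m → ℝ) (i : Fin m) => v i.rev) ⁻¹' Set.pi Set.univ s
      = Set.pi Set.univ (fun i => s i.rev) := by
    ext v
    simp only [Set.mem_preimage, Set.mem_pi, Set.mem_univ, forall_true_left]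
    constructor
    · intro h i
      simpa [Fin.rev_rev] using h i.rev
    · intro h i
      simpa [Fin.rev_rev] using h i.rev
  rw [hpre, Measure.pi_pi]
  exact Equiv.prod_comp Fin.revPerm (fun i => μ (s i))

/-- first strict ascending ladder epoch event (at time m), in vector form -/
def Bset (m : ℕ) : Set (Fin m → ℝ) :=
  {v | (∀ j, j < m → psum v j ≤ 0) ∧ 0 < psum v m}

/-- the dual event, in vector form -/
def Aset (n : ℕ) : Set (Fin (n+1) → ℝ) :=
  {v | 0 < psum v 1 ∧ (∀ j, j < n → psum v (n+1) ≤ psum v (j+1)) ∧ 0 < psum v (n+1)}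

lemma measurableSet_Bset (m : ℕ) : MeasurableSet (Bset m) := by
  have : Bset m = (⋂ j, ⋂ (_ : j < m), {v | psum v j ≤ 0}) ∩ {v | 0 < psum v m} := by
    ext v; simp [Bset]
  rw [this]
  exact MeasurableSet.inter
    (MeasurableSet.iInter fun j => MeasurableSet.iInter fun _ =>
      measurableSet_le (measurable_psum m j) measurable_const)
    (measurableSet_lt measurable_const (measurable_psum m m))

lemma measurableSet_Aset (n : ℕ) : MeasurableSet (Aset n) := by
  have : Aset n = {v | 0 < psum v 1} ∩
      ((⋂ j, ⋂ (_ : j < n), {v | psum v (n+1) ≤ psum v (j+1)}) ∩ {v | 0 < psum v (n+1)}) := by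
    ext v; simp [Aset, and_assoc]
  rw [this]
  exact MeasurableSet.inter (measurableSet_lt measurable_const (measurable_psum _ 1))
    (MeasurableSet.inter
      (MeasurableSet.iInter fun j => MeasurableSet.iInter fun _ =>
        measurableSet_le (measurable_psum _ (n+1)) (measurable_psum _ (j+1)))
      (measurableSet_lt measurable_const (measurable_psum _ (n+1))))

lemma Aset_eq_rev_preimage (n : ℕ) :
    Aset n = (fun (v : Fin (n+1) → ℝ) (i : Fin (n+1)) => v i.rev) ⁻¹' Bset (n+1) := by
  ext v
  simp only [Aset, Bset, Set.mem_setOf_eq, Set.mem_preimage]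
  have hrev : ∀ j, j ≤ n + 1 →
      psum (fun i : Fin (n+1) => v i.rev) j = psum v (n+1) - psum v (n+1-j) :=
    fun j hj => psum_rev v j hj
  constructor
  · rintro ⟨h1, h2, h3⟩
    constructor
    · intro j hj
      rw [hrev j (by omega)]
      rcases Nat.eq_zero_or_pos j with rfl | hj0
      · simp
      · have hk : n + 1 - j = (n - j) + 1 := by omega
        rw [hk]
        have := h2 (n - j) (by omega)
        linarith
    · rw [hrev (n+1) le_rfl]
      simpa [psum_zero] using h3
  · rintro ⟨h1, h2⟩
    rw [hrev (n+1) le_rfl] at h2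
    simp only [Nat.sub_self, psum_zero, sub_zero] at h2
    have key : ∀ j, j < n → psum v (n+1) ≤ psum v (j+1) := by
      intro j hj
      have := h1 (n - j) (by omega)
      rw [hrev (n - j) (by omega)] at this
      have he : n + 1 - (n - j) = j + 1 := by omega
      rw [he] at this
      linarith
    have h1' : 0 < psum v 1 := by
      have := h1 n (by omega)
      rw [hrev n (by omega)] at this
      have he : n + 1 - n = 1 := by omega
      rw [he] at this
      linarith
    exact ⟨h1', key, h2⟩

/-- first strict ascending ladder epoch at time n+1, in walk form -/
def Dset {Ω : Type*} (X : ℕ → Ω → ℝ) (n : ℕ) : Set Ω :=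
  {ω | (∀ j, j < n + 1 → rwS X j ω ≤ 0) ∧ 0 < rwS X (n+1) ω}

lemma Psi_preimage_Bset {Ω : Type*} (X : ℕ → Ω → ℝ) (n : ℕ) :
    (fun ω (i : Fin (n+1)) => X i.val ω) ⁻¹' Bset (n+1) = Dset X n := by
  ext ω
  simp only [Set.mem_preimage, Bset, Dset, Set.mem_setOf_eq]
  constructor
  · rintro ⟨h1, h2⟩
    exact ⟨fun j hj => by
        simpa [psum_X X ω (n+1) j (by omega)] using h1 j hj,
      by simpa [psum_X X ω (n+1) (n+1) le_rfl] using h2⟩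
  · rintro ⟨h1, h2⟩
    exact ⟨fun j hj => by
        simpa [psum_X X ω (n+1) j (by omega)] using h1 j hj,
      by simpa [psum_X X ω (n+1) (n+1) le_rfl] using h2⟩

lemma Phi_preimage_Aset {Ω : Type*} (X : ℕ → Ω → ℝ) (n : ℕ) :
    (fun p : Ω × Ω => (Fin.cons (X 0 p.1) (fun i : Fin n => X i.val p.2) : Fin (n+1) → ℝ))
        ⁻¹' Aset n
      = {p : Ω × Ω | 0 < rwS X 1 p.1 ∧
          ((∀ j, j < n → rwS X n p.2 ≤ rwS X j p.2) ∧ -rwS X n p.2 < rwS X 1 p.1)} := by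
  ext p
  have hr1 : rwS X 1 p.1 = X 0 p.1 := by simp [rwS]
  have hpc : ∀ j, j ≤ n →
      psum (Fin.cons (X 0 p.1) (fun i : Fin n => X i.val p.2) : Fin (n+1) → ℝ) (j+1)
        = X 0 p.1 + rwS X j p.2 := by
    intro j hj
    rw [psum_cons, psum_X X p.2 n j hj]
  simp only [Set.mem_preimage, Aset, Set.mem_setOf_eq, psum_one, hpc n le_rfl, hr1]
  constructor
  · rintro ⟨h1, h2, h3⟩
    refine ⟨h1, fun j hj => ?_, by linarith⟩
    have := h2 j hj
    rw [hpc j (le_of_lt hj)] at this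
    linarith
  · rintro ⟨h1, h2, h3⟩
    refine ⟨h1, fun j hj => ?_, by linarith⟩
    rw [hpc j (le_of_lt hj)]
    have := h2 j hj
    linarith

section main
variable {Ω : Type*} [MeasurableSpace Ω] (P : Measure Ω) [IsProbabilityMeasure P]
  (X : ℕ → Ω → ℝ)

lemma key_term (hmeas : ∀ i, Measurable (X i))
    (hindep : iIndepFun X P)
    (hident : ∀ i, IdentDistrib (X i) (X 0) P P) (n : ℕ) :
    (P.prod P) {p : Ω × Ω | 0 < rwS X 1 p.1 ∧
        ((∀ j, j < n → rwS X n p.2 ≤ rwS X j p.2) ∧ -rwS X n p.2 < rwS X 1 p.1)}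
      = P (Dset X n) := by
  haveI : IsProbabilityMeasure (P.map (X 0)) :=
    Measure.isProbabilityMeasure_map (hmeas 0).aemeasurable
  have hΦ : Measurable (fun p : Ω × Ω =>
      (Fin.cons (X 0 p.1) (fun i : Fin n => X i p.2) : Fin (n+1) → ℝ)) := by
    refine measurable_pi_lambda _ fun i => ?_
    induction i using Fin.cases with
    | zero => simpa [Function.comp_def] using (hmeas 0).comp measurable_fst
    | succ j => simpa [Function.comp_def] using (hmeas j).comp measurable_snd
  have hR : Measurable (fun (v : Fin (n+1) → ℝ) (i : Fin (n+1)) => v i.rev) :=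
    measurable_pi_lambda _ fun i => measurable_pi_apply _
  have hΨ : Measurable (fun ω (i : Fin (n+1)) => X i.val ω) :=
    measurable_pi_lambda _ fun i => hmeas i
  rw [← Phi_preimage_Aset X n,
    ← Measure.map_apply hΦ (measurableSet_Aset n),
    law_prodX P X hmeas hindep hident n,
    Aset_eq_rev_preimage,
    ← Measure.map_apply hR (measurableSet_Bset (n+1)),
    map_revX (n+1),
    ← law_piX P X hmeas hindep hident (n+1),
    Measure.map_apply hΨ (measurableSet_Bset (n+1)),
    Psi_preimage_Bset]

lemma measurableSet_Dset (hmeas : ∀ i, Measurable (X i)) (n : ℕ) :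
    MeasurableSet (Dset X n) := by
  have hS : ∀ k, Measurable (rwS X k) :=
    fun k => Finset.measurable_sum _ fun i _ => hmeas i
  have : Dset X n = (⋂ j, ⋂ (_ : j < n + 1), {ω | rwS X j ω ≤ 0})
      ∩ {ω | 0 < rwS X (n+1) ω} := by
    ext ω; simp [Dset]
  rw [this]
  exact MeasurableSet.inter
    (MeasurableSet.iInter fun j => MeasurableSet.iInter fun _ =>
      measurableSet_le (hS j) measurable_const)
    (measurableSet_lt measurable_const (hS (n+1)))

lemma Dset_disjoint : Pairwise (Function.onFun Disjoint (Dset X)) := by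
  have key : ∀ a b, a < b → Disjoint (Dset X a) (Dset X b) := by
    intro a b h
    refine Set.disjoint_left.mpr fun ω ha hb => ?_
    exact absurd (hb.1 (a+1) (by omega)) (not_le.mpr ha.2)
  exact fun a b hab => (lt_or_gt_of_ne hab).elim (key a b) (fun h => (key b a h).symm)

end main

/-- for a walk not drifting to `-∞`, `E[V̲⁻(S₁) 1{S₁ > 0}] = 1`. -/
theorem stmt9 {Ω : Type*} [MeasurableSpace Ω] (P : Measure Ω) [IsProbabilityMeasure P]
    (X : ℕ → Ω → ℝ) (hmeas : ∀ i, Measurable (X i))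
    (hindep : iIndepFun X P)
    (hident : ∀ i, IdentDistrib (X i) (X 0) P P)
    (hlimsup : ∀ᵐ ω ∂P, ∀ M : ℝ, ∃ᶠ n in atTop, M < rwS X n ω) :
    ∫⁻ ω in {ω | 0 < rwS X 1 ω}, VminusBar P X (rwS X 1 ω) ∂P = 1 := by
  classical
  have hS : ∀ k, Measurable (rwS X k) :=
    fun k => Finset.measurable_sum _ fun i _ => hmeas i
  have hset : MeasurableSet {ω | 0 < rwS X 1 ω} :=
    measurableSet_lt measurable_const (hS 1)
  -- Step 1: unfold VminusBar on the set {S₁ > 0}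
  have step1 : ∫⁻ ω in {ω | 0 < rwS X 1 ω}, VminusBar P X (rwS X 1 ω) ∂P
      = ∫⁻ ω in {ω | 0 < rwS X 1 ω}, ∑' n : ℕ,
          P {ω' | (∀ j, j < n → rwS X n ω' ≤ rwS X j ω') ∧ -rwS X n ω' < rwS X 1 ω} ∂P := by
    refine setLIntegral_congr_fun_ae hset (Filter.Eventually.of_forall fun ω hω => ?_)
    rw [VminusBar, if_neg (ne_of_gt hω)]
  rw [step1]
  -- Step 2: swap sum and integral
  have hgmono : ∀ n : ℕ, Monotone (fun t : ℝ =>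
      P {ω' | (∀ j, j < n → rwS X n ω' ≤ rwS X j ω') ∧ -rwS X n ω' < t}) :=
    fun n t1 t2 h => measure_mono (fun ω' hω' => ⟨hω'.1, lt_of_lt_of_le hω'.2 h⟩)
  rw [lintegral_tsum (f := fun n ω =>
    P {ω' | (∀ j, j < n → rwS X n ω' ≤ rwS X j ω') ∧ -rwS X n ω' < rwS X 1 ω})
    (fun n => ((hgmono n).measurable.comp (hS 1)).aemeasurable)]
  -- Step 3: each term is a product-measure probability
  have hEmeas : ∀ n : ℕ, MeasurableSet {p : Ω × Ω | 0 < rwS X 1 p.1 ∧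
      ((∀ j, j < n → rwS X n p.2 ≤ rwS X j p.2) ∧ -rwS X n p.2 < rwS X 1 p.1)} := by
    intro n
    rw [← Phi_preimage_Aset X n]
    have hΦ : Measurable (fun p : Ω × Ω =>
        (Fin.cons (X 0 p.1) (fun i : Fin n => X i p.2) : Fin (n+1) → ℝ)) := by
      refine measurable_pi_lambda _ fun i => ?_
      induction i using Fin.cases with
      | zero => simpa [Function.comp_def] using (hmeas 0).comp measurable_fst
      | succ j => simpa [Function.comp_def] using (hmeas j).comp measurable_snd
    exact hΦ (measurableSet_Aset n)
  have step3 : ∀ n : ℕ, ∫⁻ ω in {ω | 0 < rwS X 1 ω},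
      P {ω' | (∀ j, j < n → rwS X n ω' ≤ rwS X j ω') ∧ -rwS X n ω' < rwS X 1 ω} ∂P
      = (P.prod P) {p : Ω × Ω | 0 < rwS X 1 p.1 ∧
          ((∀ j, j < n → rwS X n p.2 ≤ rwS X j p.2) ∧ -rwS X n p.2 < rwS X 1 p.1)} := by
    intro n
    rw [Measure.prod_apply (hEmeas n), ← lintegral_indicator hset]
    refine lintegral_congr fun ω => ?_
    by_cases hω : 0 < rwS X 1 ω
    · rw [Set.indicator_of_mem (show ω ∈ {ω | 0 < rwS X 1 ω} from hω)]
      congr 1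
      ext ω'
      simp only [Set.mem_setOf_eq, Set.mem_preimage]
      exact ⟨fun h => ⟨hω, h⟩, fun h => h.2⟩
    · rw [Set.indicator_of_notMem (show ω ∉ {ω | 0 < rwS X 1 ω} from hω)]
      have : (Prod.mk ω ⁻¹' {p : Ω × Ω | 0 < rwS X 1 p.1 ∧
          ((∀ j, j < n → rwS X n p.2 ≤ rwS X j p.2) ∧ -rwS X n p.2 < rwS X 1 p.1)}) = ∅ := by
        ext ω'
        simp only [Set.mem_preimage, Set.mem_setOf_eq, Set.mem_empty_iff_false, iff_false]
        exact fun h => hω h.1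
      rw [this, measure_empty]
  simp only [step3]
  -- Step 4: duality
  have step4 : ∀ n : ℕ, (P.prod P) {p : Ω × Ω | 0 < rwS X 1 p.1 ∧
      ((∀ j, j < n → rwS X n p.2 ≤ rwS X j p.2) ∧ -rwS X n p.2 < rwS X 1 p.1)}
      = P (Dset X n) := key_term P X hmeas hindep hident
  simp only [step4]
  -- Step 5: sum to the union
  rw [← measure_iUnion (Dset_disjoint X) (measurableSet_Dset X hmeas)]
  -- Step 6: the union has full measure
  have hae : ∀ᵐ ω ∂P, ω ∈ ⋃ n, Dset X n := by
    refine hlimsup.mono fun ω h => ?_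
    have h0 : ∃ n, 0 < rwS X n ω := ((h 0).exists)
    have hk : 0 < rwS X (Nat.find h0) ω := Nat.find_spec h0
    have hlt : ∀ j, j < Nat.find h0 → ¬ 0 < rwS X j ω := fun j hj => Nat.find_min h0 hj
    have hk0 : Nat.find h0 ≠ 0 := by
      intro e
      rw [e] at hk
      simp [rwS] at hk
    obtain ⟨m, hm⟩ := Nat.exists_eq_succ_of_ne_zero hk0
    refine Set.mem_iUnion.mpr ⟨m, ⟨fun j hj => not_lt.mp (hlt j (by omega)), ?_⟩⟩
    rw [← Nat.succ_eq_add_one, ← hm]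
    exact hk
  have hU : MeasurableSet (⋃ n, Dset X n) :=
    MeasurableSet.iUnion (measurableSet_Dset X hmeas)
  have hc : P (⋃ n, Dset X n)ᶜ = 0 := ae_iff.mp hae
  have h2 := measure_add_measure_compl (μ := P) hU
  rw [hc, add_zero, measure_univ] at h2
  exact h2
end

section
/- Let φ : ℝ → [0,∞) be directly Riemann integrable, i.e., Θ(Δ) := Σ_{w ∈ Δℤ} Δ · sup_{u ∈ [w, w+Δ)} φ(u) < ∞ for some (hence all) Δ > 0. Then for every Δ_0 > 0 and every η > 0 there exists M > 0 such that for all Δ ∈ (0, Δ_0): Σ_{w ∈ Δℤ, |w| > M} Δ · sup_{u ∈ [w, w+Δ)} φ(u) < η. In particular, M can be chosen uniformly in the mesh Δ ∈ (0, Δ_0). -/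
open scoped ENNReal

/-- The upper Riemann sum `Θ(Δ) = Σ_{w ∈ Δℤ} Δ · sup_{u ∈ [w, w+Δ)} φ(u)` (in `ℝ≥0∞`). -/
noncomputable def upperSum (φ : ℝ → ℝ) (Δ : ℝ) : ℝ≥0∞ :=
  ∑' k : ℤ, ENNReal.ofReal Δ *
    ⨆ u ∈ Set.Ico ((k : ℝ) * Δ) ((k : ℝ) * Δ + Δ), ENNReal.ofReal (φ u)

noncomputable def cellSup (φ : ℝ → ℝ) (δ : ℝ) (j : ℤ) : ℝ≥0∞ :=
  ⨆ u ∈ Set.Ico ((j : ℝ) * δ) ((j : ℝ) * δ + δ), ENNReal.ofReal (φ u)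

lemma upperSum_eq (φ : ℝ → ℝ) (Δ : ℝ) :
    upperSum φ Δ = ∑' k : ℤ, ENNReal.ofReal Δ * cellSup φ Δ k := rfl

/-- covering: for `0 < Δ ≤ δ`, the `Δ`-cell `k` is covered by two consecutive `δ`-cells. -/
lemma cellSup_le_add (φ : ℝ → ℝ) {Δ δ : ℝ} (hδ : 0 < δ) (hΔδ : Δ ≤ δ) (k : ℤ) :
    cellSup φ Δ k ≤ cellSup φ δ ⌊(k : ℝ) * Δ / δ⌋ + cellSup φ δ (⌊(k : ℝ) * Δ / δ⌋ + 1) := by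
  set j : ℤ := ⌊(k : ℝ) * Δ / δ⌋ with hj
  have h1 : (j : ℝ) * δ ≤ (k : ℝ) * Δ := by
    rw [← le_div_iff₀ hδ]; exact Int.floor_le _
  have h2 : (k : ℝ) * Δ < (j : ℝ) * δ + δ := by
    have := Int.lt_floor_add_one ((k : ℝ) * Δ / δ)
    rw [div_lt_iff₀ hδ] at this; linarith
  refine iSup₂_le fun u hu => ?_
  obtain ⟨hu1, hu2⟩ := hu
  rcases lt_or_ge u ((j : ℝ) * δ + δ) with h | h
  · exact le_add_right (le_iSup₂_of_le u ⟨by linarith, h⟩ le_rfl)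
  · refine le_add_left (le_iSup₂_of_le u ⟨?_, ?_⟩ le_rfl)
    · push_cast; linarith
    · push_cast; linarith

lemma upperSum_double_lt_top (φ : ℝ → ℝ) {Δ : ℝ} (hΔ : 0 < Δ)
    (h : upperSum φ Δ < ⊤) : upperSum φ (2 * Δ) < ⊤ := by
  have key : ∀ k : ℤ, cellSup φ (2 * Δ) k ≤ cellSup φ Δ (2 * k) + cellSup φ Δ (2 * k + 1) := by
    intro k
    refine iSup₂_le fun u hu => ?_
    obtain ⟨hu1, hu2⟩ := hu
    rcases lt_or_ge u ((k : ℝ) * (2 * Δ) + Δ) with h | h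
    · refine le_add_right (le_iSup₂_of_le u ⟨?_, ?_⟩ le_rfl) <;> push_cast <;> linarith
    · refine le_add_left (le_iSup₂_of_le u ⟨?_, ?_⟩ le_rfl) <;> push_cast <;> linarith
  have h2 : ENNReal.ofReal (2 * Δ) = 2 * ENNReal.ofReal Δ := by
    rw [ENNReal.ofReal_mul (by norm_num)]; norm_num
  have hle : upperSum φ (2 * Δ) ≤
      2 * ((∑' k : ℤ, ENNReal.ofReal Δ * cellSup φ Δ (2 * k)) +
        ∑' k : ℤ, ENNReal.ofReal Δ * cellSup φ Δ (2 * k + 1)) := by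
    rw [upperSum_eq, ← ENNReal.tsum_add, ← ENNReal.tsum_mul_left]
    refine ENNReal.summable.tsum_le_tsum (fun k => ?_) ENNReal.summable
    rw [h2, mul_assoc, ← mul_add]
    exact mul_le_mul_right (mul_le_mul_right (key k) _) _
  have inj1 : Function.Injective (fun k : ℤ => 2 * k) := fun a b hab => by dsimp at hab; omega
  have inj2 : Function.Injective (fun k : ℤ => 2 * k + 1) := fun a b hab => by dsimp at hab; omega
  have b1 : (∑' k : ℤ, ENNReal.ofReal Δ * cellSup φ Δ (2 * k)) ≤ upperSum φ Δ :=
    ENNReal.summable.tsum_le_tsum_of_inj _ inj1 (fun _ _ => zero_le) (fun _ => le_rfl)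
      ENNReal.summable
  have b2 : (∑' k : ℤ, ENNReal.ofReal Δ * cellSup φ Δ (2 * k + 1)) ≤ upperSum φ Δ :=
    ENNReal.summable.tsum_le_tsum_of_inj _ inj2 (fun _ _ => zero_le) (fun _ => le_rfl)
      ENNReal.summable
  calc upperSum φ (2 * Δ) ≤ _ := hle
    _ ≤ 2 * (upperSum φ Δ + upperSum φ Δ) := by gcongr
    _ < ⊤ := by
        rw [ENNReal.mul_lt_top_iff]
        left
        exact ⟨by norm_num, ENNReal.add_lt_top.2 ⟨h, h⟩⟩

lemma upperSum_pow_lt_top (φ : ℝ → ℝ) {Δ : ℝ} (hΔ : 0 < Δ)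
    (h : upperSum φ Δ < ⊤) (n : ℕ) : upperSum φ (2 ^ n * Δ) < ⊤ := by
  induction n with
  | zero => simpa using h
  | succ n ih =>
      have : (2 : ℝ) ^ (n + 1) * Δ = 2 * (2 ^ n * Δ) := by ring
      rw [this]
      exact upperSum_double_lt_top φ (by positivity) ih

/-- At most `2δ/Δ`-worth of lattice points `k` have `kΔ` in a window of length `δ`. -/
lemma count_bound {Δ δ : ℝ} (hΔ : 0 < Δ) (hδ : 0 < δ) (hΔδ : Δ ≤ δ) (a : ℝ)
    (P : ℤ → Prop) [DecidablePred P]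
    (hP : ∀ k : ℤ, P k → a ≤ (k : ℝ) * Δ ∧ (k : ℝ) * Δ < a + δ) :
    (∑' k : ℤ, if P k then ENNReal.ofReal Δ else 0) ≤ ENNReal.ofReal (2 * δ) := by
  classical
  set c : ℤ := ⌈a / Δ⌉ with hc
  set L : ℤ := ⌊δ / Δ⌋ + 1 with hL
  have hfloor : (1 : ℤ) ≤ ⌊δ / Δ⌋ := by
    rw [Int.le_floor]; push_cast; rw [le_div_iff₀ hΔ]; linarith
  have hsub : ∀ k : ℤ, P k → k ∈ Finset.Ico c (c + L) := by
    intro k hk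
    obtain ⟨h1, h2⟩ := hP k hk
    rw [Finset.mem_Ico]
    constructor
    · rw [hc, Int.ceil_le, div_le_iff₀ hΔ]; linarith
    · have hac : a / Δ ≤ (c : ℝ) := Int.le_ceil _
      have hdL : δ / Δ < (⌊δ / Δ⌋ : ℝ) + 1 := Int.lt_floor_add_one _
      have : (k : ℝ) < (c : ℝ) + ((⌊δ / Δ⌋ : ℝ) + 1) := by
        have hk2 : (k : ℝ) < a / Δ + δ / Δ := by
          rw [← add_div, lt_div_iff₀ hΔ]; linarith
        linarith
      exact_mod_cast this
  rw [tsum_eq_sum (s := Finset.Ico c (c + L))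
      (fun k hk => by
        rcases em (P k) with h | h
        · exact absurd (hsub k h) hk
        · simp [h])]
  have hcard : (Finset.Ico c (c + L)).card = L.toNat := by
    rw [Int.card_Ico]; congr 1; omega
  calc (∑ k ∈ Finset.Ico c (c + L), if P k then ENNReal.ofReal Δ else 0)
      ≤ ∑ _k ∈ Finset.Ico c (c + L), ENNReal.ofReal Δ :=
        Finset.sum_le_sum (fun k _ => by split <;> simp)
    _ = (L.toNat : ℝ≥0∞) * ENNReal.ofReal Δ := by
        rw [Finset.sum_const, hcard, nsmul_eq_mul]
    _ ≤ ENNReal.ofReal (2 * δ) := by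
        rw [← ENNReal.ofReal_natCast, ← ENNReal.ofReal_mul (by positivity)]
        apply ENNReal.ofReal_le_ofReal
        have h1 : (L.toNat : ℝ) = (⌊δ / Δ⌋ : ℝ) + 1 := by
          have h0 : ((L.toNat : ℤ) : ℝ) = ((⌊δ / Δ⌋ + 1 : ℤ) : ℝ) := by
            rw [Int.toNat_of_nonneg (by omega), hL]
          push_cast at h0
          exact h0
        have h2 : (⌊δ / Δ⌋ : ℝ) ≤ δ / Δ := Int.floor_le _
        have h3 : δ / Δ * Δ = δ := div_mul_cancel₀ _ (ne_of_gt hΔ)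
        rw [h1]
        nlinarith [mul_le_mul_of_nonneg_right h2 hΔ.le]

/-- Grouping the fine lattice points by the coarse cell containing them. -/
lemma group_bound {Δ δ : ℝ} (hΔ : 0 < Δ) (hδ : 0 < δ) (hΔδ : Δ ≤ δ)
    (g : ℤ → ℝ≥0∞) (P : ℤ → Prop) [DecidablePred P] (m : ℤ → ℤ) (a : ℤ → ℝ) (N : ℤ)
    (hmem : ∀ k j : ℤ, m k = j → a j ≤ (k : ℝ) * Δ ∧ (k : ℝ) * Δ < a j + δ)
    (hfar : ∀ k, P k → N < |m k|) :
    (∑' k : ℤ, if P k then ENNReal.ofReal Δ * g (m k) else 0) ≤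
      ∑' j : ℤ, (if N < |j| then ENNReal.ofReal (2 * δ) * g j else 0) := by
  classical
  have step1 : ∀ k : ℤ, (if P k then ENNReal.ofReal Δ * g (m k) else 0) =
      ∑' j : ℤ, (if P k ∧ m k = j then ENNReal.ofReal Δ * g j else 0) := by
    intro k
    by_cases hp : P k
    · simp only [hp, true_and]
      rw [tsum_eq_single (m k) (fun j hj => by
        rw [if_neg (fun h => hj (h.symm))])]
      simp
    · simp [hp]
  rw [tsum_congr step1, ENNReal.tsum_comm]
  refine ENNReal.summable.tsum_le_tsum (fun j => ?_) ENNReal.summable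
  by_cases hj : N < |j|
  · simp only [hj, if_true]
    have pt : ∀ k : ℤ, (if P k ∧ m k = j then ENNReal.ofReal Δ * g j else 0) ≤
        (if P k ∧ m k = j then ENNReal.ofReal Δ else 0) * g j := by
      intro k; split <;> simp
    calc (∑' k : ℤ, if P k ∧ m k = j then ENNReal.ofReal Δ * g j else 0)
        ≤ ∑' k : ℤ, (if P k ∧ m k = j then ENNReal.ofReal Δ else 0) * g j :=
          ENNReal.summable.tsum_le_tsum pt ENNReal.summable
      _ = (∑' k : ℤ, if P k ∧ m k = j then ENNReal.ofReal Δ else 0) * g j :=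
          ENNReal.tsum_mul_right
      _ ≤ ENNReal.ofReal (2 * δ) * g j := by
          refine mul_le_mul_left ?_ _
          exact count_bound hΔ hδ hΔδ (a j) _ (fun k hk => hmem k j hk.2)
  · simp only [hj, if_false]
    refine le_of_eq (ENNReal.tsum_eq_zero.2 fun k => ?_)
    split
    · next h => exact absurd (h.2 ▸ hfar k h.1) hj
    · rfl

/-- if `φ` is directly Riemann integrable, then for every `Δ₀ > 0` and `η > 0`
there is `M > 0` such that, uniformly in the mesh `Δ ∈ (0, Δ₀)`, the contribution to the
upper Riemann sum of the lattice points `w ∈ Δℤ` with `|w| > M` is less than `η`. -/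
theorem stmt14 (φ : ℝ → ℝ) (hφ : ∀ x, 0 ≤ φ x)
    (hdri : ∃ Δ : ℝ, 0 < Δ ∧ upperSum φ Δ < ⊤) :
    ∀ Δ₀ : ℝ, 0 < Δ₀ → ∀ η : ℝ, 0 < η → ∃ M : ℝ, 0 < M ∧
      ∀ Δ : ℝ, 0 < Δ → Δ < Δ₀ →
        (∑' k : {k : ℤ // M < |(k : ℝ) * Δ|},
            ENNReal.ofReal Δ *
              ⨆ u ∈ Set.Ico (((k : ℤ) : ℝ) * Δ) (((k : ℤ) : ℝ) * Δ + Δ),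
                ENNReal.ofReal (φ u))
          < ENNReal.ofReal η := by
  classical
  intro Δ₀ hΔ₀ η hη
  obtain ⟨Δ₁, hΔ₁, hfin⟩ := hdri
  obtain ⟨n, hn⟩ := pow_unbounded_of_one_lt (Δ₀ / Δ₁) (by norm_num : (1:ℝ) < 2)
  set δ : ℝ := 2 ^ n * Δ₁ with hδdef
  have hδ : 0 < δ := by positivity
  have hΔ₀δ : Δ₀ ≤ δ := by
    rw [div_lt_iff₀ hΔ₁] at hn
    exact hn.le
  have hδfin : upperSum φ δ < ⊤ := upperSum_pow_lt_top φ hΔ₁ hfin n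
  set g : ℤ → ℝ≥0∞ := cellSup φ δ with hg
  have hne : (∑' j : ℤ, ENNReal.ofReal δ * g j) ≠ ⊤ := by
    rw [← upperSum_eq]; exact hδfin.ne
  have hε : (0 : ℝ≥0∞) < ENNReal.ofReal (η / 5) := by
    rw [ENNReal.ofReal_pos]; linarith
  have hev : ∀ᶠ s : Finset ℤ in Filter.atTop,
      (∑' j : {x : ℤ // x ∉ s}, ENNReal.ofReal δ * g j) < ENNReal.ofReal (η / 5) :=
    (ENNReal.tendsto_tsum_compl_atTop_zero hne).eventually (gt_mem_nhds hε)
  obtain ⟨F, hF⟩ := hev.exists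
  obtain ⟨N0, hN0⟩ : ∃ N : ℤ, ∀ j ∈ F.image (fun j : ℤ => |j|), j ≤ N := F.image _ |>.exists_le
  set N : ℤ := max N0 0 with hN
  have hNnn : (0 : ℤ) ≤ N := le_max_right _ _
  have hNF : ∀ j ∈ F, |j| ≤ N := fun j hj =>
    le_trans (hN0 _ (Finset.mem_image_of_mem _ hj)) (le_max_left _ _)
  set M : ℝ := ((N : ℝ) + 2) * δ with hM
  have hNR : (0 : ℝ) ≤ (N : ℝ) := by exact_mod_cast hNnn
  have hMpos : 0 < M := mul_pos (by linarith) hδ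
  refine ⟨M, hMpos, ?_⟩
  intro Δ hΔpos hΔΔ₀
  have hΔδ : Δ ≤ δ := le_of_lt (lt_of_lt_of_le hΔΔ₀ hΔ₀δ)
  set P : ℤ → Prop := fun k => M < |(k : ℝ) * Δ| with hP
  set m : ℤ → ℤ := fun k => ⌊(k : ℝ) * Δ / δ⌋ with hm
  have hm1 : ∀ k : ℤ, ((m k : ℝ)) * δ ≤ (k : ℝ) * Δ := by
    intro k; rw [← le_div_iff₀ hδ]; exact Int.floor_le _
  have hm2 : ∀ k : ℤ, (k : ℝ) * Δ < ((m k : ℝ)) * δ + δ := by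
    intro k
    have := Int.lt_floor_add_one ((k : ℝ) * Δ / δ)
    rw [div_lt_iff₀ hδ] at this; linarith
  have hfar0 : ∀ k : ℤ, P k → N + 2 ≤ m k ∨ m k ≤ -(N + 3) := by
    intro k hk
    rcases lt_abs.mp hk with h | h
    · left
      rw [hm, Int.le_floor, le_div_iff₀ hδ]
      push_cast
      rw [hM] at h
      linarith
    · right
      have hmk := hm1 k
      have hlt : (m k : ℝ) < ((-(N + 3) + 1 : ℤ) : ℝ) := by
        push_cast
        have hMr : M = ((N : ℝ) + 2) * δ := hM
        nlinarith
      have : m k < -(N + 3) + 1 := by exact_mod_cast hlt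
      omega
  have hfarA : ∀ k : ℤ, P k → N < |m k| := by
    intro k hk
    have h1 := le_abs_self (m k); have h2 := neg_le_abs (m k)
    rcases hfar0 k hk with h | h <;> omega
  have hfarB : ∀ k : ℤ, P k → N < |m k + 1| := by
    intro k hk
    have h1 := le_abs_self (m k + 1); have h2 := neg_le_abs (m k + 1)
    rcases hfar0 k hk with h | h <;> omega
  -- the two grouped bounds
  have hmemA : ∀ k j : ℤ, m k = j → (j : ℝ) * δ ≤ (k : ℝ) * Δ ∧
      (k : ℝ) * Δ < (j : ℝ) * δ + δ := by
    intro k j hkj; subst hkj; exact ⟨hm1 k, hm2 k⟩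
  have hmemB : ∀ k j : ℤ, m k + 1 = j → ((j : ℝ) - 1) * δ ≤ (k : ℝ) * Δ ∧
      (k : ℝ) * Δ < ((j : ℝ) - 1) * δ + δ := by
    intro k j hkj
    have hj : (j : ℝ) - 1 = (m k : ℝ) := by
      have : j = m k + 1 := hkj.symm
      subst this; push_cast; ring
    rw [hj]; exact ⟨hm1 k, hm2 k⟩
  have groupA := group_bound hΔpos hδ hΔδ g P m (fun j => (j : ℝ) * δ) N hmemA hfarA
  have groupB := group_bound hΔpos hδ hΔδ g P (fun k => m k + 1)
      (fun j => ((j : ℝ) - 1) * δ) N hmemB hfarB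
  -- tail estimate
  set S : ℝ≥0∞ := ∑' j : {x : ℤ // x ∉ F}, ENNReal.ofReal δ * g j with hS
  have htail : (∑' j : ℤ, if N < |j| then ENNReal.ofReal (2 * δ) * g j else 0) ≤ 2 * S := by
    have hpt : ∀ j : ℤ, (if N < |j| then ENNReal.ofReal (2 * δ) * g j else 0) ≤
        2 * Set.indicator {x : ℤ | x ∉ F} (fun j => ENNReal.ofReal δ * g j) j := by
      intro j
      by_cases hj : N < |j|
      · have hjF : j ∉ F := fun hmem => absurd (hNF j hmem) (not_le.mpr hj)
        rw [if_pos hj, Set.indicator_of_mem (by exact hjF)]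
        rw [ENNReal.ofReal_mul (by norm_num), ← mul_assoc]
        norm_num
      · rw [if_neg hj]; exact zero_le
    calc (∑' j : ℤ, if N < |j| then ENNReal.ofReal (2 * δ) * g j else 0)
        ≤ ∑' j : ℤ, 2 * Set.indicator {x : ℤ | x ∉ F}
            (fun j => ENNReal.ofReal δ * g j) j :=
          ENNReal.summable.tsum_le_tsum hpt ENNReal.summable
      _ = 2 * ∑' j : ℤ, Set.indicator {x : ℤ | x ∉ F}
            (fun j => ENNReal.ofReal δ * g j) j := ENNReal.tsum_mul_left
      _ = 2 * S := by
          rw [hS]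
          exact congrArg (2 * ·) (tsum_subtype {x : ℤ | x ∉ F}
            (fun j => ENNReal.ofReal δ * g j)).symm
  -- rewrite the goal sum
  have hrw : (∑' k : {k : ℤ // M < |(k : ℝ) * Δ|},
        ENNReal.ofReal Δ *
          ⨆ u ∈ Set.Ico (((k : ℤ) : ℝ) * Δ) (((k : ℤ) : ℝ) * Δ + Δ),
            ENNReal.ofReal (φ u))
      = ∑' k : ℤ, if P k then ENNReal.ofReal Δ * cellSup φ Δ k else 0 := by
    exact (tsum_subtype {k : ℤ | M < |(k : ℝ) * Δ|}
      (fun k => ENNReal.ofReal Δ * cellSup φ Δ k)).trans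
      (tsum_congr fun k => by rw [Set.indicator_apply]; rfl)
  have cover : ∀ k : ℤ, (if P k then ENNReal.ofReal Δ * cellSup φ Δ k else 0) ≤
      (if P k then ENNReal.ofReal Δ * g (m k) else 0) +
        (if P k then ENNReal.ofReal Δ * g (m k + 1) else 0) := by
    intro k
    by_cases hp : P k
    · simp only [hp, if_true]
      rw [← mul_add]
      exact mul_le_mul_right (cellSup_le_add φ hδ hΔδ k) _
    · simp [hp]
  rw [hrw]
  have main : (∑' k : ℤ, if P k then ENNReal.ofReal Δ * cellSup φ Δ k else 0) ≤ 4 * S := by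
    calc (∑' k : ℤ, if P k then ENNReal.ofReal Δ * cellSup φ Δ k else 0)
        ≤ ∑' k : ℤ, ((if P k then ENNReal.ofReal Δ * g (m k) else 0) +
            (if P k then ENNReal.ofReal Δ * g (m k + 1) else 0)) :=
          ENNReal.summable.tsum_le_tsum cover ENNReal.summable
      _ = (∑' k : ℤ, if P k then ENNReal.ofReal Δ * g (m k) else 0) +
            ∑' k : ℤ, (if P k then ENNReal.ofReal Δ * g (m k + 1) else 0) :=
          ENNReal.tsum_add
      _ ≤ (∑' j : ℤ, if N < |j| then ENNReal.ofReal (2 * δ) * g j else 0) +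
            ∑' j : ℤ, (if N < |j| then ENNReal.ofReal (2 * δ) * g j else 0) :=
          add_le_add groupA groupB
      _ ≤ 2 * S + 2 * S := add_le_add htail htail
      _ = 4 * S := by ring
  have hfinal : (4 : ℝ≥0∞) * S < ENNReal.ofReal η := by
    calc (4 : ℝ≥0∞) * S < 4 * ENNReal.ofReal (η / 5) := by
          rw [ENNReal.mul_lt_mul_iff_right (by norm_num) (by norm_num)]
          exact hF
      _ < ENNReal.ofReal η := by
          rw [show ((4 : ℝ≥0∞)) = ENNReal.ofReal (4 : ℝ) by norm_num,
            ← ENNReal.ofReal_mul (by norm_num)]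
          rw [ENNReal.ofReal_lt_ofReal_iff hη]
          linarith
  exact lt_of_le_of_lt main hfinal
end

section
/- Let (K(n))_{n≥1} be nonnegative with Σ K(n) = ζ ∈ (0,1), and suppose K(n) ~ c n^{-1-γ} as n → ∞ for some c > 0 and γ > 0 (more generally K(n) is regularly varying with index −1−γ). Then the defective renewal mass function u(n) := Σ_{m≥0} K^{*m}(n) satisfies u(n) ~ K(n) / (1 − ζ)² as n → ∞. -/
open Filter

/-- `convPow K m` is the `m`-fold convolution of `K` on `ℕ`, with `convPow K 0 = δ₀`. -/
noncomputable def convPow (K : ℕ → ℝ) : ℕ → ℕ → ℝ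
  | 0 => fun n => if n = 0 then 1 else 0
  | (m + 1) => fun n => ∑ k ∈ Finset.range (n + 1), convPow K m k * K (n - k)

lemma convPow_succ (K : ℕ → ℝ) (m n : ℕ) :
    convPow K (m+1) n = ∑ k ∈ Finset.range (n + 1), convPow K m k * K (n - k) := rfl

lemma convPow_nonneg (K : ℕ → ℝ) (hK : ∀ n, 0 ≤ K n) : ∀ m n, 0 ≤ convPow K m n := by
  intro m
  induction m with
  | zero => intro n; simp only [convPow]; positivity
  | succ m ih => intro n; exact Finset.sum_nonneg fun k _ => mul_nonneg (ih k) (hK _)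

lemma summable_convPow (K : ℕ → ℝ) (hK : ∀ n, 0 ≤ K n) (hs : Summable K) (m : ℕ) :
    Summable (convPow K m) := by
  induction m with
  | zero =>
      apply summable_of_finite_support
      apply Set.Finite.subset (Set.finite_singleton 0)
      intro n hn
      simp only [Function.mem_support, convPow] at hn
      by_contra h; exact hn (if_neg h)
  | succ m ih =>
      have h1 : Summable fun x => ‖convPow K m x‖ := by
        simpa only [Real.norm_eq_abs] using ih.abs
      have h2 : Summable fun x => ‖K x‖ := by
        simpa only [Real.norm_eq_abs] using hs.abs
      exact (summable_norm_sum_mul_range_of_summable_norm h1 h2).of_norm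

lemma tsum_convPow (K : ℕ → ℝ) (hK : ∀ n, 0 ≤ K n) (hs : Summable K) (m : ℕ) :
    ∑' n, convPow K m n = (∑' n, K n) ^ m := by
  induction m with
  | zero =>
      rw [pow_zero]
      rw [tsum_eq_single 0]
      · simp [convPow]
      · intro b hb; simp [convPow, hb]
  | succ m ih =>
      have h1 : Summable fun x => ‖convPow K m x‖ := by
        simpa only [Real.norm_eq_abs] using (summable_convPow K hK hs m).abs
      have h2 : Summable fun x => ‖K x‖ := by
        simpa only [Real.norm_eq_abs] using hs.abs
      have := tsum_mul_tsum_eq_tsum_sum_range_of_summable_norm h1 h2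
      rw [pow_succ, ← ih]
      exact this.symm

lemma p_anti {γ : ℝ} (hγ : 0 < γ) {a b : ℕ} (ha : 1 ≤ a) (hab : a ≤ b) :
    (b:ℝ) ^ (-(1+γ)) ≤ (a:ℝ) ^ (-(1+γ)) :=
  Real.rpow_le_rpow_of_nonpos (by exact_mod_cast ha) (by exact_mod_cast hab) (by linarith)

lemma p_half {γ : ℝ} (hγ : 0 < γ) {n k : ℕ} (hn : 1 ≤ n) (hk : n ≤ 2*k) :
    (k:ℝ) ^ (-(1+γ)) ≤ 2 ^ (1+γ) * (n:ℝ) ^ (-(1+γ)) := by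
  have hn0 : (0:ℝ) < (n:ℝ) := by exact_mod_cast hn
  have h2 : (0:ℝ) < (n:ℝ)/2 := by positivity
  have hk' : (n:ℝ)/2 ≤ (k:ℝ) := by
    have : (n:ℝ) ≤ 2*(k:ℝ) := by exact_mod_cast hk
    linarith
  calc (k:ℝ)^(-(1+γ)) ≤ ((n:ℝ)/2)^(-(1+γ)) :=
        Real.rpow_le_rpow_of_nonpos h2 hk' (by linarith)
    _ = 2 ^ (1+γ) * (n:ℝ)^(-(1+γ)) := by
        rw [Real.div_rpow (Nat.cast_nonneg n) (by norm_num : (0:ℝ) ≤ 2),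
          Real.rpow_neg (by norm_num : (0:ℝ) ≤ 2)]
        field_simp

lemma p_ratio {γ : ℝ} (hγ : 0 < γ) (k : ℕ) :
    Tendsto (fun n : ℕ => ((n - k : ℕ):ℝ) ^ (-(1+γ)) / (n:ℝ) ^ (-(1+γ))) atTop (nhds 1) := by
  have h1 : Tendsto (fun n : ℕ => ((n:ℝ) - k)/(n:ℝ)) atTop (nhds 1) := by
    have h0 := tendsto_const_div_atTop_nhds_zero_nat (k:ℝ)
    have h2 : Tendsto (fun n : ℕ => 1 - (k:ℝ)/n) atTop (nhds (1 - 0)) :=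
      tendsto_const_nhds.sub h0
    rw [sub_zero] at h2
    apply h2.congr'
    filter_upwards [eventually_ge_atTop 1] with n hn
    have hn0 : (n:ℝ) ≠ 0 := by positivity
    field_simp
  have h2 : Tendsto (fun x : ℝ => x ^ (-(1+γ))) (nhds 1) (nhds 1) := by
    have := (Real.continuousAt_rpow_const 1 (-(1+γ)) (Or.inl one_ne_zero)).tendsto
    simpa using this
  have h3 := h2.comp h1
  apply h3.congr'
  filter_upwards [eventually_ge_atTop (k+1)] with n hn
  have hkn : k ≤ n := by omega
  have hn0 : (0:ℝ) < (n:ℝ) := by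
    exact_mod_cast Nat.lt_of_lt_of_le (Nat.succ_le_succ (Nat.zero_le k)) hn
  have hnk : (0:ℝ) ≤ (n:ℝ) - k := by
    have : (k:ℝ) ≤ n := by exact_mod_cast hkn
    linarith
  simp only [Function.comp]
  rw [Nat.cast_sub hkn, Real.div_rpow hnk hn0.le]

set_option maxHeartbeats 1000000 in
lemma kesten (K : ℕ → ℝ) (hK : ∀ n, 0 ≤ K n) (hK0 : K 0 = 0) (hsum : Summable K)
    (hζ1 : ∑' n, K n < 1) {γ : ℝ} (hγ : 0 < γ)
    {M : ℝ} (hM0 : 0 < M) (hMK : ∀ n, K n ≤ M * (n:ℝ)^(-(1+γ))) :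
    ∃ D : ℕ → ℝ, (∀ m, 0 ≤ D m) ∧ Summable D ∧
      ∀ m n, 1 ≤ n → convPow K m n ≤ D m * (n:ℝ)^(-(1+γ)) := by
  set p : ℕ → ℝ := fun n => (n:ℝ)^(-(1+γ)) with hpdef
  set ζ := ∑' n, K n with hζdef
  have hζ0 : 0 ≤ ζ := tsum_nonneg hK
  have hppos : ∀ {n : ℕ}, 1 ≤ n → 0 < p n := by
    intro n hn
    exact Real.rpow_pos_of_pos (by exact_mod_cast hn) _
  have hp1 : p 1 = 1 := by simp [hpdef]
  have htwo : (1:ℝ) ≤ 2 ^ (1+γ) := by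
    calc (1:ℝ) = 1 ^ (1+γ) := (Real.one_rpow _).symm
    _ ≤ 2 ^ (1+γ) := Real.rpow_le_rpow (by norm_num) (by norm_num) (by linarith)
  have htwo0 : (0:ℝ) < 2 ^ (1+γ) := by linarith
  have hKM : ∀ j, K j ≤ M := by
    intro j
    rcases Nat.eq_zero_or_pos j with h | h
    · rw [h, hK0]; exact hM0.le
    · calc K j ≤ M * p j := hMK j
        _ ≤ M * p 1 := mul_le_mul_of_nonneg_left (p_anti hγ le_rfl h) hM0.le
        _ = M := by rw [hp1, mul_one]
  have hcs : ∀ m, Summable (convPow K m) := summable_convPow K hK hsum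
  have hpartial : ∀ m n, ∑ k ∈ Finset.range (n+1), convPow K m k ≤ ζ^m := by
    intro m n
    rw [hζdef, ← tsum_convPow K hK hsum m]
    exact Summable.sum_le_tsum _ (fun k _ => convPow_nonneg K hK m k) (hcs m)
  -- choose ε
  set ε := (1 - ζ)/(2*(1 + 2 ^ (1+γ))) with hεdef
  have hε0 : 0 < ε := div_pos (by linarith) (by linarith)
  set q := (1+ε)*ζ + 2 ^ (1+γ) * ε with hqdef
  have hq0 : 0 ≤ q := by positivity
  have hζq : ζ ≤ q := by nlinarith
  have hq1 : q < 1 := by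
    have hεb : ε * (1 + 2 ^ (1+γ)) = (1 - ζ)/2 := by
      rw [hεdef]; field_simp
    nlinarith
  -- choose N with tail small
  obtain ⟨N, hN⟩ : ∃ N : ℕ, ∑' k, K (k + (N+1)) ≤ ε := by
    have h := (tendsto_sum_nat_add K).comp (tendsto_add_atTop_nat 1)
    exact (h.eventually (eventually_le_nhds hε0)).exists
  have htail : ∀ n : ℕ, ∑ j ∈ Finset.Icc (N+1) n, K j ≤ ε := by
    intro n
    refine le_trans ?_ hN
    have hs : Summable fun k => K (k + (N+1)) := (summable_nat_add_iff (N+1)).mpr hsum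
    rcases Nat.lt_or_ge n (N+1) with h | h
    · rw [Finset.Icc_eq_empty (by omega)]
      simpa using tsum_nonneg fun k => hK _
    · rw [show Finset.Icc (N+1) n = Finset.Ico (N+1) (n+1) by rw [Finset.Ico_add_one_right_eq_Icc],
        Finset.sum_Ico_eq_sum_range]
      have : ∀ i ∈ Finset.range (n + 1 - (N+1)), K (N+1+i) = K (i + (N+1)) := by
        intro i _; congr 1; omega
      rw [Finset.sum_congr rfl this]
      exact Summable.sum_le_tsum _ (fun i _ => hK _) hs
  -- choose n₁ for the p-ratio bound
  obtain ⟨n₁, hn₁⟩ : ∃ n₁ : ℕ, ∀ n ≥ n₁, p (n - N) ≤ (1+ε) * p n := by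
    have h := p_ratio hγ N
    have h2 := h.eventually (eventually_le_nhds (lt_add_of_pos_right 1 hε0))
    rw [eventually_atTop] at h2
    obtain ⟨a, ha⟩ := h2
    refine ⟨max a 1, fun n hn => ?_⟩
    have h3 := ha n (le_trans (le_max_left _ _) hn)
    have hp : 0 < p n := hppos (le_trans (le_max_right _ _) hn)
    calc p (n-N) = (p (n-N)/p n) * p n := by field_simp
      _ ≤ (1+ε) * p n := mul_le_mul_of_nonneg_right h3 hp.le
  set n₀ := max n₁ (2*N+2) with hn₀def
  have hn₀1 : 1 ≤ n₀ := le_trans (by omega) (le_max_right _ _)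
  set R := 2 ^ (1+γ) * M * (n₀:ℝ) ^ (1+γ) with hRdef
  have hb0 : (0:ℝ) < (n₀:ℝ)^(1+γ) := Real.rpow_pos_of_pos (by exact_mod_cast hn₀1) _
  have hb1 : (1:ℝ) ≤ (n₀:ℝ)^(1+γ) := by
    calc (1:ℝ) = 1 ^ (1+γ) := (Real.one_rpow _).symm
    _ ≤ (n₀:ℝ) ^ (1+γ) := Real.rpow_le_rpow (by norm_num) (by exact_mod_cast hn₀1) (by linarith)
  have hR0 : 0 < R := by positivity
  have hR2 : 2 ^ (1+γ) * M ≤ R := by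
    rw [hRdef]
    nlinarith
  have hRM : ∀ n : ℕ, 1 ≤ n → n ≤ n₀ → M ≤ R * p n := by
    intro n h1 h2
    have ha0 : (0:ℝ) < (n:ℝ)^(1+γ) := Real.rpow_pos_of_pos (by exact_mod_cast h1) _
    have hab : (n:ℝ)^(1+γ) ≤ (n₀:ℝ)^(1+γ) :=
      Real.rpow_le_rpow (Nat.cast_nonneg n) (by exact_mod_cast h2) (by linarith)
    have hpn : p n = ((n:ℝ)^(1+γ))⁻¹ := by
      rw [hpdef]
      exact Real.rpow_neg (Nat.cast_nonneg n) (1+γ)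
    rw [hpn, hRdef]
    have h3 : (1:ℝ) ≤ (n₀:ℝ)^(1+γ) * ((n:ℝ)^(1+γ))⁻¹ := by
      rw [← div_eq_mul_inv, le_div_iff₀ ha0, one_mul]; exact hab
    nlinarith [mul_le_mul_of_nonneg_left h3 (mul_nonneg htwo0.le hM0.le),
      mul_le_mul_of_nonneg_right htwo hM0.le]
  -- the sequence D
  set D : ℕ → ℝ := fun m => Nat.rec (motive := fun _ => ℝ) 0 (fun m d => q * d + R * ζ ^ m) m
    with hDdef
  have hDsucc : ∀ m, D (m+1) = q * D m + R * ζ^m := fun m => rfl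
  have hD0 : ∀ m, 0 ≤ D m := by
    intro m
    induction m with
    | zero => exact le_refl 0
    | succ m ih =>
        rw [hDsucc]
        exact add_nonneg (mul_nonneg hq0 ih) (mul_nonneg hR0.le (pow_nonneg hζ0 m))
  have hDle : ∀ m : ℕ, D (m+1) ≤ R * ((m:ℝ)+1) * q^m := by
    intro m
    induction m with
    | zero =>
        rw [hDsucc 0]
        have hD00 : D 0 = 0 := rfl
        rw [hD00]
        simp
    | succ m ih =>
        rw [hDsucc (m+1)]
        have h1 : ζ^(m+1) ≤ q^(m+1) := pow_le_pow_left₀ hζ0 hζq _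
        have h2 : q * D (m+1) ≤ q * (R * ((m:ℝ)+1) * q^m) := mul_le_mul_of_nonneg_left ih hq0
        have h3 : R * ζ^(m+1) ≤ R * q^(m+1) := mul_le_mul_of_nonneg_left h1 hR0.le
        calc q * D (m+1) + R * ζ^(m+1) ≤ q * (R * ((m:ℝ)+1) * q^m) + R * q^(m+1) := by linarith
          _ = R * ((m:ℝ)+1+1) * q^(m+1) := by ring
          _ = R * ((↑(m+1):ℝ)+1) * q^(m+1) := by push_cast; ring
  have hDsummable : Summable D := by
    rw [← summable_nat_add_iff 1]
    apply Summable.of_nonneg_of_le (fun m => hD0 (m+1)) (fun m => hDle m)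
    have hqn : ‖q‖ < 1 := by rwa [Real.norm_eq_abs, abs_of_nonneg hq0]
    have h := summable_pow_mul_geometric_of_norm_lt_one 1 hqn
    have h2 : Summable fun m : ℕ => q ^ m := summable_geometric_of_lt_one hq0 hq1
    have h3 := (h.mul_left R).add ((h2.mul_left R))
    apply h3.congr
    intro m
    simp only [pow_one]
    ring
  refine ⟨D, hD0, hDsummable, ?_⟩
  intro m
  induction m with
  | zero =>
      intro n hn
      have : convPow K 0 n = 0 := if_neg (by omega)
      rw [this]
      simp [hDdef]
  | succ m ih =>
      intro n hn1
      have hζm : (0:ℝ) ≤ ζ^m := pow_nonneg hζ0 m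
      have hpn : 0 < p n := hppos hn1
      rcases Nat.lt_or_ge n n₀ with hcase | hcase
      · -- small n
        have hsmall : convPow K (m+1) n ≤ M * ζ^m := by
          rw [convPow_succ]
          calc ∑ k ∈ Finset.range (n+1), convPow K m k * K (n-k)
              ≤ ∑ k ∈ Finset.range (n+1), convPow K m k * M :=
                Finset.sum_le_sum fun k _ =>
                  mul_le_mul_of_nonneg_left (hKM _) (convPow_nonneg K hK m k)
            _ = (∑ k ∈ Finset.range (n+1), convPow K m k) * M := by rw [Finset.sum_mul]
            _ ≤ ζ^m * M := mul_le_mul_of_nonneg_right (hpartial m n) hM0.le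
            _ = M * ζ^m := mul_comm _ _
        have h4 : M * ζ^m ≤ R * p n * ζ^m :=
          mul_le_mul_of_nonneg_right (hRM n hn1 hcase.le) hζm
        have h5 : 0 ≤ q * D m * p n := mul_nonneg (mul_nonneg hq0 (hD0 m)) hpn.le
        calc convPow K (m+1) n ≤ M * ζ^m := hsmall
          _ ≤ R * p n * ζ^m := h4
          _ ≤ (q * D m + R * ζ^m) * p n := by nlinarith [h5]
          _ = D (m+1) * p n := by rw [hDsucc m]
      · -- large n
        have hnN : 2*N+2 ≤ n := le_trans (le_max_right _ _) hcase
        have hnn₁ : n₁ ≤ n := le_trans (le_max_left _ _) hcase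
        set s := Finset.range (n+1) with hsdef
        set A := s.filter (fun k => 2*k < n) with hAdef
        set B := s.filter (fun k => ¬ 2*k < n ∧ n - k ≤ N) with hBdef
        set C := s.filter (fun k => ¬ 2*k < n ∧ ¬ (n - k ≤ N)) with hCdef
        have hsplit : convPow K (m+1) n =
            (∑ k ∈ A, convPow K m k * K (n-k)) +
            ((∑ k ∈ B, convPow K m k * K (n-k)) + (∑ k ∈ C, convPow K m k * K (n-k))) := by
          rw [convPow_succ]
          rw [← Finset.sum_filter_add_sum_filter_not s (fun k => 2*k < n)]
          congr 1
          rw [← Finset.sum_filter_add_sum_filter_not (s.filter (fun k => ¬ 2*k < n))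
            (fun k => n - k ≤ N)]
          congr 1 <;> rw [Finset.filter_filter]
        have hA : ∑ k ∈ A, convPow K m k * K (n-k) ≤ ζ^m * (M * (2^(1+γ) * p n)) := by
          have hterm : ∀ k ∈ A, convPow K m k * K (n-k) ≤
              convPow K m k * (M * (2^(1+γ) * p n)) := by
            intro k hk
            rw [hAdef, Finset.mem_filter, hsdef, Finset.mem_range] at hk
            apply mul_le_mul_of_nonneg_left _ (convPow_nonneg K hK m k)
            calc K (n-k) ≤ M * p (n-k) := hMK _
              _ ≤ M * (2^(1+γ) * p n) :=
                mul_le_mul_of_nonneg_left (p_half hγ hn1 (by omega)) hM0.le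
          calc ∑ k ∈ A, convPow K m k * K (n-k)
              ≤ ∑ k ∈ A, convPow K m k * (M * (2^(1+γ) * p n)) := Finset.sum_le_sum hterm
            _ = (∑ k ∈ A, convPow K m k) * (M * (2^(1+γ) * p n)) := by rw [Finset.sum_mul]
            _ ≤ ζ^m * (M * (2^(1+γ) * p n)) := by
                apply mul_le_mul_of_nonneg_right _ (by positivity)
                calc ∑ k ∈ A, convPow K m k ≤ ∑ k ∈ s, convPow K m k :=
                    Finset.sum_le_sum_of_subset_of_nonneg (Finset.filter_subset _ _)
                      (fun k _ _ => convPow_nonneg K hK m k)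
                  _ ≤ ζ^m := hpartial m n
        have hBbd : ∀ k ∈ B, convPow K m k ≤ D m * ((1+ε) * p n) := by
          intro k hk
          rw [hBdef, Finset.mem_filter, hsdef, Finset.mem_range] at hk
          obtain ⟨hk1, hk2, hk3⟩ := hk
          have hk4 : 1 ≤ n - N := by omega
          have hk5 : n - N ≤ k := by omega
          calc convPow K m k ≤ D m * p k := ih k (by omega)
            _ ≤ D m * p (n - N) := mul_le_mul_of_nonneg_left (p_anti hγ hk4 hk5) (hD0 m)
            _ ≤ D m * ((1+ε) * p n) := mul_le_mul_of_nonneg_left (hn₁ n hnn₁) (hD0 m)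
        have hBK : ∑ k ∈ B, K (n-k) ≤ ζ := by
          calc ∑ k ∈ B, K (n-k) ≤ ∑ k ∈ s, K (n-k) :=
              Finset.sum_le_sum_of_subset_of_nonneg (Finset.filter_subset _ _)
                (fun _ _ _ => hK _)
            _ = ∑ j ∈ s, K j := by
                rw [hsdef]
                simpa using Finset.sum_range_reflect K (n+1)
            _ ≤ ζ := by rw [hζdef]; exact Summable.sum_le_tsum _ (fun _ _ => hK _) hsum
        have hB : ∑ k ∈ B, convPow K m k * K (n-k) ≤ (D m * ((1+ε) * p n)) * ζ := by
          calc ∑ k ∈ B, convPow K m k * K (n-k)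
              ≤ ∑ k ∈ B, (D m * ((1+ε) * p n)) * K (n-k) :=
                Finset.sum_le_sum fun k hk => mul_le_mul_of_nonneg_right (hBbd k hk) (hK _)
            _ = (D m * ((1+ε) * p n)) * ∑ k ∈ B, K (n-k) := by rw [Finset.mul_sum]
            _ ≤ (D m * ((1+ε) * p n)) * ζ := by
                apply mul_le_mul_of_nonneg_left hBK
                have := hD0 m
                positivity
        have hCbd : ∀ k ∈ C, convPow K m k ≤ D m * (2^(1+γ) * p n) := by
          intro k hk
          rw [hCdef, Finset.mem_filter, hsdef, Finset.mem_range] at hk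
          obtain ⟨hk1, hk2, hk3⟩ := hk
          calc convPow K m k ≤ D m * p k := ih k (by omega)
            _ ≤ D m * (2^(1+γ) * p n) :=
              mul_le_mul_of_nonneg_left (p_half hγ hn1 (by omega)) (hD0 m)
        have hCK : ∑ k ∈ C, K (n-k) ≤ ε := by
          have hinj : ∀ a ∈ C, ∀ b ∈ C, n - a = n - b → a = b := by
            intro a ha b hb hab
            rw [hCdef, Finset.mem_filter, hsdef, Finset.mem_range] at ha hb
            omega
          have himg : ∑ j ∈ C.image (fun k => n - k), K j = ∑ k ∈ C, K (n-k) :=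
            Finset.sum_image hinj
          rw [← himg]
          refine le_trans ?_ (htail n)
          apply Finset.sum_le_sum_of_subset_of_nonneg ?_ (fun _ _ _ => hK _)
          intro j hj
          rw [Finset.mem_image] at hj
          obtain ⟨k, hk, rfl⟩ := hj
          rw [hCdef, Finset.mem_filter, hsdef, Finset.mem_range] at hk
          rw [Finset.mem_Icc]
          omega
        have hC : ∑ k ∈ C, convPow K m k * K (n-k) ≤ (D m * (2^(1+γ) * p n)) * ε := by
          calc ∑ k ∈ C, convPow K m k * K (n-k)
              ≤ ∑ k ∈ C, (D m * (2^(1+γ) * p n)) * K (n-k) :=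
                Finset.sum_le_sum fun k hk => mul_le_mul_of_nonneg_right (hCbd k hk) (hK _)
            _ = (D m * (2^(1+γ) * p n)) * ∑ k ∈ C, K (n-k) := by rw [Finset.mul_sum]
            _ ≤ (D m * (2^(1+γ) * p n)) * ε := by
                apply mul_le_mul_of_nonneg_left hCK
                have := hD0 m
                positivity
        rw [hsplit, hDsucc m]
        have e1 : (D m * ((1+ε) * p n)) * ζ + (D m * (2^(1+γ) * p n)) * ε =
            ((1+ε)*ζ + 2^(1+γ)*ε) * D m * p n := by ring
        have e2 : ζ^m * (M * (2^(1+γ) * p n)) ≤ R * ζ^m * p n := by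
          have h7 := mul_le_mul_of_nonneg_right hR2 (mul_nonneg hζm hpn.le)
          calc ζ^m * (M * (2^(1+γ) * p n)) = 2^(1+γ) * M * (ζ^m * p n) := by ring
            _ ≤ R * (ζ^m * p n) := h7
            _ = R * ζ^m * p n := by ring
        have hfinal : ζ^m * (M * (2^(1+γ) * p n)) + ((D m * ((1+ε) * p n)) * ζ +
            (D m * (2^(1+γ) * p n)) * ε) ≤ (q * D m + R * ζ^m) * p n := by
          rw [hqdef]
          linarith [e1, e2]
        linarith [hA, hB, hC]
lemma convPow_one (K : ℕ → ℝ) (n : ℕ) : convPow K 1 n = K n := by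
  rw [convPow_succ]
  rw [Finset.sum_eq_single 0]
  · simp [convPow]
  · intro b _ hb
    simp [convPow, hb]
  · intro h
    exact absurd (Finset.mem_range.mpr (Nat.succ_pos n)) h

set_option maxHeartbeats 1000000 in
lemma conv_limit (K : ℕ → ℝ) (hK : ∀ n, 0 ≤ K n) (hK0 : K 0 = 0) (hsum : Summable K)
    {γ c : ℝ} (hγ : 0 < γ) (hc : 0 < c)
    (hKp : Tendsto (fun n : ℕ => K n / (n:ℝ)^(-(1+γ))) atTop (nhds c))
    {M : ℝ} (hM0 : 0 < M) (hMK : ∀ n, K n ≤ M * (n:ℝ)^(-(1+γ)))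
    (D : ℕ → ℝ) (hD0 : ∀ m, 0 ≤ D m)
    (hDb : ∀ m n, 1 ≤ n → convPow K m n ≤ D m * (n:ℝ)^(-(1+γ))) :
    ∀ m : ℕ, Tendsto (fun n : ℕ => convPow K (m+1) n / (n:ℝ)^(-(1+γ))) atTop
      (nhds (c * ((m:ℝ)+1) * (∑' j, K j)^m)) := by
  set p : ℕ → ℝ := fun n => (n:ℝ)^(-(1+γ)) with hpdef
  set ζ := ∑' j, K j with hζdef
  have hppos : ∀ {n : ℕ}, 1 ≤ n → 0 < p n := by
    intro n hn
    exact Real.rpow_pos_of_pos (by exact_mod_cast hn) _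
  have htwo0 : (0:ℝ) < 2 ^ (1+γ) := Real.rpow_pos_of_pos (by norm_num) _
  intro m
  induction m with
  | zero =>
      simp only [Nat.cast_zero, zero_add, pow_zero, mul_one, Nat.zero_add]
      have := hKp
      apply this.congr
      intro n
      rw [convPow_one]
  | succ m ih =>
      set F := convPow K (m+1) with hFdef
      set L := c * ((m:ℝ)+1) * ζ^m with hLdef
      have hFnn : ∀ k, 0 ≤ F k := fun k => convPow_nonneg K hK (m+1) k
      have hFsum : Summable F := summable_convPow K hK hsum (m+1)
      -- the two pieces
      set f1 : ℕ → ℕ → ℝ := fun n k => if 2*k ≤ n then F k * (K (n-k) / p n) else 0 with hf1def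
      set f2 : ℕ → ℕ → ℝ := fun n j => if 2*j < n then (F (n-j) / p n) * K j else 0 with hf2def
      -- decomposition
      have hdecomp : ∀ n : ℕ, convPow K (m+2) n / p n = (∑' k, f1 n k) + (∑' j, f2 n j) := by
        intro n
        have h1 : ∑' k, f1 n k =
            ∑ k ∈ (Finset.range (n+1)).filter (fun k => 2*k ≤ n), F k * (K (n-k) / p n) := by
          rw [tsum_eq_sum (s := (Finset.range (n+1)).filter (fun k => 2*k ≤ n)) ?_]
          · exact Finset.sum_congr rfl fun k hk => by
              rw [Finset.mem_filter] at hk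
              exact if_pos hk.2
          · intro k hk
            rw [Finset.mem_filter, Finset.mem_range] at hk
            apply if_neg
            intro hcon
            exact hk ⟨by omega, hcon⟩
        have h2 : ∑' j, f2 n j =
            ∑ j ∈ (Finset.range (n+1)).filter (fun j => 2*j < n), (F (n-j) / p n) * K j := by
          rw [tsum_eq_sum (s := (Finset.range (n+1)).filter (fun j => 2*j < n)) ?_]
          · exact Finset.sum_congr rfl fun j hj => by
              rw [Finset.mem_filter] at hj
              exact if_pos hj.2
          · intro j hj
            rw [Finset.mem_filter, Finset.mem_range] at hj
            apply if_neg
            intro hcon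
            exact hj ⟨by omega, hcon⟩
        have h4 : ∑ k ∈ (Finset.range (n+1)).filter (fun k => ¬ 2*k ≤ n), F k * K (n-k) =
            ∑ j ∈ (Finset.range (n+1)).filter (fun j => 2*j < n), F (n-j) * K j := by
          apply Finset.sum_nbij' (i := fun k => n - k) (j := fun j => n - j)
          · intro a ha
            rw [Finset.mem_filter, Finset.mem_range] at ha ⊢
            omega
          · intro a ha
            rw [Finset.mem_filter, Finset.mem_range] at ha ⊢
            omega
          · intro a ha
            rw [Finset.mem_filter, Finset.mem_range] at ha
            omega
          · intro a ha
            rw [Finset.mem_filter, Finset.mem_range] at ha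
            omega
          · intro a ha
            rw [Finset.mem_filter, Finset.mem_range] at ha
            have : n - (n - a) = a := by omega
            rw [this]
        have h3 : convPow K (m+2) n =
            (∑ k ∈ (Finset.range (n+1)).filter (fun k => 2*k ≤ n), F k * K (n-k)) +
            (∑ j ∈ (Finset.range (n+1)).filter (fun j => 2*j < n), F (n-j) * K j) := by
          rw [show convPow K (m+2) n = ∑ k ∈ Finset.range (n+1), F k * K (n-k) from rfl]
          rw [← Finset.sum_filter_add_sum_filter_not (Finset.range (n+1)) (fun k => 2*k ≤ n), h4]
        rw [h3, add_div, h1, h2, Finset.sum_div, Finset.sum_div]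
        congr 1
        · exact Finset.sum_congr rfl fun k _ => (mul_div_assoc _ _ _)
        · exact Finset.sum_congr rfl fun j _ => (div_mul_eq_mul_div _ _ _).symm
      -- limit of f1
      have hT1 : Tendsto (fun n => ∑' k, f1 n k) atTop (nhds (∑' k, F k * c)) := by
        apply tendsto_tsum_of_dominated_convergence
          (bound := fun k => F k * (M * 2^(1+γ)))
        · exact hFsum.mul_right _
        · intro k
          have hKk : Tendsto (fun n : ℕ => K (n-k) / p n) atTop (nhds c) := by
            have ha : Tendsto (fun n : ℕ => K (n-k) / p (n-k)) atTop (nhds c) :=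
              hKp.comp (tendsto_sub_atTop_nat k)
            have hb := p_ratio hγ k
            have hab := ha.mul hb
            rw [mul_one] at hab
            apply hab.congr'
            filter_upwards [eventually_ge_atTop (k+1)] with n hn
            have hx : p (n-k) ≠ 0 := (hppos (by omega)).ne'
            rw [div_mul_div_comm, mul_comm (p (n-k)) (p n), mul_div_mul_right _ _ hx]
          have hlim := tendsto_const_nhds.mul hKk (f := fun _ : ℕ => F k)
          apply hlim.congr'
          filter_upwards [eventually_ge_atTop (2*k)] with n hn
          rw [hf1def]
          simp only
          rw [if_pos hn]
        · filter_upwards [eventually_ge_atTop 1] with n hn k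
          rw [hf1def]
          simp only
          by_cases hcase : 2*k ≤ n
          · rw [if_pos hcase]
            have hpn : 0 < p n := hppos hn
            have hnk1 : 1 ≤ n - k := by omega
            have hval : 0 ≤ F k * (K (n-k) / p n) :=
              mul_nonneg (hFnn k) (div_nonneg (hK _) hpn.le)
            rw [Real.norm_of_nonneg hval]
            apply mul_le_mul_of_nonneg_left _ (hFnn k)
            rw [div_le_iff₀ hpn]
            calc K (n-k) ≤ M * p (n-k) := hMK _
              _ ≤ M * (2^(1+γ) * p n) :=
                mul_le_mul_of_nonneg_left (p_half hγ hn (by omega)) hM0.le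
              _ = M * 2^(1+γ) * p n := by ring
          · rw [if_neg hcase]
            simp only [norm_zero]
            exact mul_nonneg (hFnn k) (mul_nonneg hM0.le htwo0.le)
      -- limit of f2
      have hT2 : Tendsto (fun n => ∑' j, f2 n j) atTop (nhds (∑' j, L * K j)) := by
        apply tendsto_tsum_of_dominated_convergence
          (bound := fun j => (D (m+1) * 2^(1+γ)) * K j)
        · exact hsum.mul_left _
        · intro j
          have hFj : Tendsto (fun n : ℕ => F (n-j) / p n) atTop (nhds L) := by
            have ha : Tendsto (fun n : ℕ => F (n-j) / p (n-j)) atTop (nhds L) :=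
              ih.comp (tendsto_sub_atTop_nat j)
            have hb := p_ratio hγ j
            have hab := ha.mul hb
            rw [mul_one] at hab
            apply hab.congr'
            filter_upwards [eventually_ge_atTop (j+1)] with n hn
            have hx : p (n-j) ≠ 0 := (hppos (by omega)).ne'
            rw [div_mul_div_comm, mul_comm (p (n-j)) (p n), mul_div_mul_right _ _ hx]
          have hlim := hFj.mul_const (K j)
          apply hlim.congr'
          filter_upwards [eventually_ge_atTop (2*j+1)] with n hn
          rw [hf2def]
          simp only
          rw [if_pos (by omega)]
        · filter_upwards [eventually_ge_atTop 1] with n hn j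
          rw [hf2def]
          simp only
          by_cases hcase : 2*j < n
          · rw [if_pos hcase]
            have hpn : 0 < p n := hppos hn
            have hval : 0 ≤ (F (n-j) / p n) * K j :=
              mul_nonneg (div_nonneg (hFnn _) hpn.le) (hK _)
            rw [Real.norm_of_nonneg hval]
            apply mul_le_mul_of_nonneg_right _ (hK j)
            rw [div_le_iff₀ hpn]
            calc F (n-j) ≤ D (m+1) * p (n-j) := hDb (m+1) (n-j) (by omega)
              _ ≤ D (m+1) * (2^(1+γ) * p n) :=
                mul_le_mul_of_nonneg_left (p_half hγ hn (by omega)) (hD0 _)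
              _ = D (m+1) * 2^(1+γ) * p n := by ring
          · rw [if_neg hcase]
            simp only [norm_zero]
            exact mul_nonneg (mul_nonneg (hD0 _) htwo0.le) (hK j)
      have htotal := hT1.add hT2
      have hval : (∑' k, F k * c) + (∑' j, L * K j) = c * (↑(m+1)+1) * ζ^(m+1) := by
        rw [tsum_mul_right, tsum_mul_left, hFdef, tsum_convPow K hK hsum (m+1), hLdef, ← hζdef]
        push_cast
        ring
      rw [hval] at htotal
      apply htotal.congr
      intro n
      exact (hdecomp n).symm
set_option maxHeartbeats 1000000 in
/-- heavy-tailed defective renewal theorem: if `K` has total mass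
`ζ ∈ (0,1)` and `K(n) ~ c n^{-1-γ}`, then the renewal mass function
`u(n) = Σ_m K^{*m}(n)` satisfies `u(n) ~ K(n)/(1-ζ)²`. -/
theorem stmt16 (K : ℕ → ℝ) (hK : ∀ n, 0 ≤ K n) (hK0 : K 0 = 0)
    (hpos : 0 < ∑' n, K n) (hlt : ∑' n, K n < 1)
    (c γ : ℝ) (hc : 0 < c) (hγ : 0 < γ)
    (htail : Tendsto (fun n : ℕ => K n / (c * (n : ℝ) ^ (-(1 + γ)))) atTop (nhds 1)) :
    Tendsto (fun n : ℕ => (∑' m : ℕ, convPow K m n) / (K n / (1 - ∑' j, K j) ^ 2))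
      atTop (nhds 1) := by
  have hsum : Summable K := by
    by_contra h
    rw [tsum_eq_zero_of_not_summable h] at hpos
    exact lt_irrefl 0 hpos
  set p : ℕ → ℝ := fun n => (n:ℝ)^(-(1+γ)) with hpdef
  set ζ := ∑' j, K j with hζdef
  have hζ0 : 0 < ζ := hpos
  have hζ1 : ζ < 1 := hlt
  have hζne : (1:ℝ) - ζ ≠ 0 := by linarith
  have hppos : ∀ {n : ℕ}, 1 ≤ n → 0 < p n := by
    intro n hn
    exact Real.rpow_pos_of_pos (by exact_mod_cast hn) _
  have hKp : Tendsto (fun n : ℕ => K n / p n) atTop (nhds c) := by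
    have h := htail.const_mul c
    rw [mul_one] at h
    apply h.congr
    intro n
    show c * (K n / (c * (n:ℝ)^(-(1+γ)))) = K n / p n
    rw [mul_div_assoc', mul_div_mul_left _ _ (ne_of_gt hc)]
  have hKpos : ∀ᶠ n : ℕ in atTop, 0 < K n := by
    have h := hKp.eventually (eventually_gt_nhds (show c/2 < c by linarith))
    filter_upwards [h, eventually_ge_atTop 1] with n h1 h2
    have hpn := hppos h2
    have h3 := mul_pos (lt_trans (half_pos hc) h1) hpn
    rwa [div_mul_cancel₀ _ hpn.ne'] at h3
  obtain ⟨M, hM0, hMK⟩ : ∃ M, 0 < M ∧ ∀ n, K n ≤ M * p n := by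
    obtain ⟨N₁, hN₁⟩ := eventually_atTop.mp (hKp.eventually (eventually_le_nhds (lt_add_one c)))
    have hSnn : 0 ≤ ∑ j ∈ Finset.range N₁, K j / p j :=
      Finset.sum_nonneg fun j _ =>
        div_nonneg (hK j) (Real.rpow_nonneg (Nat.cast_nonneg j) _)
    refine ⟨c + 1 + ∑ j ∈ Finset.range N₁, K j / p j, by linarith, ?_⟩
    intro n
    rcases Nat.eq_zero_or_pos n with rfl | hn
    · rw [hK0]
      exact mul_nonneg (by linarith) (Real.rpow_nonneg (by norm_num) _)
    · have hpn := hppos hn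
      rcases le_or_gt N₁ n with h | h
      · calc K n = (K n / p n) * p n := (div_mul_cancel₀ _ hpn.ne').symm
          _ ≤ (c+1) * p n := mul_le_mul_of_nonneg_right (hN₁ n h) hpn.le
          _ ≤ (c + 1 + ∑ j ∈ Finset.range N₁, K j / p j) * p n :=
            mul_le_mul_of_nonneg_right (by linarith) hpn.le
      · have hle : K n / p n ≤ ∑ j ∈ Finset.range N₁, K j / p j :=
          Finset.single_le_sum (f := fun j => K j / p j)
            (fun j _ => div_nonneg (hK j) (Real.rpow_nonneg (Nat.cast_nonneg j) _))
            (Finset.mem_range.mpr h)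
        calc K n = (K n / p n) * p n := (div_mul_cancel₀ _ hpn.ne').symm
          _ ≤ (∑ j ∈ Finset.range N₁, K j / p j) * p n :=
            mul_le_mul_of_nonneg_right hle hpn.le
          _ ≤ (c + 1 + ∑ j ∈ Finset.range N₁, K j / p j) * p n :=
            mul_le_mul_of_nonneg_right (by linarith) hpn.le
  obtain ⟨D, hD0, hDsum, hDb⟩ := kesten K hK hK0 hsum hlt hγ hM0 hMK
  have hlim := conv_limit K hK hK0 hsum hγ hc hKp hM0 hMK D hD0 hDb
  -- dominated convergence over m
  set g : ℕ → ℝ := fun m => Nat.casesOn m 0 (fun m' => c * ((m':ℝ)+1) * ζ^m') with hgdef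
  have hζn : ‖ζ‖ < 1 := by rwa [Real.norm_eq_abs, abs_of_nonneg hζ0.le]
  have h₁ : Summable (fun m : ℕ => (m:ℝ) * ζ^m) := by
    simpa using summable_pow_mul_geometric_of_norm_lt_one 1 hζn
  have h₂ : Summable (fun m : ℕ => ζ^m) := summable_geometric_of_lt_one hζ0.le hζ1
  have hgsum_aux : Summable (fun m : ℕ => c * ((m:ℝ)+1) * ζ^m) := by
    apply ((h₁.mul_left c).add (h₂.mul_left c)).congr
    intro m
    ring
  have hgsum : Summable g := by
    rw [← summable_nat_add_iff 1]
    exact hgsum_aux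
  have hgval : ∑' m, g m = c / (1-ζ)^2 := by
    rw [Summable.tsum_eq_zero_add hgsum]
    have hg0 : g 0 = 0 := rfl
    rw [hg0, zero_add]
    have hsplit : (fun m : ℕ => g (m+1)) = fun m : ℕ => c * ((m:ℝ) * ζ^m) + c * ζ^m := by
      funext m
      show c * ((m:ℝ)+1) * ζ^m = _
      ring
    rw [hsplit, Summable.tsum_add (h₁.mul_left c) (h₂.mul_left c), tsum_mul_left, tsum_mul_left,
      tsum_coe_mul_geometric_of_norm_lt_one hζn, tsum_geometric_of_lt_one hζ0.le hζ1]
    field_simp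
    ring
  have hab : ∀ m : ℕ, Tendsto (fun n : ℕ => convPow K m n / p n) atTop (nhds (g m)) := by
    intro m
    cases m with
    | zero =>
        have hg0 : g 0 = 0 := rfl
        rw [hg0]
        apply tendsto_const_nhds.congr'
        filter_upwards [eventually_ge_atTop 1] with n hn
        have : convPow K 0 n = 0 := if_neg (by omega)
        rw [this, zero_div]
    | succ m => exact hlim m
  have hbound : ∀ᶠ n : ℕ in atTop, ∀ m : ℕ, ‖convPow K m n / p n‖ ≤ D m := by
    filter_upwards [eventually_ge_atTop 1] with n hn m
    have hpn := hppos hn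
    have hval : 0 ≤ convPow K m n / p n :=
      div_nonneg (convPow_nonneg K hK m n) hpn.le
    rw [Real.norm_of_nonneg hval, div_le_iff₀ hpn]
    exact hDb m n hn
  have hDCT := tendsto_tsum_of_dominated_convergence hDsum hab hbound
  rw [hgval] at hDCT
  have hU : Tendsto (fun n : ℕ => (∑' m, convPow K m n) / p n) atTop
      (nhds (c / (1-ζ)^2)) := by
    apply hDCT.congr
    intro n
    exact tsum_div_const
  have hinv : Tendsto (fun n : ℕ => p n / K n) atTop (nhds c⁻¹) := by
    have h := hKp.inv₀ hc.ne'
    apply h.congr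
    intro n
    exact inv_div _ _
  have hfinal := (hU.mul hinv).mul_const ((1-ζ)^2)
  have hval : c/(1-ζ)^2 * c⁻¹ * (1-ζ)^2 = 1 := by
    field_simp
  rw [hval] at hfinal
  apply hfinal.congr'
  filter_upwards [hKpos, eventually_ge_atTop 1] with n hKn hn
  have hpn := hppos hn
  field_simp
end
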